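/- arXiv:1402.2207 — 4 statements merged into one kernel-verified Lean document; each statement's English description precedes it below -/
import Mathlib

section
/- Suppose the link functions L_X and L_Y satisfy Property B and the two input sequences (x_t) and (y_t) satisfy Assumption (A1), all variables across both sequences being independent. For a circuit π of length h in {1,…,n} write x_π := ∏_{i=1}^h x_{L_X(π(i−1),π(i))} and y_π := ∏_{i=1}^h y_{L_Y(π(i−1),π(i))}. Then n^{-(1+h/2)} ∑_π E[x_π] E[y_π] → 0 as n → ∞, where the sum runs over all circuits π of length h in {1,…,n} that have at least one L_X-edge of order ≥ 3 or at least one L_Y-edge of order ≥ 3. In particular, for every odd h, E[β_h(n^{-1/2} Z_n)] → 0 as n → ∞, where Z_n = X_n ⊙ Y_n is the Schur–Hadamard product of the patterned matrices X_n and Y_n built from L_X, (x_t) and L_Y, (y_t). -/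
open MeasureTheory ProbabilityTheory Filter Finset
open scoped ENNReal

noncomputable def betaMom (h : ℕ) {n : ℕ} (A : Matrix (Fin n) (Fin n) ℝ) : ℝ :=
  (n : ℝ)⁻¹ * (A ^ h).trace

/-- The empirical spectral distribution of a real symmetric matrix
(junk value `0` if the matrix is not symmetric). -/
noncomputable def esdMeasure {n : ℕ} (A : Matrix (Fin n) (Fin n) ℝ) : Measure ℝ :=
  if hA : A.IsHermitian then
    ((n : ℝ≥0∞))⁻¹ • ∑ i : Fin n, Measure.dirac (hA.eigenvalues i)
  else 0

/-- `n^{-1/2} • A`. -/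
noncomputable def scaleMat {n : ℕ} (A : Matrix (Fin n) (Fin n) ℝ) : Matrix (Fin n) (Fin n) ℝ :=
  ((n : ℝ) ^ (-(1 : ℝ) / 2)) • A

/-- Property B : the number of occurrences of any value in any row is uniformly bounded. -/
def propertyB {E : Type*} [DecidableEq E] (L : (n : ℕ) → Fin n → Fin n → E) : Prop :=
  ∃ Δ : ℕ, ∀ (n : ℕ) (k : Fin n) (t : E),
    (Finset.univ.filter fun l : Fin n => L n k l = t).card ≤ Δ

def symmLink {E : Type*} (L : (n : ℕ) → Fin n → Fin n → E) : Prop :=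
  ∀ (n : ℕ) (i j : Fin n), L n i j = L n j i

/-- `k_n`, the number of distinct `L`-values. -/
def kCount {E : Type*} [DecidableEq E] (L : (n : ℕ) → Fin n → Fin n → E) (n : ℕ) : ℕ :=
  (Finset.univ.image fun p : Fin n × Fin n => L n p.1 p.2).card

/-- `α_n`, the maximal number of occurrences of a single `L`-value. -/
def alphaCount {E : Type*} [DecidableEq E] (L : (n : ℕ) → Fin n → Fin n → E) (n : ℕ) : ℕ :=
  (Finset.univ.image fun p : Fin n × Fin n => L n p.1 p.2).sup fun t =>
    (Finset.univ.filter fun p : Fin n × Fin n => L n p.1 p.2 = t).card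

/-- Conditions (1.4) : `k_n → ∞` and `k_n α_n = O(n²)`. -/
def cond14 {E : Type*} [DecidableEq E] (L : (n : ℕ) → Fin n → Fin n → E) : Prop :=
  Tendsto (kCount L) atTop atTop ∧ ∃ C : ℕ, ∀ n, kCount L n * alphaCount L n ≤ C * n ^ 2

/-- Assumption (A1) : measurable, uniformly bounded, mean 0, variance 1
(independence is stated separately). -/
def assumptionA1 {E Ω : Type*} [MeasurableSpace Ω] (P : Measure Ω) (x : E → Ω → ℝ) : Prop :=
  (∀ t, Measurable (x t)) ∧ (∃ B : ℝ, ∀ t ω, |x t ω| ≤ B) ∧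
    (∀ t, ∫ ω, x t ω ∂P = 0) ∧ ∀ t, ∫ ω, (x t ω) ^ 2 ∂P = 1

/-- The patterned matrix with link function `L` and input sequence `x`. -/
def pattMatrix {E Ω : Type*} (L : (n : ℕ) → Fin n → Fin n → E) (x : E → Ω → ℝ)
    (n : ℕ) (ω : Ω) : Matrix (Fin n) (Fin n) ℝ :=
  Matrix.of fun i j => x (L n i j) ω

/-- Schur–Hadamard (entrywise) product. -/
def hadProd {n : ℕ} (A B : Matrix (Fin n) (Fin n) ℝ) : Matrix (Fin n) (Fin n) ℝ :=
  Matrix.of fun i j => A i j * B i j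

/-- A circuit of length `h` in `{1,…,n}` : a map `π : {0,…,h} → {1,…,n}` with `π 0 = π h`. -/
def Circuit (h n : ℕ) := {π : Fin (h + 1) → Fin n // π 0 = π (Fin.last h)}


instance (h n : ℕ) : Fintype (Circuit h n) :=
  inferInstanceAs (Fintype {π : Fin (h + 1) → Fin n // π 0 = π (Fin.last h)})

instance (h n : ℕ) : DecidableEq (Circuit h n) :=
  inferInstanceAs (DecidableEq {π : Fin (h + 1) → Fin n // π 0 = π (Fin.last h)})

/-- The `i`-th `L`-value `L(π(i-1), π(i))` of a circuit, `i = 1,…,h`. -/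
def lVal {E : Type*} (L : (n : ℕ) → Fin n → Fin n → E) {h n : ℕ}
    (π : Circuit h n) (i : Fin h) : E :=
  L n (π.1 i.castSucc) (π.1 i.succ)

/-- A pair-matched word of length `h`, encoded as the fixed-point free involution of
`{1,…,h}` matching the two elements of each block of the pair partition. -/
def pairMatchedWord {h : ℕ} (w : Fin h → Fin h) : Prop :=
  (∀ i, w (w i) = i) ∧ ∀ i, w i ≠ i

/-- `Π*_L(w)` for a pair-matched word `w` (encoded as an involution). -/
def PiStarPair {E : Type*} (L : (n : ℕ) → Fin n → Fin n → E) {h : ℕ}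
    (n : ℕ) (w : Fin h → Fin h) : Set (Circuit h n) :=
  {π | ∀ i, lVal L π i = lVal L π (w i)}

/-- The set `W_{2k}` of pair-matched words of length `2k`, encoded as fixed-point-free
involutions. -/
def W2 (k : ℕ) : Finset (Fin (2 * k) → Fin (2 * k)) :=
  Finset.univ.filter fun w => (∀ i, w (w i) = i) ∧ ∀ i, w i ≠ i

/-! ### Auxiliary lemmas for `statement3` -/

section Statement3Aux

open MeasureTheory ProbabilityTheory Filter Finset

/-- Entries of a matrix power as a sum over paths. -/
lemma pow_apply_paths' {n : ℕ} (A : Matrix (Fin n) (Fin n) ℝ) :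
    ∀ (h : ℕ) (i j : Fin n), (A ^ h) i j =
      ∑ p : Fin h → Fin n, if Fin.cons (α := fun _ => Fin n) i p (Fin.last h) = j then
        ∏ k : Fin h, A (Fin.cons (α := fun _ => Fin n) i p k.castSucc)
          (Fin.cons (α := fun _ => Fin n) i p k.succ) else 0 := by
  intro h
  induction h with
  | zero =>
    intro i j
    rw [pow_zero]
    rw [Fintype.sum_unique]
    simp [Matrix.one_apply]
  | succ h ih =>
    intro i j
    rw [pow_succ']
    rw [Matrix.mul_apply]
    rw [← (Fin.consEquiv (fun _ : Fin (h+1) => Fin n)).sum_comp]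
    rw [Fintype.sum_prod_type]
    refine Finset.sum_congr rfl fun l _ => ?_
    rw [ih l j, Finset.mul_sum]
    refine Finset.sum_congr rfl fun q _ => ?_
    have hcons : (Fin.consEquiv (fun _ : Fin (h+1) => Fin n)) (l, q) =
        Fin.cons (α := fun _ => Fin n) l q := rfl
    rw [hcons]
    have h1 : Fin.cons (α := fun _ => Fin n) i (Fin.cons (α := fun _ => Fin n) l q)
        (Fin.last (h+1)) = Fin.cons (α := fun _ => Fin n) l q (Fin.last h) := by
      rw [← Fin.succ_last, Fin.cons_succ]
    rw [h1]
    rw [mul_ite, mul_zero]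
    congr 1
    rw [Fin.prod_univ_succ]
    refine congrArg₂ (· * ·) (by simp) (Finset.prod_congr rfl fun k _ => ?_)
    simp [← Fin.succ_castSucc, Fin.cons_succ]

/-- The trace of a matrix power as a sum over circuits. -/
lemma trace_pow_circuits {n h : ℕ} (A : Matrix (Fin n) (Fin n) ℝ) :
    (A ^ h).trace = ∑ π : Circuit h n, ∏ k : Fin h, A (π.1 k.castSucc) (π.1 k.succ) := by
  classical
  rw [Matrix.trace]
  simp only [Matrix.diag]
  calc ∑ i, (A ^ h) i i
      = ∑ i : Fin n, ∑ p : Fin h → Fin n,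
          if Fin.cons (α := fun _ => Fin n) i p (Fin.last h) = i then
          ∏ k : Fin h, A (Fin.cons (α := fun _ => Fin n) i p k.castSucc)
            (Fin.cons (α := fun _ => Fin n) i p k.succ) else 0 := by
        exact Finset.sum_congr rfl fun i _ => pow_apply_paths' A h i i
    _ = ∑ q : Fin (h+1) → Fin n, if q (Fin.last h) = q 0 then
          ∏ k : Fin h, A (q k.castSucc) (q k.succ) else 0 := by
        rw [← (Fin.consEquiv (fun _ : Fin (h+1) => Fin n)).sum_comp
          (fun q => if q (Fin.last h) = q 0 then ∏ k : Fin h, A (q k.castSucc) (q k.succ) else 0)]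
        rw [Fintype.sum_prod_type]
        refine Finset.sum_congr rfl fun i _ => Finset.sum_congr rfl fun p _ => ?_
        have hcons : (Fin.consEquiv (fun _ : Fin (h+1) => Fin n)) (i, p) =
            Fin.cons (α := fun _ => Fin n) i p := rfl
        rw [hcons, Fin.cons_zero]
    _ = ∑ q ∈ Finset.univ.filter (fun q : Fin (h+1) → Fin n => q 0 = q (Fin.last h)),
          ∏ k : Fin h, A (q k.castSucc) (q k.succ) := by
        rw [Finset.sum_filter]
        refine Finset.sum_congr rfl fun q _ => ?_
        simp [eq_comm]
    _ = ∑ π : Circuit h n, ∏ k : Fin h, A (π.1 k.castSucc) (π.1 k.succ) := by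
        exact Finset.sum_subtype _ (fun q => by simp) _

variable {Ω : Type*} [MeasurableSpace Ω] {P : Measure Ω} [IsProbabilityMeasure P]

lemma integrable_of_abs_le {g : Ω → ℝ} (hm : Measurable g) {B : ℝ} (hB : ∀ ω, |g ω| ≤ B) :
    Integrable g P :=
  (integrable_const B).mono' hm.aestronglyMeasurable
    (ae_of_all _ fun ω => by simpa [Real.norm_eq_abs] using hB ω)

omit [MeasurableSpace Ω] in
lemma abs_prod_le_pow {ι : Type*} {f : ι → Ω → ℝ} {B : ℝ} (hB0 : 0 ≤ B)
    (hB : ∀ i ω, |f i ω| ≤ B) {κ : Type*} (s : Finset κ) (u : κ → ι) (ω : Ω) :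
    |∏ i ∈ s, f (u i) ω| ≤ B ^ s.card := by
  rw [Finset.abs_prod]
  calc ∏ i ∈ s, |f (u i) ω| ≤ ∏ _i ∈ s, B :=
        Finset.prod_le_prod (fun i _ => abs_nonneg _) (fun i _ => hB _ _)
    _ = B ^ s.card := Finset.prod_const B

lemma measurable_prod_comp {ι : Type*} {f : ι → Ω → ℝ} (hm : ∀ i, Measurable (f i))
    {κ : Type*} (s : Finset κ) (u : κ → ι) :
    Measurable fun ω => ∏ i ∈ s, f (u i) ω :=
  s.measurable_prod (fun i _ => hm (u i))

lemma integrable_prod_comp {ι : Type*} {f : ι → Ω → ℝ} (hm : ∀ i, Measurable (f i))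
    {B : ℝ} (hB0 : 0 ≤ B) (hB : ∀ i ω, |f i ω| ≤ B) {κ : Type*} (s : Finset κ) (u : κ → ι) :
    Integrable (fun ω => ∏ i ∈ s, f (u i) ω) P :=
  integrable_of_abs_le (measurable_prod_comp hm s u) (abs_prod_le_pow hB0 hB s u)

lemma abs_integral_prod_le {ι : Type*} {f : ι → Ω → ℝ} {B : ℝ} (hB0 : 0 ≤ B)
    (hB : ∀ i ω, |f i ω| ≤ B) {h : ℕ} (u : Fin h → ι) :
    |∫ ω, ∏ i : Fin h, f (u i) ω ∂P| ≤ B ^ h := by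
  have := norm_integral_le_of_norm_le_const (μ := P)
    (f := fun ω => ∏ i : Fin h, f (u i) ω) (C := B ^ h) (ae_of_all _ fun ω => by
      rw [Real.norm_eq_abs]
      simpa using abs_prod_le_pow hB0 hB Finset.univ u ω)
  simpa [Real.norm_eq_abs] using this

/-- Independence of products of an independent family over index sets with disjoint values. -/
lemma indepFun_prod_prod {ι : Type*} {f : ι → Ω → ℝ}
    (hind : iIndepFun f P) (hm : ∀ i, Measurable (f i))
    {κ κ' : Type*} (s : Finset κ) (t : Finset κ') (u : κ → ι) (v : κ' → ι)
    (huv : ∀ i ∈ s, ∀ j ∈ t, u i ≠ v j) :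
    IndepFun (fun ω => ∏ i ∈ s, f (u i) ω) (fun ω => ∏ j ∈ t, f (v j) ω) P := by
  classical
  set S : Finset ι := s.image u with hSdef
  set T : Finset ι := t.image v with hTdef
  have hST : Disjoint S T := by
    rw [Finset.disjoint_left]
    rintro a ha hb
    obtain ⟨i, hi, rfl⟩ := Finset.mem_image.mp ha
    obtain ⟨j, hj, hj2⟩ := Finset.mem_image.mp hb
    exact huv i hi j hj hj2.symm
  have h2 := hind.indepFun_finset S T hST hm
  have hmemS : ∀ i ∈ s, u i ∈ S := fun i hi => Finset.mem_image_of_mem u hi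
  have hmemT : ∀ j ∈ t, v j ∈ T := fun j hj => Finset.mem_image_of_mem v hj
  have hφ : Measurable fun w : (i : S) → ℝ => ∏ i ∈ s.attach, w ⟨u i.1, hmemS i.1 i.2⟩ :=
    Finset.measurable_prod s.attach (fun i _ => measurable_pi_apply _)
  have hψ : Measurable fun w : (j : T) → ℝ => ∏ j ∈ t.attach, w ⟨v j.1, hmemT j.1 j.2⟩ :=
    Finset.measurable_prod t.attach (fun j _ => measurable_pi_apply _)
  have key := h2.comp hφ hψ
  have e1 : ((fun w : (i : S) → ℝ => ∏ i ∈ s.attach, w ⟨u i.1, hmemS i.1 i.2⟩) ∘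
      (fun ω (i : S) => f i ω)) = fun ω => ∏ i ∈ s, f (u i) ω := by
    funext ω
    exact Finset.prod_attach s fun i => f (u i) ω
  have e2 : ((fun w : (j : T) → ℝ => ∏ j ∈ t.attach, w ⟨v j.1, hmemT j.1 j.2⟩) ∘
      (fun ω (j : T) => f j ω)) = fun ω => ∏ j ∈ t, f (v j) ω := by
    funext ω
    exact Finset.prod_attach t fun j => f (v j) ω
  rw [e1, e2] at key
  exact key

/-- If one of the values `u i₀` is attained exactly once and has mean zero, the expected
product vanishes. -/
lemma integral_prod_eq_zero {ι : Type*} [DecidableEq ι] {f : ι → Ω → ℝ}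
    (hind : iIndepFun f P) (hm : ∀ i, Measurable (f i))
    {B : ℝ} (hB0 : 0 ≤ B) (hB : ∀ i ω, |f i ω| ≤ B)
    {h : ℕ} (u : Fin h → ι) (i0 : Fin h)
    (hcard : (Finset.univ.filter fun j => u j = u i0).card ≤ 1)
    (hmean : ∫ ω, f (u i0) ω ∂P = 0) :
    ∫ ω, ∏ i : Fin h, f (u i) ω ∂P = 0 := by
  classical
  have huniq : ∀ j, u j = u i0 → j = i0 := by
    intro j hj
    by_contra hne
    have h2 : ({j, i0} : Finset (Fin h)) ⊆ Finset.univ.filter fun j => u j = u i0 := by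
      intro a ha
      rcases Finset.mem_insert.mp ha with rfl | ha
      · exact Finset.mem_filter.mpr ⟨Finset.mem_univ _, hj⟩
      · rw [Finset.mem_singleton.mp ha]
        exact Finset.mem_filter.mpr ⟨Finset.mem_univ _, rfl⟩
    have := (Finset.card_le_card h2).trans hcard
    rw [Finset.card_insert_of_notMem (by simpa using hne), Finset.card_singleton] at this
    omega
  have hsplit : ∀ ω, ∏ i : Fin h, f (u i) ω =
      (∏ i ∈ ({i0} : Finset (Fin h)), f (u i) ω) * ∏ i ∈ Finset.univ.erase i0, f (u i) ω := by
    intro ω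
    rw [Finset.prod_singleton]
    exact (Finset.mul_prod_erase Finset.univ _ (Finset.mem_univ i0)).symm
  have hindep : IndepFun (fun ω => ∏ i ∈ ({i0} : Finset (Fin h)), f (u i) ω)
      (fun ω => ∏ i ∈ Finset.univ.erase i0, f (u i) ω) P := by
    refine indepFun_prod_prod hind hm _ _ u u ?_
    intro i hi j hj hij
    rw [Finset.mem_singleton.mp hi] at hij
    exact Finset.ne_of_mem_erase hj (huniq j hij.symm)
  calc ∫ ω, ∏ i : Fin h, f (u i) ω ∂P
      = ∫ ω, (∏ i ∈ ({i0} : Finset (Fin h)), f (u i) ω) *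
          ∏ i ∈ Finset.univ.erase i0, f (u i) ω ∂P := by
        exact integral_congr_ae (ae_of_all _ hsplit)
    _ = (∫ ω, ∏ i ∈ ({i0} : Finset (Fin h)), f (u i) ω ∂P) *
          ∫ ω, ∏ i ∈ Finset.univ.erase i0, f (u i) ω ∂P :=
        hindep.integral_fun_mul_eq_mul_integral
          (integrable_prod_comp hm hB0 hB _ u).aestronglyMeasurable (integrable_prod_comp hm hB0 hB _ u).aestronglyMeasurable
    _ = 0 := by
        rw [show (∫ ω, ∏ i ∈ ({i0} : Finset (Fin h)), f (u i) ω ∂P) = 0 from ?_, zero_mul]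
        simpa [Finset.prod_singleton] using hmean

omit [MeasurableSpace Ω] in
lemma even_of_all_fibers_two {α : Type*} [DecidableEq α] {h : ℕ} (u : Fin h → α)
    (hall : ∀ i, (Finset.univ.filter fun j => u j = u i).card = 2) : Even h := by
  classical
  have hsum : ∑ t ∈ Finset.univ.image u, (Finset.univ.filter fun j => u j = t).card = h := by
    rw [← Finset.card_eq_sum_card_fiberwise
      (fun j (_ : j ∈ (Finset.univ : Finset (Fin h))) =>
        Finset.mem_image_of_mem u (Finset.mem_univ j))]
    simp
  have h2 : ∑ t ∈ Finset.univ.image u, (Finset.univ.filter fun j => u j = t).card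
      = (Finset.univ.image u).card * 2 :=
    Finset.sum_const_nat fun t ht => by
      obtain ⟨i, -, rfl⟩ := Finset.mem_image.mp ht
      exact hall i
  exact ⟨(Finset.univ.image u).card, by omega⟩

lemma count_bad_circuits {α : Type*} [DecidableEq α] {h n : ℕ} (hh : 1 ≤ h)
    (L : Fin n → Fin n → α) (Δ : ℕ)
    (hΔ : ∀ (k : Fin n) (t : α), (Finset.univ.filter fun l : Fin n => L k l = t).card ≤ Δ) :
    ((Finset.univ : Finset (Circuit h n)).filter fun π =>
        (∀ i : Fin h, 2 ≤ (Finset.univ.filter fun j : Fin h =>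
            L (π.1 j.castSucc) (π.1 j.succ) = L (π.1 i.castSucc) (π.1 i.succ)).card) ∧
        ∃ i : Fin h, 3 ≤ (Finset.univ.filter fun j : Fin h =>
            L (π.1 j.castSucc) (π.1 j.succ) = L (π.1 i.castSucc) (π.1 i.succ)).card).card
      ≤ h ^ h * ((Δ + 1) ^ h * n ^ (1 + (h - 1) / 2)) := by
  classical
  rcases Nat.eq_zero_or_pos n with rfl | hn
  · haveI : IsEmpty (Circuit h 0) := ⟨fun π => (π.1 0).elim0⟩
    simp
  set eV : Circuit h n → Fin h → α := fun π i => L (π.1 i.castSucc) (π.1 i.succ) with heV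
  have hne : ∀ (π : Circuit h n) (i : Fin h),
      (Finset.univ.filter fun j => eV π j = eV π i).Nonempty :=
    fun π i => ⟨i, Finset.mem_filter.mpr ⟨Finset.mem_univ _, rfl⟩⟩
  set word : Circuit h n → Fin h → Fin h :=
    fun π i => (Finset.univ.filter fun j => eV π j = eV π i).min' (hne π i) with hword
  have hmin_congr : ∀ (s t : Finset (Fin h)) (hs : s.Nonempty) (ht : t.Nonempty),
      s = t → s.min' hs = t.min' ht := by rintro s t hs ht rfl; rfl
  have hweV : ∀ π i, eV π (word π i) = eV π i := by
    intro π i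
    have := Finset.min'_mem _ (hne π i)
    exact (Finset.mem_filter.mp this).2
  have hwle : ∀ π (i : Fin h), (word π i : ℕ) ≤ i := by
    intro π i
    have hmem : i ∈ Finset.univ.filter (fun j => eV π j = eV π i) :=
      Finset.mem_filter.mpr ⟨Finset.mem_univ _, rfl⟩
    have : word π i ≤ i := Finset.min'_le _ _ hmem
    exact this
  have hwcong : ∀ π (i i' : Fin h), eV π i = eV π i' → word π i = word π i' := by
    intro π i i' hii
    refine hmin_congr _ _ _ _ ?_
    ext j
    simp [hii]
  rw [Finset.card_eq_sum_card_fiberwise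
    (f := word) (t := Finset.univ) (fun π _ => Finset.mem_univ _)]
  have key : ∀ w : Fin h → Fin h,
      ((Finset.univ.filter fun π : Circuit h n =>
        (∀ i : Fin h, 2 ≤ (Finset.univ.filter fun j : Fin h =>
            L (π.1 j.castSucc) (π.1 j.succ) = L (π.1 i.castSucc) (π.1 i.succ)).card) ∧
        ∃ i : Fin h, 3 ≤ (Finset.univ.filter fun j : Fin h =>
            L (π.1 j.castSucc) (π.1 j.succ) = L (π.1 i.castSucc) (π.1 i.succ)).card).filter
          fun π => word π = w).card ≤ (Δ + 1) ^ h * n ^ (1 + (h - 1) / 2) := by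
    intro w
    set badw := (Finset.univ.filter fun π : Circuit h n =>
        (∀ i : Fin h, 2 ≤ (Finset.univ.filter fun j : Fin h =>
            L (π.1 j.castSucc) (π.1 j.succ) = L (π.1 i.castSucc) (π.1 i.succ)).card) ∧
        ∃ i : Fin h, 3 ≤ (Finset.univ.filter fun j : Fin h =>
            L (π.1 j.castSucc) (π.1 j.succ) = L (π.1 i.castSucc) (π.1 i.succ)).card).filter
          (fun π => word π = w) with hbadw
    rcases badw.eq_empty_or_nonempty with hemp | ⟨π0, hπ0⟩
    · rw [hemp]; simp
    have hπ0' := Finset.mem_filter.mp hπ0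
    have hw0 : word π0 = w := hπ0'.2
    have hbad0 := (Finset.mem_filter.mp hπ0'.1).2
    -- properties of w
    have hwle' : ∀ i : Fin h, (w i : ℕ) ≤ i := fun i => hw0 ▸ hwle π0 i
    have hfix0 : ∀ i, eV π0 (w i) = eV π0 i := fun i => hw0 ▸ hweV π0 i
    -- the number of fixed points
    set b := (Finset.univ.filter fun i : Fin h => w i = i).card with hb
    have himgcard : b = (Finset.univ.image (eV π0)).card := by
      refine Finset.card_bij (fun i _ => eV π0 i) ?_ ?_ ?_
      · intro i _; exact Finset.mem_image_of_mem _ (Finset.mem_univ _)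
      · intro i hi i' hi' hee
        have hi1 := (Finset.mem_filter.mp hi).2
        have hi2 := (Finset.mem_filter.mp hi').2
        have := hwcong π0 i i' hee
        rw [hw0] at this
        rw [← hi1, ← hi2, this]
      · intro t ht
        obtain ⟨i, -, rfl⟩ := Finset.mem_image.mp ht
        refine ⟨w i, Finset.mem_filter.mpr ⟨Finset.mem_univ _, ?_⟩, hfix0 i⟩
        have : word π0 (w i) = word π0 i := hwcong π0 (w i) i (hfix0 i)
        rw [hw0] at this
        exact this
    set img := Finset.univ.image (eV π0) with himg0
    set mult : α → ℕ := fun t => (Finset.univ.filter fun j => eV π0 j = t).card with hmult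
    have hsum : ∑ t ∈ img, mult t = h := by
      rw [← Finset.card_eq_sum_card_fiberwise
        (fun j (_ : j ∈ (Finset.univ : Finset (Fin h))) =>
          Finset.mem_image_of_mem (eV π0) (Finset.mem_univ j))]
      simp
    have h2b : 2 * b + 1 ≤ h := by
      obtain ⟨i3, hi3⟩ := hbad0.2
      have ht0 : eV π0 i3 ∈ img := Finset.mem_image_of_mem _ (Finset.mem_univ _)
      have hsplit : mult (eV π0 i3) + ∑ t ∈ img.erase (eV π0 i3), mult t
          = ∑ t ∈ img, mult t := Finset.add_sum_erase _ mult ht0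
      have hrest : (img.erase (eV π0 i3)).card * 2 ≤
          ∑ t ∈ img.erase (eV π0 i3), mult t := by
        have := Finset.card_nsmul_le_sum (img.erase (eV π0 i3)) mult 2 ?_
        · simpa [smul_eq_mul, mul_comm] using this
        · intro t ht'
          obtain ⟨i, -, rfl⟩ := Finset.mem_image.mp (Finset.mem_of_mem_erase ht')
          exact hbad0.1 i
      have hcarde : (img.erase (eV π0 i3)).card = img.card - 1 :=
        Finset.card_erase_of_mem ht0
      have hpos : 1 ≤ img.card := Finset.card_pos.mpr ⟨_, ht0⟩
      have h3 : 3 ≤ mult (eV π0 i3) := hi3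
      omega
    -- path counting
    set d : Fin n := ⟨0, hn⟩ with hd
    set Q : ℕ → Finset (Fin (h+1) → Fin n) := fun m => Finset.univ.filter fun p =>
      (∀ j : Fin (h+1), m < (j : ℕ) → p j = d) ∧
      ∀ i : Fin h, (i : ℕ) < m →
        L (p ((w i).castSucc)) (p ((w i).succ)) = L (p i.castSucc) (p i.succ) with hQ
    set c : Fin h → ℕ := fun i => if w i = i then n else Δ + 1 with hc
    have hQ0 : (Q 0).card ≤ n := by
      have hinj : Set.InjOn (fun p : Fin (h+1) → Fin n => p 0) (Q 0) := by
        intro p hp q hq hpq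
        have hp' := (Finset.mem_filter.mp hp).2.1
        have hq' := (Finset.mem_filter.mp hq).2.1
        funext j
        rcases Nat.eq_zero_or_pos (j : ℕ) with hj | hj
        · have : j = 0 := Fin.ext hj
          rw [this]; exact hpq
        · rw [hp' j hj, hq' j hj]
      have := Finset.card_le_card_of_injOn (fun p : Fin (h+1) → Fin n => p 0)
        (fun p _ => Finset.mem_univ ((fun p : Fin (h+1) → Fin n => p 0) p)) hinj
      simpa using this
    have hstep : ∀ i : Fin h, (Q ((i : ℕ) + 1)).card ≤ c i * (Q (i : ℕ)).card := by
      intro i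
      set m := (i : ℕ) with hm
      have hmh : m < h := i.isLt
      set trunc : (Fin (h+1) → Fin n) → (Fin (h+1) → Fin n) :=
        fun p j => if (j : ℕ) ≤ m then p j else d with htr
      have tr_le : ∀ (p) (j : Fin (h+1)), (j : ℕ) ≤ m → trunc p j = p j :=
        fun p j hj => if_pos hj
      have tr_gt : ∀ (p) (j : Fin (h+1)), m < (j : ℕ) → trunc p j = d :=
        fun p j hj => if_neg (by omega)
      have himg : (Q (m + 1)).image trunc ⊆ Q m := by
        intro a ha
        obtain ⟨p, hp, rfl⟩ := Finset.mem_image.mp ha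
        have hp2 := (Finset.mem_filter.mp hp).2.2
        refine Finset.mem_filter.mpr ⟨Finset.mem_univ _, fun j hj => tr_gt p j hj, ?_⟩
        intro i' hi'
        rw [tr_le p _ (by have := hwle' i'; simp only [Fin.coe_castSucc]; omega),
            tr_le p _ (by have := hwle' i'; simp only [Fin.val_succ]; omega),
            tr_le p _ (by simp only [Fin.coe_castSucc]; omega),
            tr_le p _ (by simp only [Fin.val_succ]; omega)]
        exact hp2 i' (by omega)
      have hfiber : ∀ a ∈ (Q (m + 1)).image trunc,
          ((Q (m + 1)).filter fun p => trunc p = a).card ≤ c i := by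
        intro a _
        have hjm1 : m + 1 < h + 1 := by omega
        have hinj : Set.InjOn (fun p : Fin (h+1) → Fin n => p ⟨m+1, hjm1⟩)
            ((Q (m + 1)).filter fun p => trunc p = a) := by
          intro p hp q hq hpq
          have hp' := Finset.mem_filter.mp hp
          have hq' := Finset.mem_filter.mp hq
          have hpd := (Finset.mem_filter.mp hp'.1).2.1
          have hqd := (Finset.mem_filter.mp hq'.1).2.1
          funext j
          rcases lt_trichotomy (j : ℕ) (m+1) with hj | hj | hj
          · have e1 : trunc p j = p j := tr_le p j (Nat.lt_succ_iff.mp hj)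
            have e2 : trunc q j = q j := tr_le q j (Nat.lt_succ_iff.mp hj)
            rw [← e1, ← e2, hp'.2, hq'.2]
          · have : j = ⟨m+1, hjm1⟩ := Fin.ext hj
            rw [this]; exact hpq
          · rw [hpd j hj, hqd j hj]
        by_cases hwi : w i = i
        · have : ((Q (m + 1)).filter fun p => trunc p = a).card ≤
              (Finset.univ : Finset (Fin n)).card :=
            Finset.card_le_card_of_injOn _ (fun p _ => Finset.mem_univ _) hinj
          simpa [hc, hwi] using this
        · have hwlt : (w i : ℕ) < m := by
            have h1 := hwle' i
            have h2 : (w i : ℕ) ≠ m := fun hcon => hwi (Fin.ext hcon)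
            omega
          set ta := L (a ((w i).castSucc)) (a ((w i).succ)) with hta
          have hmem : ∀ p ∈ (Q (m + 1)).filter fun p => trunc p = a,
              (fun p : Fin (h+1) → Fin n => p ⟨m+1, hjm1⟩) p ∈
                Finset.univ.filter fun l : Fin n => L (a i.castSucc) l = ta := by
            intro p hp
            have hp' := Finset.mem_filter.mp hp
            have hcons := (Finset.mem_filter.mp hp'.1).2.2 i (by omega)
            have ha := hp'.2
            have e1 : p ((w i).castSucc) = a ((w i).castSucc) := by
              rw [← ha]; exact (tr_le p _ (by simp only [Fin.coe_castSucc]; omega)).symm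
            have e2 : p ((w i).succ) = a ((w i).succ) := by
              rw [← ha]; exact (tr_le p _ (by simp only [Fin.val_succ]; omega)).symm
            have e3 : p i.castSucc = a i.castSucc := by
              rw [← ha]; exact (tr_le p _ (by simp only [Fin.coe_castSucc]; exact le_rfl)).symm
            have hisucc : (⟨m+1, hjm1⟩ : Fin (h+1)) = i.succ := Fin.ext (by simp [Fin.val_succ, hm])
            refine Finset.mem_filter.mpr ⟨Finset.mem_univ _, ?_⟩
            show L (a i.castSucc) (p ⟨m+1, hjm1⟩) = ta
            rw [hisucc, ← e3, hta, ← e1, ← e2]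
            exact hcons.symm
          have := Finset.card_le_card_of_injOn _ hmem hinj
          have hΔ' := hΔ (a i.castSucc) ta
          have : ((Q (m + 1)).filter fun p => trunc p = a).card ≤ Δ := this.trans hΔ'
          simp only [hc, if_neg hwi]
          omega
      calc (Q (m + 1)).card ≤ c i * ((Q (m + 1)).image trunc).card :=
            Finset.card_le_mul_card_image _ _ hfiber
        _ ≤ c i * (Q m).card := Nat.mul_le_mul_left _ (Finset.card_le_card himg)
    have hind : ∀ m, m ≤ h →
        (Q m).card ≤ n * ∏ i ∈ Finset.univ.filter (fun i : Fin h => (i : ℕ) < m), c i := by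
      intro m
      induction m with
      | zero =>
        intro _
        have : Finset.univ.filter (fun i : Fin h => (i : ℕ) < 0) = ∅ := by
          ext i; simp
        rw [this]
        simpa using hQ0
      | succ m ih =>
        intro hm
        have hmh : m < h := by omega
        have hfilter : Finset.univ.filter (fun i : Fin h => (i : ℕ) < m + 1) =
            insert ⟨m, hmh⟩ (Finset.univ.filter fun i : Fin h => (i : ℕ) < m) := by
          ext j
          simp [Fin.ext_iff]
          omega
        rw [hfilter, Finset.prod_insert (by simp)]
        calc (Q (m + 1)).card ≤ c ⟨m, hmh⟩ * (Q m).card := hstep ⟨m, hmh⟩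
          _ ≤ c ⟨m, hmh⟩ * (n * ∏ i ∈ Finset.univ.filter (fun i : Fin h => (i : ℕ) < m), c i) :=
            Nat.mul_le_mul_left _ (ih (by omega))
          _ = n * (c ⟨m, hmh⟩ * ∏ i ∈ Finset.univ.filter (fun i : Fin h => (i : ℕ) < m), c i) := by
            ring
    -- from fiber to paths
    have hfib_paths : badw.card ≤ (Q h).card := by
      refine Finset.card_le_card_of_injOn (fun π => π.1) ?_ ?_
      · intro π hπ
        have hπ' := Finset.mem_filter.mp hπ
        have hwπ : word π = w := hπ'.2
        refine Finset.mem_filter.mpr ⟨Finset.mem_univ _, ?_, ?_⟩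
        · intro j hj
          exact absurd hj (by omega)
        · intro i _
          have := hwπ ▸ hweV π i
          exact this
      · intro p hp q hq hpq
        exact Subtype.ext hpq
    -- final computation
    have hfinal : (Q h).card ≤ (Δ + 1) ^ h * n ^ (1 + (h - 1) / 2) := by
      have h1 := hind h le_rfl
      have hfil : Finset.univ.filter (fun i : Fin h => (i : ℕ) < h) = Finset.univ := by
        ext i; simp [i.isLt]
      rw [hfil] at h1
      have hsplitprod := Finset.prod_filter_mul_prod_filter_not Finset.univ
        (fun i : Fin h => w i = i) c
      have hfixprod : ∏ i ∈ Finset.univ.filter (fun i : Fin h => w i = i), c i = n ^ b := by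
        rw [Finset.prod_congr rfl (fun i hi => ?_), Finset.prod_const]
        exact if_pos (Finset.mem_filter.mp hi).2
      have hnotprod : ∏ i ∈ Finset.univ.filter (fun i : Fin h => ¬ w i = i), c i ≤
          (Δ + 1) ^ h := by
        rw [Finset.prod_congr rfl (fun i hi => show c i = Δ + 1 from
          if_neg (Finset.mem_filter.mp hi).2), Finset.prod_const]
        exact Nat.pow_le_pow_right (by omega)
          ((Finset.card_filter_le _ _).trans (by simp))
      have hble : b ≤ (h - 1) / 2 := by omega
      calc (Q h).card ≤ n * ∏ i : Fin h, c i := h1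
        _ = n * (n ^ b * ∏ i ∈ Finset.univ.filter (fun i : Fin h => ¬ w i = i), c i) := by
          rw [← hsplitprod, hfixprod]
        _ ≤ n * (n ^ b * (Δ + 1) ^ h) := by
          exact Nat.mul_le_mul_left _ (Nat.mul_le_mul_left _ hnotprod)
        _ = n ^ (b + 1) * (Δ + 1) ^ h := by ring
        _ ≤ n ^ (1 + (h - 1) / 2) * (Δ + 1) ^ h :=
          Nat.mul_le_mul_right _ (Nat.pow_le_pow_right hn (by omega))
        _ = (Δ + 1) ^ h * n ^ (1 + (h - 1) / 2) := by ring
    exact hfib_paths.trans hfinal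
  calc ∑ w ∈ (Finset.univ : Finset (Fin h → Fin h)), _ ≤
      (Finset.univ : Finset (Fin h → Fin h)).card • ((Δ + 1) ^ h * n ^ (1 + (h - 1) / 2)) :=
        Finset.sum_le_card_nsmul _ _ _ (fun w _ => key w)
    _ = h ^ h * ((Δ + 1) ^ h * n ^ (1 + (h - 1) / 2)) := by
      rw [smul_eq_mul, Finset.card_univ, Fintype.card_fun, Fintype.card_fin]

end Statement3Aux


/-- circuits with an edge of order ≥ 3 do not contribute; odd moments vanish. -/
theorem statement3
    {E E' : Type*} [Countable E] [Countable E'] [DecidableEq E] [DecidableEq E']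
    {Ω : Type*} [MeasurableSpace Ω] (P : Measure Ω) [IsProbabilityMeasure P]
    (LX : (n : ℕ) → Fin n → Fin n → E) (LY : (n : ℕ) → Fin n → Fin n → E')
    (hBX : propertyB LX) (hBY : propertyB LY)
    (x : E → Ω → ℝ) (y : E' → Ω → ℝ)
    (hA1x : assumptionA1 P x) (hA1y : assumptionA1 P y)
    (hindep : iIndepFun (Sum.elim x y) P)
    (h : ℕ) (hh : 1 ≤ h) :
    Tendsto (fun n : ℕ =>
        ((n : ℝ) ^ (-(1 : ℝ) - (h : ℝ) / 2)) *
          ∑ π ∈ (Finset.univ.filter fun π : Circuit h n =>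
              (∃ i : Fin h,
                3 ≤ (Finset.univ.filter fun j : Fin h => lVal LX π j = lVal LX π i).card) ∨
              (∃ i : Fin h,
                3 ≤ (Finset.univ.filter fun j : Fin h => lVal LY π j = lVal LY π i).card)),
            (∫ ω, ∏ i : Fin h, x (lVal LX π i) ω ∂P) *
              (∫ ω, ∏ i : Fin h, y (lVal LY π i) ω ∂P))
      atTop (nhds 0) ∧
    (Odd h → Tendsto (fun n : ℕ =>
        ∫ ω, betaMom h (scaleMat (hadProd (pattMatrix LX x n ω) (pattMatrix LY y n ω))) ∂P)
      atTop (nhds 0)) := by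
  
  classical
  obtain ⟨hmx, ⟨Bx, hBxb⟩, hmeanx, -⟩ := hA1x
  obtain ⟨hmy, ⟨By, hByb⟩, hmeany, -⟩ := hA1y
  obtain ⟨ΔX, hΔX⟩ := hBX
  obtain ⟨ΔY, hΔY⟩ := hBY
  set f : E ⊕ E' → Ω → ℝ := Sum.elim x y with hfdef
  have hmf : ∀ v, Measurable (f v) := by rintro (e | e'); exacts [hmx e, hmy e']
  set B : ℝ := max (max Bx By) 0 with hBdef
  have hB0 : (0 : ℝ) ≤ B := le_max_right _ _
  have hBf : ∀ v ω, |f v ω| ≤ B := by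
    rintro (e | e') ω
    · exact (hBxb e ω).trans (le_max_of_le_left (le_max_left _ _))
    · exact (hByb e' ω).trans (le_max_of_le_left (le_max_right _ _))
  have hmeanf : ∀ v, ∫ ω, f v ω ∂P = 0 := by rintro (e | e'); exacts [hmeanx e, hmeany e']
  -- the index maps
  -- vanishing of expectations
  have hvanX : ∀ {n : ℕ} (π : Circuit h n),
      (∫ ω, ∏ i : Fin h, x (lVal LX π i) ω ∂P) ≠ 0 →
      ∀ i : Fin h, 2 ≤ (Finset.univ.filter fun j : Fin h => lVal LX π j = lVal LX π i).card := by
    intro n π hne i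
    by_contra hlt
    apply hne
    have hfil : (Finset.univ.filter fun j : Fin h =>
        (fun k => Sum.inl (lVal LX π k) : Fin h → E ⊕ E') j =
          (fun k => Sum.inl (lVal LX π k) : Fin h → E ⊕ E') i) =
        Finset.univ.filter fun j : Fin h => lVal LX π j = lVal LX π i := by
      ext j; simp
    have hcard : (Finset.univ.filter fun j : Fin h =>
        (fun k => Sum.inl (lVal LX π k) : Fin h → E ⊕ E') j =
          (fun k => Sum.inl (lVal LX π k) : Fin h → E ⊕ E') i).card ≤ 1 := by
      rw [hfil]; omega
    exact integral_prod_eq_zero hindep hmf hB0 hBf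
      (fun k => Sum.inl (lVal LX π k)) i hcard (hmeanf _)
  have hvanY : ∀ {n : ℕ} (π : Circuit h n),
      (∫ ω, ∏ i : Fin h, y (lVal LY π i) ω ∂P) ≠ 0 →
      ∀ i : Fin h, 2 ≤ (Finset.univ.filter fun j : Fin h => lVal LY π j = lVal LY π i).card := by
    intro n π hne i
    by_contra hlt
    apply hne
    have hfil : (Finset.univ.filter fun j : Fin h =>
        (fun k => Sum.inr (lVal LY π k) : Fin h → E ⊕ E') j =
          (fun k => Sum.inr (lVal LY π k) : Fin h → E ⊕ E') i) =
        Finset.univ.filter fun j : Fin h => lVal LY π j = lVal LY π i := by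
      ext j; simp
    have hcard : (Finset.univ.filter fun j : Fin h =>
        (fun k => Sum.inr (lVal LY π k) : Fin h → E ⊕ E') j =
          (fun k => Sum.inr (lVal LY π k) : Fin h → E ⊕ E') i).card ≤ 1 := by
      rw [hfil]; omega
    exact integral_prod_eq_zero hindep hmf hB0 hBf
      (fun k => Sum.inr (lVal LY π k)) i hcard (hmeanf _)
  -- bounds on expectations
  have hIbX : ∀ {n : ℕ} (π : Circuit h n),
      |∫ ω, ∏ i : Fin h, x (lVal LX π i) ω ∂P| ≤ B ^ h := fun π =>
    abs_integral_prod_le hB0 hBf (fun k => Sum.inl (lVal LX π k))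
  have hIbY : ∀ {n : ℕ} (π : Circuit h n),
      |∫ ω, ∏ i : Fin h, y (lVal LY π i) ω ∂P| ≤ B ^ h := fun π =>
    abs_integral_prod_le hB0 hBf (fun k => Sum.inr (lVal LY π k))
  -- PART 1
  have key1 : Tendsto (fun n : ℕ =>
      ((n : ℝ) ^ (-(1 : ℝ) - (h : ℝ) / 2)) *
        ∑ π ∈ (Finset.univ.filter fun π : Circuit h n =>
            (∃ i : Fin h,
              3 ≤ (Finset.univ.filter fun j : Fin h => lVal LX π j = lVal LX π i).card) ∨
            (∃ i : Fin h,
              3 ≤ (Finset.univ.filter fun j : Fin h => lVal LY π j = lVal LY π i).card)),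
          (∫ ω, ∏ i : Fin h, x (lVal LX π i) ω ∂P) *
            (∫ ω, ∏ i : Fin h, y (lVal LY π i) ω ∂P))
    atTop (nhds 0) := by
    set K : ℝ := ((h ^ h * ((ΔX + 1) ^ h) + h ^ h * ((ΔY + 1) ^ h) : ℕ) : ℝ) *
      (B ^ h * B ^ h) with hK
    have hK0 : 0 ≤ K := by positivity
    apply squeeze_zero_norm' (a := fun n : ℕ => K * (n : ℝ) ^ (-(1/2) : ℝ))
    · filter_upwards [eventually_ge_atTop 1] with n hn
      have hn0 : (0 : ℝ) < n := by exact_mod_cast hn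
      have hn1 : (1 : ℝ) ≤ n := by exact_mod_cast hn
      set e : ℕ := 1 + (h - 1) / 2 with he
      set g : Circuit h n → ℝ := fun π =>
        (∫ ω, ∏ i : Fin h, x (lVal LX π i) ω ∂P) *
          (∫ ω, ∏ i : Fin h, y (lVal LY π i) ω ∂P) with hg
      set Fn : Finset (Circuit h n) := Finset.univ.filter fun π : Circuit h n =>
            (∃ i : Fin h,
              3 ≤ (Finset.univ.filter fun j : Fin h => lVal LX π j = lVal LX π i).card) ∨
            (∃ i : Fin h,
              3 ≤ (Finset.univ.filter fun j : Fin h => lVal LY π j = lVal LY π i).card)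
        with hFn
      set BadX : Finset (Circuit h n) := Finset.univ.filter fun π : Circuit h n =>
        (∀ i : Fin h,
          2 ≤ (Finset.univ.filter fun j : Fin h => lVal LX π j = lVal LX π i).card) ∧
        ∃ i : Fin h,
          3 ≤ (Finset.univ.filter fun j : Fin h => lVal LX π j = lVal LX π i).card with hBadX
      set BadY : Finset (Circuit h n) := Finset.univ.filter fun π : Circuit h n =>
        (∀ i : Fin h,
          2 ≤ (Finset.univ.filter fun j : Fin h => lVal LY π j = lVal LY π i).card) ∧
        ∃ i : Fin h,
          3 ≤ (Finset.univ.filter fun j : Fin h => lVal LY π j = lVal LY π i).card with hBadY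
      have hcX : BadX.card ≤ h ^ h * ((ΔX + 1) ^ h * n ^ e) :=
        count_bad_circuits hh (LX n) ΔX (hΔX n)
      have hcY : BadY.card ≤ h ^ h * ((ΔY + 1) ^ h * n ^ e) :=
        count_bad_circuits hh (LY n) ΔY (hΔY n)
      have hterm : ∀ π : Circuit h n, |g π| ≤ B ^ h * B ^ h := by
        intro π
        rw [hg, abs_mul]
        exact mul_le_mul (hIbX π) (hIbY π) (abs_nonneg _) (pow_nonneg hB0 h)
      have hsub : Fn.filter (fun π => g π ≠ 0) ⊆ BadX ∪ BadY := by
        intro π hπ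
        obtain ⟨hπF, hgne⟩ := Finset.mem_filter.mp hπ
        have hxne : (∫ ω, ∏ i : Fin h, x (lVal LX π i) ω ∂P) ≠ 0 :=
          fun hc => hgne (by rw [hg]; simp [hc])
        have hyne : (∫ ω, ∏ i : Fin h, y (lVal LY π i) ω ∂P) ≠ 0 :=
          fun hc => hgne (by rw [hg]; simp [hc])
        rcases (Finset.mem_filter.mp hπF).2 with h3 | h3
        · exact Finset.mem_union_left _
            (Finset.mem_filter.mpr ⟨Finset.mem_univ _, hvanX π hxne, h3⟩)
        · exact Finset.mem_union_right _
            (Finset.mem_filter.mpr ⟨Finset.mem_univ _, hvanY π hyne, h3⟩)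
      have hsum1 : |∑ π ∈ Fn, g π| ≤
          (((h ^ h * ((ΔX + 1) ^ h) + h ^ h * ((ΔY + 1) ^ h)) * n ^ e : ℕ) : ℝ) *
            (B ^ h * B ^ h) := by
        calc |∑ π ∈ Fn, g π| ≤ ∑ π ∈ Fn, |g π| := Finset.abs_sum_le_sum_abs _ _
          _ = ∑ π ∈ Fn.filter (fun π => g π ≠ 0), |g π| :=
            (Finset.sum_filter_of_ne (fun π _ habs => abs_ne_zero.mp habs)).symm
          _ ≤ ∑ π ∈ BadX ∪ BadY, |g π| :=
            Finset.sum_le_sum_of_subset_of_nonneg hsub (fun π _ _ => abs_nonneg _)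
          _ ≤ (BadX ∪ BadY).card • (B ^ h * B ^ h) :=
            Finset.sum_le_card_nsmul _ _ _ (fun π _ => hterm π)
          _ = ((BadX ∪ BadY).card : ℝ) * (B ^ h * B ^ h) := by
            rw [nsmul_eq_mul]
          _ ≤ (((h ^ h * ((ΔX + 1) ^ h) + h ^ h * ((ΔY + 1) ^ h)) * n ^ e : ℕ) : ℝ) *
              (B ^ h * B ^ h) := by
            refine mul_le_mul_of_nonneg_right ?_ (by positivity)
            have hcard : (BadX ∪ BadY).card ≤
                (h ^ h * ((ΔX + 1) ^ h) + h ^ h * ((ΔY + 1) ^ h)) * n ^ e := by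
              calc (BadX ∪ BadY).card ≤ BadX.card + BadY.card := Finset.card_union_le _ _
                _ ≤ (h ^ h * ((ΔX + 1) ^ h) + h ^ h * ((ΔY + 1) ^ h)) * n ^ e := by
                  rw [add_mul]
                  exact Nat.add_le_add (by rw [← mul_assoc] at hcX; exact hcX)
                    (by rw [← mul_assoc] at hcY; exact hcY)
            exact_mod_cast hcard
      have hexp : (n : ℝ) ^ (-(1 : ℝ) - (h : ℝ) / 2) * (n : ℝ) ^ (e : ℕ) ≤
          (n : ℝ) ^ (-(1/2) : ℝ) := by
        rw [← Real.rpow_natCast (n : ℝ) e, ← Real.rpow_add hn0]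
        apply Real.rpow_le_rpow_of_exponent_le hn1
        have h1 : ((e : ℕ) : ℝ) ≤ 1 + ((h : ℝ) - 1) / 2 := by
          rw [he]
          push_cast
          have h2 : (((h - 1) / 2 : ℕ) : ℝ) ≤ ((h - 1 : ℕ) : ℝ) / 2 := Nat.cast_div_le
          have h3 : ((h - 1 : ℕ) : ℝ) = (h : ℝ) - 1 := by
            have : (1 : ℕ) ≤ h := hh
            push_cast [this]
            ring
          rw [h3] at h2
          linarith
        linarith
      have habs : |((n : ℝ) ^ (-(1 : ℝ) - (h : ℝ) / 2))| =
          (n : ℝ) ^ (-(1 : ℝ) - (h : ℝ) / 2) :=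
        abs_of_nonneg (Real.rpow_nonneg hn0.le _)
      rw [Real.norm_eq_abs, abs_mul, habs]
      calc (n : ℝ) ^ (-(1 : ℝ) - (h : ℝ) / 2) * |∑ π ∈ Fn, g π| ≤
          (n : ℝ) ^ (-(1 : ℝ) - (h : ℝ) / 2) *
            ((((h ^ h * ((ΔX + 1) ^ h) + h ^ h * ((ΔY + 1) ^ h)) * n ^ e : ℕ) : ℝ) *
              (B ^ h * B ^ h)) :=
            mul_le_mul_of_nonneg_left hsum1 (Real.rpow_nonneg hn0.le _)
        _ = (((h ^ h * ((ΔX + 1) ^ h) + h ^ h * ((ΔY + 1) ^ h) : ℕ) : ℝ) * (B ^ h * B ^ h)) *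
            ((n : ℝ) ^ (-(1 : ℝ) - (h : ℝ) / 2) * (n : ℝ) ^ (e : ℕ)) := by
          push_cast
          ring
        _ ≤ K * (n : ℝ) ^ (-(1/2) : ℝ) := by
          rw [hK]
          exact mul_le_mul_of_nonneg_left hexp (by positivity)
    · have h12 : (0 : ℝ) < 1/2 := by norm_num
      have htend := (tendsto_rpow_neg_atTop h12).comp
        (tendsto_natCast_atTop_atTop (R := ℝ))
      have := htend.const_mul K
      simpa using this
  refine ⟨key1, fun hodd => ?_⟩
  -- PART 2
  refine key1.congr' ?_
  filter_upwards [eventually_ge_atTop 1] with n hn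
  have hn0 : (0 : ℝ) < n := by exact_mod_cast hn
  refine Eq.symm ?_
  -- pointwise identity for the trace
  have hmat : ∀ ω : Ω, betaMom h (scaleMat (hadProd (pattMatrix LX x n ω)
      (pattMatrix LY y n ω))) =
      ((n : ℝ)⁻¹ * ((n : ℝ) ^ (-(1 : ℝ)/2)) ^ h) *
        ∑ π : Circuit h n, (∏ i : Fin h, x (lVal LX π i) ω) *
          (∏ i : Fin h, y (lVal LY π i) ω) := by
    intro ω
    rw [betaMom, scaleMat, smul_pow, Matrix.trace_smul, smul_eq_mul, ← mul_assoc]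
    congr 1
    rw [trace_pow_circuits]
    refine Finset.sum_congr rfl fun π _ => ?_
    rw [← Finset.prod_mul_distrib]
    exact Finset.prod_congr rfl fun k _ => rfl
  -- integrability
  have hint : ∀ π : Circuit h n, Integrable (fun ω => (∏ i : Fin h, x (lVal LX π i) ω) *
      (∏ i : Fin h, y (lVal LY π i) ω)) P := by
    intro π
    refine integrable_of_abs_le (Measurable.mul ?_ ?_) (B := B ^ h * B ^ h) (fun ω => ?_)
    · exact measurable_prod_comp hmf Finset.univ (fun k => Sum.inl (lVal LX π k))
    · exact measurable_prod_comp hmf Finset.univ (fun k => Sum.inr (lVal LY π k))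
    · rw [abs_mul]
      refine mul_le_mul ?_ ?_ (abs_nonneg _) (pow_nonneg hB0 h)
      · simpa [hfdef] using abs_prod_le_pow hB0 hBf Finset.univ (fun k => Sum.inl (lVal LX π k)) ω
      · simpa [hfdef] using abs_prod_le_pow hB0 hBf Finset.univ (fun k => Sum.inr (lVal LY π k)) ω
  -- decoupling
  have hdec : ∀ π : Circuit h n,
      ∫ ω, (∏ i : Fin h, x (lVal LX π i) ω) * (∏ i : Fin h, y (lVal LY π i) ω) ∂P =
      (∫ ω, ∏ i : Fin h, x (lVal LX π i) ω ∂P) *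
        (∫ ω, ∏ i : Fin h, y (lVal LY π i) ω ∂P) := by
    intro π
    have hi := indepFun_prod_prod hindep hmf Finset.univ Finset.univ
      (fun k => Sum.inl (lVal LX π k)) (fun k => Sum.inr (lVal LY π k))
      (fun i _ j _ => by simp)
    exact hi.integral_fun_mul_eq_mul_integral
      (integrable_prod_comp hmf hB0 hBf _ _).aestronglyMeasurable (integrable_prod_comp hmf hB0 hBf _ _).aestronglyMeasurable
  -- constants
  have hc : (n : ℝ)⁻¹ * ((n : ℝ) ^ (-(1 : ℝ)/2)) ^ h = (n : ℝ) ^ (-(1 : ℝ) - (h : ℝ)/2) := by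
    rw [← Real.rpow_natCast ((n : ℝ) ^ (-(1 : ℝ)/2)) h, ← Real.rpow_mul hn0.le,
      ← Real.rpow_neg_one (n : ℝ), ← Real.rpow_add hn0]
    congr 1
    ring
  -- the sum over all circuits localizes on the filtered set
  have hzero : ∀ π : Circuit h n, π ∉ (Finset.univ.filter fun π : Circuit h n =>
        (∃ i : Fin h,
          3 ≤ (Finset.univ.filter fun j : Fin h => lVal LX π j = lVal LX π i).card) ∨
        (∃ i : Fin h,
          3 ≤ (Finset.univ.filter fun j : Fin h => lVal LY π j = lVal LY π i).card)) →
      (∫ ω, ∏ i : Fin h, x (lVal LX π i) ω ∂P) *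
        (∫ ω, ∏ i : Fin h, y (lVal LY π i) ω ∂P) = 0 := by
    intro π hπ
    rw [Finset.mem_filter] at hπ
    push_neg at hπ
    have h3 := hπ (Finset.mem_univ π)
    by_contra hgne
    have hxne : (∫ ω, ∏ i : Fin h, x (lVal LX π i) ω ∂P) ≠ 0 :=
      fun hcon => hgne (by rw [hcon, zero_mul])
    have hall2 : ∀ i : Fin h,
        (Finset.univ.filter fun j : Fin h => lVal LX π j = lVal LX π i).card = 2 := by
      intro i
      have hge := hvanX π hxne i
      have hle := h3.1 i
      omega
    exact (Nat.not_even_iff_odd.mpr hodd) (even_of_all_fibers_two (fun i => lVal LX π i) hall2)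
  -- putting everything together
  calc ∫ ω, betaMom h (scaleMat (hadProd (pattMatrix LX x n ω) (pattMatrix LY y n ω))) ∂P
      = ∫ ω, ((n : ℝ)⁻¹ * ((n : ℝ) ^ (-(1 : ℝ)/2)) ^ h) *
          ∑ π : Circuit h n, (∏ i : Fin h, x (lVal LX π i) ω) *
            (∏ i : Fin h, y (lVal LY π i) ω) ∂P :=
        integral_congr_ae (ae_of_all _ fun ω => hmat ω)
    _ = ((n : ℝ)⁻¹ * ((n : ℝ) ^ (-(1 : ℝ)/2)) ^ h) *
          ∫ ω, ∑ π : Circuit h n, (∏ i : Fin h, x (lVal LX π i) ω) *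
            (∏ i : Fin h, y (lVal LY π i) ω) ∂P := integral_const_mul _ _
    _ = ((n : ℝ)⁻¹ * ((n : ℝ) ^ (-(1 : ℝ)/2)) ^ h) *
          ∑ π : Circuit h n, ∫ ω, (∏ i : Fin h, x (lVal LX π i) ω) *
            (∏ i : Fin h, y (lVal LY π i) ω) ∂P := by
        rw [integral_finset_sum _ (fun π _ => hint π)]
    _ = ((n : ℝ) ^ (-(1 : ℝ) - (h : ℝ)/2)) *
          ∑ π : Circuit h n,
            (∫ ω, ∏ i : Fin h, x (lVal LX π i) ω ∂P) *
              (∫ ω, ∏ i : Fin h, y (lVal LY π i) ω ∂P) := by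
        rw [hc]
        congr 1
        exact Finset.sum_congr rfl fun π _ => hdec π
    _ = ((n : ℝ) ^ (-(1 : ℝ) - (h : ℝ) / 2)) *
          ∑ π ∈ (Finset.univ.filter fun π : Circuit h n =>
              (∃ i : Fin h,
                3 ≤ (Finset.univ.filter fun j : Fin h => lVal LX π j = lVal LX π i).card) ∨
              (∃ i : Fin h,
                3 ≤ (Finset.univ.filter fun j : Fin h => lVal LY π j = lVal LY π i).card)),
            (∫ ω, ∏ i : Fin h, x (lVal LX π i) ω ∂P) *
              (∫ ω, ∏ i : Fin h, y (lVal LY π i) ω ∂P) := by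
        congr 1
        exact (Finset.sum_filter_of_ne (fun π _ hne => by
          by_contra hnotin
          exact hne (hzero π (by simpa using hnotin)))).symm
end

section
/- Suppose the link functions L_X and L_Y satisfy Property B and the two input sequences satisfy Assumption (A1), all variables across both sequences being independent. Let X_n, Y_n be the corresponding patterned random matrices and Z_n = X_n ⊙ Y_n. Then for every h ≥ 1, Var(β_h(n^{-1/2} Z_n)) = O(n^{-1}); in particular Var(β_h(n^{-1/2} Z_n)) → 0 as n → ∞. -/
open MeasureTheory ProbabilityTheory Filter Finset
open scoped ENNReal

namespace S4

/-! ### Generic counting machinery for pairs of circuits -/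

section Counting

variable {F : Type*} [DecidableEq F] {n k : ℕ}

/-- pairs of circuits of length `k+1` on `Fin n` -/
abbrev Pi2 (n k : ℕ) := (Fin (k+1) → Fin n) × (Fin (k+1) → Fin n)

variable (L : Fin n → Fin n → F)

open Fin.NatCast

def val1 (p : Pi2 n k) (e : Fin (k+1)) : F := L (p.1 e) (p.1 (e+1))
def val2 (p : Pi2 n k) (e : Fin (k+1)) : F := L (p.2 e) (p.2 (e+1))

def mult (p : Pi2 n k) (v : F) : ℕ :=
  ((univ : Finset (Fin (k+1))).filter fun e => val1 L p e = v).card +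
  ((univ : Finset (Fin (k+1))).filter fun e => val2 L p e = v).card

def Matched (p : Pi2 n k) : Prop :=
  (∀ e, 2 ≤ mult L p (val1 L p e)) ∧ (∀ e, 2 ≤ mult L p (val2 L p e))

def Cross (p : Pi2 n k) : Prop := ∃ e e', val1 L p e = val2 L p e'

instance (p : Pi2 n k) : Decidable (Cross L p) := by unfold Cross; infer_instance
instance (p : Pi2 n k) : Decidable (Matched L p) := by unfold Matched; infer_instance

def pick {α : Type*} [LinearOrder α] (s : Finset α) (d : α) : α :=
  if hc : s.Nonempty then s.min' hc else d

lemma pick_mem {α : Type*} [LinearOrder α] {s : Finset α} (d : α) (hc : s.Nonempty) :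
    pick s d ∈ s := by
  rw [pick, dif_pos hc]; exact s.min'_mem hc

def cset1 (p : Pi2 n k) : Finset (Fin (k+1)) :=
  univ.filter fun e => ∃ e', val1 L p e = val2 L p e'

def rr (p : Pi2 n k) : Fin (k+1) := pick (cset1 L p) 0

def cset2 (p : Pi2 n k) : Finset (Fin (k+1)) :=
  univ.filter fun e => ∃ e', val2 L p e = val1 L p e'

def mm (p : Pi2 n k) : Fin (k+1) := pick (cset2 L p) 0

def qset (p : Pi2 n k) : Finset (Fin (k+1)) :=
  univ.filter fun c => val1 L p c = val2 L p (mm L p)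

def qq (p : Pi2 n k) : Fin (k+1) := pick (qset L p) 0

/-- the `t`-th generated vertex of the first circuit -/
def a1 (p : Pi2 n k) (t : ℕ) : Fin n := p.1 (rr L p + 1 + (t : Fin (k+1)))
/-- the `t`-th generated vertex of the second circuit -/
def a2 (p : Pi2 n k) (t : ℕ) : Fin n := p.2 (mm L p + (t : Fin (k+1)))
def ev1 (p : Pi2 n k) (t : ℕ) : F := val1 L p (rr L p + 1 + (t : Fin (k+1)))
def ev2 (p : Pi2 n k) (t : ℕ) : F := val2 L p (mm L p + (t : Fin (k+1)))

lemma ev1_eq (p : Pi2 n k) (t : ℕ) : ev1 L p t = L (a1 L p t) (a1 L p (t+1)) := by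
  unfold ev1 val1 a1
  have h : rr L p + 1 + (t : Fin (k+1)) + 1 = rr L p + 1 + ((t+1 : ℕ) : Fin (k+1)) := by
    rw [Nat.cast_succ, add_assoc]
  rw [h]

lemma ev2_eq (p : Pi2 n k) (t : ℕ) : ev2 L p t = L (a2 L p t) (a2 L p (t+1)) := by
  unfold ev2 val2 a2
  have h : mm L p + (t : Fin (k+1)) + 1 = mm L p + ((t+1 : ℕ) : Fin (k+1)) := by
    rw [Nat.cast_succ, add_assoc]
  rw [h]

def new1 (p : Pi2 n k) (j : ℕ) : Prop := ∀ i < j, ev1 L p i ≠ ev1 L p j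

def new2 (p : Pi2 n k) (j : ℕ) : Prop :=
  (∀ c, val1 L p c ≠ ev2 L p j) ∧ ∀ i < j, ev2 L p i ≠ ev2 L p j

instance (p : Pi2 n k) (j : ℕ) : Decidable (new1 L p j) := by unfold new1; infer_instance
instance (p : Pi2 n k) (j : ℕ) : Decidable (new2 L p j) := by unfold new2; infer_instance

variable (Δ : ℕ)

noncomputable def rowL (a : Fin n) (t : F) : List (Fin n) :=
  (((univ : Finset (Fin n))).filter fun b => L a b = t).toList

noncomputable def idxF (a : Fin n) (t : F) (b : Fin n) : Fin (Δ+1) :=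
  ⟨min ((rowL L a t).idxOf b) Δ, by omega⟩

lemma row_decode (hB : ∀ (a : Fin n) (t : F),
      (((univ : Finset (Fin n))).filter fun b => L a b = t).card ≤ Δ)
    (a : Fin n) (t : F) (b : Fin n) (hb : L a b = t) (junk : Fin n) :
    (rowL L a t).getD (idxF L Δ a t b).val junk = b := by
  have hmem : b ∈ rowL L a t := by
    simp only [rowL, Finset.mem_toList, Finset.mem_filter, Finset.mem_univ, true_and]
    exact hb
  have hlt : (rowL L a t).idxOf b < (rowL L a t).length := List.idxOf_lt_length_iff.2 hmem
  have hlen : (rowL L a t).length ≤ Δ := by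
    simpa [rowL, Finset.length_toList] using hB a t
  have hidx : (idxF L Δ a t b).val = (rowL L a t).idxOf b := by
    simp only [idxF]
    omega
  rw [hidx, List.getD_eq_getElem _ _ hlt]
  exact List.getElem_idxOf hlt

def pset1 (p : Pi2 n k) (j : ℕ) : Finset (Fin (k+1)) :=
  univ.filter fun i => i.val < j ∧ ev1 L p i.val = ev1 L p j

def ptr1 (p : Pi2 n k) (j : ℕ) : Fin (k+1) := pick (pset1 L p j) 0

noncomputable def st1 (p : Pi2 n k) (j : ℕ) : Option (Fin (Δ+1) × Fin (k+1)) :=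
  if j < k ∧ ¬ new1 L p j then
    some (idxF L Δ (a1 L p j) (ev1 L p (ptr1 L p j).val) (a1 L p (j+1)), ptr1 L p j)
  else none

def qset2 (p : Pi2 n k) (j : ℕ) : Finset (Fin (k+1)) :=
  univ.filter fun c => val1 L p c = ev2 L p j

def pset2 (p : Pi2 n k) (j : ℕ) : Finset (Fin (k+1)) :=
  univ.filter fun i => i.val < j ∧ ev2 L p i.val = ev2 L p j

def pcase2 (p : Pi2 n k) (j : ℕ) : Fin (k+1) ⊕ Fin (k+1) :=
  if (qset2 L p j).Nonempty then Sum.inl (pick (qset2 L p j) 0)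
  else Sum.inr (pick (pset2 L p j) 0)

def pval2 (p : Pi2 n k) (j : ℕ) : F :=
  match pcase2 L p j with
  | Sum.inl c => val1 L p c
  | Sum.inr i => ev2 L p i.val

noncomputable def st2 (p : Pi2 n k) (j : ℕ) : Option (Fin (Δ+1) × (Fin (k+1) ⊕ Fin (k+1))) :=
  if 1 ≤ j ∧ j < k ∧ ¬ new2 L p j then
    some (idxF L Δ (a2 L p j) (pval2 L p j) (a2 L p (j+1)), pcase2 L p j)
  else none

abbrev SH (k Δ : ℕ) := (Fin (k+1) × Fin (k+1) × Fin (k+1)) × Fin (Δ+1)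
  × (Fin (k+1) → Option (Fin (Δ+1) × Fin (k+1)))
  × (Fin (k+1) → Option (Fin (Δ+1) × (Fin (k+1) ⊕ Fin (k+1))))

noncomputable def Phi (p : Pi2 n k) : SH k Δ :=
  ((rr L p, mm L p, qq L p),
   idxF L Δ (a2 L p 0) (val1 L p (qq L p)) (a2 L p 1),
   fun jf => st1 L Δ p jf.val, fun jf => st2 L Δ p jf.val)

lemma st1_none_iff (p : Pi2 n k) (j : ℕ) (hj : j < k) :
    st1 L Δ p j = none ↔ new1 L p j := by
  unfold st1
  by_cases hnew : new1 L p j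
  · simp [hj, hnew]
  · simp [hj, hnew]

lemma st2_none_iff (p : Pi2 n k) (j : ℕ) (hj1 : 1 ≤ j) (hj : j < k) :
    st2 L Δ p j = none ↔ new2 L p j := by
  unfold st2
  by_cases hnew : new2 L p j
  · simp [hj1, hj, hnew]
  · simp [hj1, hj, hnew]

lemma pset1_nonempty (p : Pi2 n k) {j : ℕ} (hj : j < k) (hold : ¬ new1 L p j) :
    (pset1 L p j).Nonempty := by
  unfold new1 at hold
  push_neg at hold
  obtain ⟨i, hij, hev⟩ := hold
  exact ⟨⟨i, by omega⟩, by simpa [pset1] using ⟨hij, hev⟩⟩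

lemma decode1 (hB : ∀ (a : Fin n) (t : F),
      (((univ : Finset (Fin n))).filter fun b => L a b = t).card ≤ Δ)
    (p : Pi2 n k) (j : ℕ) (hj : j < k) (hold : ¬ new1 L p j) (junk : Fin n) :
    a1 L p (j+1) = (rowL L (a1 L p j) (ev1 L p (ptr1 L p j).val)).getD
        (idxF L Δ (a1 L p j) (ev1 L p (ptr1 L p j).val) (a1 L p (j+1))).val junk := by
  have hmem : ptr1 L p j ∈ pset1 L p j := pick_mem 0 (pset1_nonempty L p hj hold)
  rw [pset1, mem_filter] at hmem
  have hb : L (a1 L p j) (a1 L p (j+1)) = ev1 L p (ptr1 L p j).val := by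
    rw [hmem.2.2]; exact (ev1_eq L p j).symm
  exact (row_decode L Δ hB _ _ _ hb junk).symm

lemma mm_mem (p : Pi2 n k) (hc : Cross L p) : ∃ e', val2 L p (mm L p) = val1 L p e' := by
  obtain ⟨e, e', hee⟩ := hc
  have hne : (cset2 L p).Nonempty := ⟨e', by simpa [cset2] using ⟨e, hee.symm⟩⟩
  have := pick_mem 0 hne
  rw [cset2, mem_filter] at this
  exact this.2

lemma qq_spec (p : Pi2 n k) (hc : Cross L p) : val1 L p (qq L p) = val2 L p (mm L p) := by
  obtain ⟨e', he'⟩ := mm_mem L p hc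
  have hne : (qset L p).Nonempty := ⟨e', by simpa [qset] using he'.symm⟩
  have := pick_mem 0 hne
  rw [qset, mem_filter] at this
  exact this.2

lemma ev2_zero (p : Pi2 n k) : ev2 L p 0 = val2 L p (mm L p) := by
  unfold ev2
  norm_num

lemma decode2start (hB : ∀ (a : Fin n) (t : F),
      (((univ : Finset (Fin n))).filter fun b => L a b = t).card ≤ Δ)
    (p : Pi2 n k) (hc : Cross L p) (junk : Fin n) :
    a2 L p 1 = (rowL L (a2 L p 0) (val1 L p (qq L p))).getD
        (idxF L Δ (a2 L p 0) (val1 L p (qq L p)) (a2 L p 1)).val junk := by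
  have hb : L (a2 L p 0) (a2 L p 1) = val1 L p (qq L p) := by
    rw [qq_spec L p hc, ← ev2_zero]; exact (ev2_eq L p 0).symm
  exact (row_decode L Δ hB _ _ _ hb junk).symm

lemma pval2_spec (p : Pi2 n k) {j : ℕ} (hj : j < k) (hold : ¬ new2 L p j) :
    pval2 L p j = ev2 L p j := by
  unfold pval2 pcase2
  by_cases hq : (qset2 L p j).Nonempty
  · simp only [hq, if_true]
    have := pick_mem 0 hq
    rw [qset2, mem_filter] at this
    exact this.2
  · simp only [hq, if_false]
    have hne : (pset2 L p j).Nonempty := by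
      unfold new2 at hold
      push_neg at hold
      have hA : ∀ c, val1 L p c ≠ ev2 L p j := by
        intro c hcv
        exact hq ⟨c, by simpa [qset2] using hcv⟩
      obtain ⟨i, hij, hev⟩ := hold hA
      exact ⟨⟨i, by omega⟩, by simpa [pset2] using ⟨hij, hev⟩⟩
    have := pick_mem 0 hne
    rw [pset2, mem_filter] at this
    exact this.2.2

lemma decode2 (hB : ∀ (a : Fin n) (t : F),
      (((univ : Finset (Fin n))).filter fun b => L a b = t).card ≤ Δ)
    (p : Pi2 n k) (j : ℕ) (hj : j < k) (hold : ¬ new2 L p j) (junk : Fin n) :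
    a2 L p (j+1) = (rowL L (a2 L p j) (pval2 L p j)).getD
        (idxF L Δ (a2 L p j) (pval2 L p j) (a2 L p (j+1))).val junk := by
  have hb : L (a2 L p j) (a2 L p (j+1)) = pval2 L p j := by
    rw [pval2_spec L p hj hold]; exact (ev2_eq L p j).symm
  exact (row_decode L Δ hB _ _ _ hb junk).symm

lemma claimA (hB : ∀ (a : Fin n) (t : F),
      (((univ : Finset (Fin n))).filter fun b => L a b = t).card ≤ Δ)
    (p q : Pi2 n k)
    (hst1 : ∀ j : ℕ, j < k → st1 L Δ p j = st1 L Δ q j)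
    (hs0 : a1 L p 0 = a1 L q 0)
    (hvec1 : ∀ j : ℕ, j < k → new1 L p j → a1 L p (j+1) = a1 L q (j+1)) :
    ∀ t, t ≤ k → a1 L p t = a1 L q t := by
  intro t
  induction t using Nat.strong_induction_on with
  | _ t ih =>
    intro ht
    cases t with
    | zero => exact hs0
    | succ j =>
      have hjk : j < k := by omega
      by_cases hnew : new1 L p j
      · exact hvec1 j hjk hnew
      · have hnq : ¬ new1 L q j := by
          rw [← st1_none_iff L Δ q j hjk, ← hst1 j hjk, st1_none_iff L Δ p j hjk]
          exact hnew
        have hsome := hst1 j hjk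
        rw [st1, st1, if_pos (And.intro hjk hnew), if_pos (And.intro hjk hnq),
          Option.some_inj, Prod.mk.injEq] at hsome
        obtain ⟨hidx, hptr⟩ := hsome
        have hmem : ptr1 L p j ∈ pset1 L p j := pick_mem 0 (pset1_nonempty L p hjk hnew)
        rw [pset1, mem_filter] at hmem
        have hlt : (ptr1 L p j).val < j := hmem.2.1
        have e1 : a1 L p j = a1 L q j := ih j (by omega) (by omega)
        have ev : ev1 L p (ptr1 L p j).val = ev1 L q (ptr1 L q j).val := by
          rw [← hptr, ev1_eq, ev1_eq, ih (ptr1 L p j).val (by omega) (by omega),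
            ih ((ptr1 L p j).val + 1) (by omega) (by omega)]
        rw [decode1 L Δ hB p j hjk hnew (a1 L p 0),
          decode1 L Δ hB q j hjk hnq (a1 L p 0), ← hidx, ← e1, ← ev]

lemma pval2_eq (p q : Pi2 n k) {j : ℕ} (hj : j < k) (hold : ¬ new2 L p j)
    (hpc : pcase2 L p j = pcase2 L q j)
    (hv1 : ∀ c, val1 L p c = val1 L q c)
    (hev : ∀ i : ℕ, i < j → ev2 L p i = ev2 L q i) :
    pval2 L p j = pval2 L q j := by
  unfold pval2
  rw [← hpc]
  rcases hc' : pcase2 L p j with c | i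
  · simp only []
    exact hv1 c
  · simp only []
    unfold pcase2 at hc'
    by_cases hq : (qset2 L p j).Nonempty
    · rw [if_pos hq] at hc'; cases hc'
    · rw [if_neg hq] at hc'
      injection hc' with hi
      have hne : (pset2 L p j).Nonempty := by
        unfold new2 at hold
        push_neg at hold
        have hA : ∀ c, val1 L p c ≠ ev2 L p j := by
          intro c hcv
          exact hq ⟨c, by simpa [qset2] using hcv⟩
        obtain ⟨i', hij, hev'⟩ := hold hA
        exact ⟨⟨i', by omega⟩, by simpa [pset2] using ⟨hij, hev'⟩⟩
      have hm := pick_mem 0 hne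
      rw [pset2, mem_filter] at hm
      rw [← hi]
      exact hev _ hm.2.1

lemma claimB (hB : ∀ (a : Fin n) (t : F),
      (((univ : Finset (Fin n))).filter fun b => L a b = t).card ≤ Δ)
    (p q : Pi2 n k) (hcp : Cross L p) (hcq : Cross L q)
    (heq1 : p.1 = q.1) (hmmeq : mm L p = mm L q) (hqqeq : qq L p = qq L q)
    (hidx' : idxF L Δ (a2 L p 0) (val1 L p (qq L p)) (a2 L p 1)
           = idxF L Δ (a2 L q 0) (val1 L q (qq L q)) (a2 L q 1))
    (hst2 : ∀ j : ℕ, j < k → st2 L Δ p j = st2 L Δ q j)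
    (hs0 : a2 L p 0 = a2 L q 0)
    (hvec2 : ∀ j : ℕ, 1 ≤ j → j < k → new2 L p j → a2 L p (j+1) = a2 L q (j+1)) :
    ∀ t, t ≤ k → a2 L p t = a2 L q t := by
  have hv1 : ∀ c, val1 L p c = val1 L q c := by
    intro c; unfold val1; rw [heq1]
  intro t
  induction t using Nat.strong_induction_on with
  | _ t ih =>
    intro ht
    cases t with
    | zero => exact hs0
    | succ j =>
      cases j with
      | zero =>
        have hval : val1 L p (qq L p) = val1 L q (qq L q) := by
          rw [hv1, hqqeq]
        rw [decode2start L Δ hB p hcp (a2 L p 0), decode2start L Δ hB q hcq (a2 L p 0),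
          ← hidx', ← hs0, ← hval]
      | succ i =>
        have hjk : i + 1 < k := by omega
        have hnewiff : new2 L p (i+1) ↔ new2 L q (i+1) := by
          rw [← st2_none_iff L Δ p (i+1) (by omega) hjk,
            ← st2_none_iff L Δ q (i+1) (by omega) hjk, hst2 (i+1) hjk]
        by_cases hnew : new2 L p (i+1)
        · exact hvec2 (i+1) (by omega) hjk hnew
        · have hnq : ¬ new2 L q (i+1) := fun hq' => hnew (hnewiff.2 hq')
          have hsome := hst2 (i+1) hjk
          rw [st2, st2, if_pos (And.intro (by omega) (And.intro hjk hnew)),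
            if_pos (And.intro (by omega) (And.intro hjk hnq)),
            Option.some_inj, Prod.mk.injEq] at hsome
          obtain ⟨hidx, hpc⟩ := hsome
          have e1 : a2 L p (i+1) = a2 L q (i+1) := ih (i+1) (by omega) (by omega)
          have hpv : pval2 L p (i+1) = pval2 L q (i+1) := by
            refine pval2_eq L p q hjk hnew hpc hv1 ?_
            intro i' hi'
            rw [ev2_eq, ev2_eq, ih i' (by omega) (by omega), ih (i'+1) (by omega) (by omega)]
          rw [decode2 L Δ hB p (i+1) hjk hnew (a2 L p 0),
            decode2 L Δ hB q (i+1) hjk hnq (a2 L p 0), ← hidx, ← e1, ← hpv]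

lemma eq_fst (p q : Pi2 n k) (hrr : rr L p = rr L q)
    (h : ∀ t, t ≤ k → a1 L p t = a1 L q t) : p.1 = q.1 := by
  funext l
  have hkey : ∀ (z : Pi2 n k), z.1 l = a1 L z ((l - (rr L z + 1)).val) := by
    intro z
    unfold a1
    congr 1
    rw [Fin.cast_val_eq_self, add_comm (rr L z + 1), sub_add_cancel]
  rw [hkey p, hkey q, hrr, h _ (by omega)]

lemma eq_snd (p q : Pi2 n k) (hmmeq : mm L p = mm L q)
    (h : ∀ t, t ≤ k → a2 L p t = a2 L q t) : p.2 = q.2 := by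
  funext l
  have hkey : ∀ (z : Pi2 n k), z.2 l = a2 L z ((l - mm L z).val) := by
    intro z
    unfold a2
    congr 1
    rw [Fin.cast_val_eq_self, add_comm (mm L z), sub_add_cancel]
  rw [hkey p, hkey q, hmmeq, h _ (by omega)]

/-- The key combinatorial budget : at most `k` "new" generating steps. -/
lemma budget (p : Pi2 n k) (hm : Matched L p) (hc : Cross L p) :
    ((univ : Finset (Fin (k+1))).filter fun j => j.val < k ∧ new1 L p j.val).card
  + ((univ : Finset (Fin (k+1))).filter fun j => 1 ≤ j.val ∧ j.val < k ∧ new2 L p j.val).card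
    ≤ k := by
  classical
  set S1 := (univ : Finset (Fin (k+1))).filter fun j => j.val < k ∧ new1 L p j.val with hS1
  set S2 := (univ : Finset (Fin (k+1))).filter
      fun j => 1 ≤ j.val ∧ j.val < k ∧ new2 L p j.val with hS2
  set A := ((univ : Finset (Fin (k+1))).image (val1 L p))
    ∪ ((univ : Finset (Fin (k+1))).image (val2 L p)) with hA
  -- injectivity of the value maps on S1 and S2
  have hinj1 : Set.InjOn (fun j : Fin (k+1) => ev1 L p j.val) S1 := by
    intro j hj j' hj' hval
    simp only [hS1, coe_filter, Set.mem_setOf_eq, mem_univ, true_and] at hj hj'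
    by_contra hne
    rcases Nat.lt_or_ge j.val j'.val with hlt | hge
    · exact hj'.2 j.val hlt hval
    · have hlt : j'.val < j.val := by
        rcases Nat.lt_or_ge j'.val j.val with h' | h''
        · exact h'
        · exact absurd (Fin.ext (by omega)) hne
      exact hj.2 j'.val hlt hval.symm
  have hinj2 : Set.InjOn (fun j : Fin (k+1) => ev2 L p j.val) S2 := by
    intro j hj j' hj' hval
    simp only [hS2, coe_filter, Set.mem_setOf_eq, mem_univ, true_and] at hj hj'
    by_contra hne
    rcases Nat.lt_or_ge j.val j'.val with hlt | hge
    · exact hj'.2.2.2 j.val hlt hval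
    · have hlt : j'.val < j.val := by
        rcases Nat.lt_or_ge j'.val j.val with h' | h''
        · exact h'
        · exact absurd (Fin.ext (by omega)) hne
      exact hj.2.2.2 j'.val hlt hval.symm
  have hcard1 : (S1.image fun j : Fin (k+1) => ev1 L p j.val).card = S1.card :=
    Finset.card_image_of_injOn hinj1
  have hcard2 : (S2.image fun j : Fin (k+1) => ev2 L p j.val).card = S2.card :=
    Finset.card_image_of_injOn hinj2
  -- disjointness of the two images
  have hdisj : Disjoint (S1.image fun j : Fin (k+1) => ev1 L p j.val)
      (S2.image fun j : Fin (k+1) => ev2 L p j.val) := by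
    rw [Finset.disjoint_left]
    intro v hv1 hv2
    rw [Finset.mem_image] at hv1 hv2
    obtain ⟨j1, hj1, hv1'⟩ := hv1
    obtain ⟨j2, hj2, hv2'⟩ := hv2
    simp only [hS2, mem_filter] at hj2
    exact hj2.2.2.2.1 (rr L p + 1 + ((j1.val : ℕ) : Fin (k+1))) (hv1'.trans hv2'.symm)
  -- both images land in A
  have hsub1 : (S1.image fun j : Fin (k+1) => ev1 L p j.val) ⊆ A := by
    intro v hv
    rw [Finset.mem_image] at hv
    obtain ⟨j1, _, hv'⟩ := hv
    exact Finset.mem_union_left _ (Finset.mem_image.2 ⟨_, mem_univ _, hv'⟩)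
  have hsub2 : (S2.image fun j : Fin (k+1) => ev2 L p j.val) ⊆ A := by
    intro v hv
    rw [Finset.mem_image] at hv
    obtain ⟨j2, _, hv'⟩ := hv
    exact Finset.mem_union_right _ (Finset.mem_image.2 ⟨_, mem_univ _, hv'⟩)
  have hkey : S1.card + S2.card
      = ((S1.image fun j : Fin (k+1) => ev1 L p j.val)
        ∪ (S2.image fun j : Fin (k+1) => ev2 L p j.val)).card := by
    rw [Finset.card_union_of_disjoint hdisj, hcard1, hcard2]
  -- fiberwise counting : the multiplicities over A sum to 2(k+1)
  have hfib1 : ∑ v ∈ A, ((univ : Finset (Fin (k+1))).filter fun e => val1 L p e = v).card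
      = k + 1 := by
    rw [← Finset.card_eq_sum_card_fiberwise (fun e _ => Finset.mem_union_left _
      (Finset.mem_image.2 ⟨e, mem_univ _, rfl⟩)), Finset.card_univ, Fintype.card_fin]
  have hfib2 : ∑ v ∈ A, ((univ : Finset (Fin (k+1))).filter fun e => val2 L p e = v).card
      = k + 1 := by
    rw [← Finset.card_eq_sum_card_fiberwise (fun e _ => Finset.mem_union_right _
      (Finset.mem_image.2 ⟨e, mem_univ _, rfl⟩)), Finset.card_univ, Fintype.card_fin]
  have hsumA : ∑ v ∈ A, mult L p v = 2 * (k+1) := by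
    unfold mult
    rw [Finset.sum_add_distrib, hfib1, hfib2]
    ring
  have hge2 : ∀ v ∈ A, 2 ≤ mult L p v := by
    intro v hv
    rcases Finset.mem_union.1 hv with hv' | hv' <;>
      · rw [Finset.mem_image] at hv'
        obtain ⟨e, _, he⟩ := hv'
        subst he
        first
          | exact hm.1 e
          | exact hm.2 e
  have hAle : A.card ≤ k + 1 := by
    have h2A : A.card * 2 ≤ ∑ v ∈ A, mult L p v := by
      calc A.card * 2 = ∑ _v ∈ A, 2 := by rw [Finset.sum_const, smul_eq_mul]
      _ ≤ _ := Finset.sum_le_sum hge2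
    omega
  rcases Nat.lt_or_ge A.card (k+1) with hAlt | hge
  · have := Finset.card_le_card (Finset.union_subset hsub1 hsub2)
    omega
  · have hAcard : A.card = k + 1 := le_antisymm hAle hge
    have hall2 : ∀ v ∈ A, mult L p v = 2 := by
      by_contra hno
      push_neg at hno
      obtain ⟨v0, hv0, hne⟩ := hno
      have h3 : 2 < mult L p v0 := lt_of_le_of_ne (hge2 v0 hv0) (Ne.symm hne)
      have hlt : ∑ _v ∈ A, 2 < ∑ v ∈ A, mult L p v :=
        Finset.sum_lt_sum (fun i hi => hge2 i hi) ⟨v0, hv0, h3⟩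
      rw [Finset.sum_const, smul_eq_mul, hAcard, hsumA] at hlt
      omega
    have hrmem : rr L p ∈ cset1 L p := by
      obtain ⟨e, e', hee⟩ := hc
      exact pick_mem 0 ⟨e, by simpa [cset1] using ⟨e', hee⟩⟩
    rw [cset1, mem_filter] at hrmem
    obtain ⟨-, e', he'⟩ := hrmem
    set vstar := val1 L p (rr L p) with hvstar
    have hvA : vstar ∈ A := Finset.mem_union_left _ (Finset.mem_image.2 ⟨_, mem_univ _, rfl⟩)
    have hc2 : 0 < ((univ : Finset (Fin (k+1))).filter fun e => val2 L p e = vstar).card := by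
      refine Finset.card_pos.2 ⟨e', ?_⟩
      rw [mem_filter]
      exact ⟨mem_univ _, he'.symm⟩
    have hc1 : rr L p ∈ (univ : Finset (Fin (k+1))).filter fun e => val1 L p e = vstar := by
      rw [mem_filter]
      exact ⟨mem_univ _, rfl⟩
    have hmv : mult L p vstar = 2 := hall2 _ hvA
    have hc1card : ((univ : Finset (Fin (k+1))).filter fun e => val1 L p e = vstar).card = 1 := by
      unfold mult at hmv
      have := Finset.card_pos.2 ⟨rr L p, hc1⟩
      omega
    have hsing : ((univ : Finset (Fin (k+1))).filter fun e => val1 L p e = vstar) = {rr L p} := by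
      obtain ⟨a, ha⟩ := Finset.card_eq_one.1 hc1card
      rw [ha] at hc1 ⊢
      rw [Finset.mem_singleton] at hc1
      rw [hc1]
    have hshift : ∀ j : ℕ, j < k → rr L p + 1 + (j : Fin (k+1)) ≠ rr L p := by
      intro j hj heq
      have hk1 : 1 ≤ k := by omega
      have h0 : rr L p + (1 + (j : Fin (k+1))) = rr L p + 0 := by
        rw [← add_assoc, heq, add_zero]
      have h1 : (1 : Fin (k+1)) + (j : Fin (k+1)) = 0 := add_left_cancel h0
      have h2 := congrArg Fin.val h1
      rw [Fin.val_add, Fin.val_one', Fin.val_natCast] at h2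
      rw [Nat.mod_eq_of_lt (by omega : 1 < k+1), Nat.mod_eq_of_lt (by omega : j < k+1),
        Nat.mod_eq_of_lt (by omega : 1 + j < k+1)] at h2
      simp at h2
    have hnot1 : vstar ∉ S1.image fun j : Fin (k+1) => ev1 L p j.val := by
      rw [Finset.mem_image]
      rintro ⟨j, hj, hv⟩
      simp only [hS1, mem_filter, mem_univ, true_and] at hj
      have hmem : (rr L p + 1 + ((j.val : ℕ) : Fin (k+1))) ∈
          (univ : Finset (Fin (k+1))).filter fun e => val1 L p e = vstar := by
        rw [mem_filter]
        exact ⟨mem_univ _, hv⟩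
      rw [hsing, Finset.mem_singleton] at hmem
      exact hshift j.val hj.1 hmem
    have hnot2 : vstar ∉ S2.image fun j : Fin (k+1) => ev2 L p j.val := by
      rw [Finset.mem_image]
      rintro ⟨j, hj, hv⟩
      simp only [hS2, mem_filter, mem_univ, true_and] at hj
      exact hj.2.2.1 (rr L p) hv.symm
    have hsubE : (S1.image fun j : Fin (k+1) => ev1 L p j.val)
        ∪ (S2.image fun j : Fin (k+1) => ev2 L p j.val) ⊆ A.erase vstar := by
      intro v hv
      rw [Finset.mem_erase]
      constructor
      · rintro rfl
        rcases Finset.mem_union.1 hv with h' | h'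
        · exact hnot1 h'
        · exact hnot2 h'
      · rcases Finset.mem_union.1 hv with h' | h'
        · exact hsub1 h'
        · exact hsub2 h'
    have hle := Finset.card_le_card hsubE
    rw [Finset.card_erase_of_mem hvA] at hle
    omega

theorem count_main (hB : ∀ (a : Fin n) (t : F),
      (((univ : Finset (Fin n))).filter fun b => L a b = t).card ≤ Δ) :
    (((univ : Finset (Pi2 n k))).filter fun p => Matched L p ∧ Cross L p).card
      ≤ Fintype.card (SH k Δ) * n ^ (k+2) := by
  classical
  set G := ((univ : Finset (Pi2 n k))).filter (fun p => Matched L p ∧ Cross L p) with hG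
  rw [Finset.card_eq_sum_card_fiberwise
    (f := Phi L Δ) (t := (univ : Finset (SH k Δ))) (fun p _ => mem_univ _)]
  have hfib : ∀ sh ∈ (univ : Finset (SH k Δ)),
      (G.filter fun p => Phi L Δ p = sh).card ≤ n ^ (k+2) := by
    intro sh _
    by_cases hne : (G.filter fun p => Phi L Δ p = sh).Nonempty
    swap
    · rw [Finset.not_nonempty_iff_eq_empty.1 hne]
      simp
    obtain ⟨p0, hp00⟩ := hne
    have hp0 := hp00
    rw [mem_filter, hG, mem_filter] at hp0
    obtain ⟨⟨-, hm0, hc0⟩, hsh0⟩ := hp0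
    have hn1 : 1 ≤ n := (p0.1 0).pos
    have hcard := Finset.card_le_card_of_injOn
      (s := G.filter fun p => Phi L Δ p = sh)
      (f := fun p : Pi2 n k => ((a1 L p 0, a2 L p 0,
        (fun j : {j : Fin (k+1) // j.val < k ∧ new1 L p0 j.val} => a1 L p (j.val.val + 1)),
        (fun j : {j : Fin (k+1) // 1 ≤ j.val ∧ j.val < k ∧ new2 L p0 j.val} =>
          a2 L p (j.val.val + 1))) :
        Fin n × Fin n × ({j : Fin (k+1) // j.val < k ∧ new1 L p0 j.val} → Fin n)
          × ({j : Fin (k+1) // 1 ≤ j.val ∧ j.val < k ∧ new2 L p0 j.val} → Fin n)))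
      (t := univ) (fun p _ => mem_univ _) ?_
    · refine le_trans hcard ?_
      rw [Finset.card_univ, Fintype.card_prod, Fintype.card_prod, Fintype.card_prod,
        Fintype.card_fun, Fintype.card_fun, Fintype.card_fin, Fintype.card_subtype,
        Fintype.card_subtype]
      have hbud := budget L p0 hm0 hc0
      set a := ((univ : Finset (Fin (k+1))).filter fun j => j.val < k ∧ new1 L p0 j.val).card
      set b := ((univ : Finset (Fin (k+1))).filter
        fun j => 1 ≤ j.val ∧ j.val < k ∧ new2 L p0 j.val).card
      calc n * (n * (n ^ a * n ^ b)) = n ^ (a + b + 2) := by ring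
      _ ≤ n ^ (k + 2) := Nat.pow_le_pow_right hn1 (by omega)
    · intro p hp q hq hPsi
      rw [mem_coe, mem_filter, hG, mem_filter] at hp hq
      obtain ⟨⟨-, hmp, hcp⟩, hshp⟩ := hp
      obtain ⟨⟨-, hmq, hcq⟩, hshq⟩ := hq
      have hPhi : Phi L Δ p = Phi L Δ q := hshp.trans hshq.symm
      have hPhi0 : Phi L Δ p = Phi L Δ p0 := hshp.trans hsh0.symm
      have hrr : rr L p = rr L q := congrArg (fun s : SH k Δ => s.1.1) hPhi
      have hmmeq : mm L p = mm L q := congrArg (fun s : SH k Δ => s.1.2.1) hPhi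
      have hqqeq : qq L p = qq L q := congrArg (fun s : SH k Δ => s.1.2.2) hPhi
      have hst1 : ∀ j : ℕ, j < k → st1 L Δ p j = st1 L Δ q j := fun j hj =>
        congrFun (congrArg (fun s : SH k Δ => s.2.2.1) hPhi) (⟨j, by omega⟩ : Fin (k+1))
      have hst2 : ∀ j : ℕ, j < k → st2 L Δ p j = st2 L Δ q j := fun j hj =>
        congrFun (congrArg (fun s : SH k Δ => s.2.2.2) hPhi) (⟨j, by omega⟩ : Fin (k+1))
      have hst10 : ∀ j : ℕ, j < k → st1 L Δ p j = st1 L Δ p0 j := fun j hj =>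
        congrFun (congrArg (fun s : SH k Δ => s.2.2.1) hPhi0) (⟨j, by omega⟩ : Fin (k+1))
      have hst20 : ∀ j : ℕ, j < k → st2 L Δ p j = st2 L Δ p0 j := fun j hj =>
        congrFun (congrArg (fun s : SH k Δ => s.2.2.2) hPhi0) (⟨j, by omega⟩ : Fin (k+1))
      have hs1 : a1 L p 0 = a1 L q 0 := congrArg (fun z => z.1) hPsi
      have hs2 : a2 L p 0 = a2 L q 0 := congrArg (fun z => z.2.1) hPsi
      have hvec1 : ∀ j : ℕ, j < k → new1 L p j → a1 L p (j+1) = a1 L q (j+1) := by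
        intro j hj hnew
        have hj0 : new1 L p0 j := by
          rw [← st1_none_iff L Δ p0 j hj, ← hst10 j hj, st1_none_iff L Δ p j hj]
          exact hnew
        exact congrFun (congrArg (fun z => z.2.2.1) hPsi)
          (⟨⟨j, by omega⟩, ⟨hj, hj0⟩⟩ : {j : Fin (k+1) // j.val < k ∧ new1 L p0 j.val})
      have hvec2 : ∀ j : ℕ, 1 ≤ j → j < k → new2 L p j → a2 L p (j+1) = a2 L q (j+1) := by
        intro j hj1 hj hnew
        have hj0 : new2 L p0 j := by
          rw [← st2_none_iff L Δ p0 j hj1 hj, ← hst20 j hj, st2_none_iff L Δ p j hj1 hj]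
          exact hnew
        exact congrFun (congrArg (fun z => z.2.2.2) hPsi)
          (⟨⟨j, by omega⟩, ⟨hj1, hj, hj0⟩⟩ :
            {j : Fin (k+1) // 1 ≤ j.val ∧ j.val < k ∧ new2 L p0 j.val})
      have ha1 := claimA L Δ hB p q hst1 hs1 hvec1
      have heq1 : p.1 = q.1 := eq_fst L p q hrr ha1
      have hidx' : idxF L Δ (a2 L p 0) (val1 L p (qq L p)) (a2 L p 1)
          = idxF L Δ (a2 L q 0) (val1 L q (qq L q)) (a2 L q 1) :=
        congrArg (fun s : SH k Δ => s.2.1) hPhi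
      have ha2 := claimB L Δ hB p q hcp hcq heq1 hmmeq hqqeq hidx' hst2 hs2 hvec2
      have heq2 : p.2 = q.2 := eq_snd L p q hmmeq ha2
      exact Prod.ext heq1 heq2
  calc ∑ sh ∈ (univ : Finset (SH k Δ)), (G.filter fun p => Phi L Δ p = sh).card
      ≤ (univ : Finset (SH k Δ)).card * n ^ (k+2) := by
        refine le_trans (Finset.sum_le_card_nsmul _ _ (n ^ (k+2)) hfib) ?_
        rw [smul_eq_mul]
  _ = Fintype.card (SH k Δ) * n ^ (k+2) := by rw [Finset.card_univ]

end Counting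

/-! ### Probability part -/

section Analysis

open MeasureTheory ProbabilityTheory

variable {Ω : Type*} [MeasurableSpace Ω] {P : Measure Ω} [IsProbabilityMeasure P]

lemma integrable_of_bdd {f : Ω → ℝ} {C : ℝ} (hf : Measurable f) (hC : ∀ ω, |f ω| ≤ C) :
    Integrable f P :=
  (integrable_const C).mono' hf.aestronglyMeasurable
    (Filter.Eventually.of_forall (by simpa [Real.norm_eq_abs] using hC))

variable {κ : Type*} {V : κ → Ω → ℝ}

lemma integrable_prod_bdd {s : Finset κ} {M : κ → ℕ} {C : κ → ℝ}
    (hmeas : ∀ i, Measurable (V i)) (hC : ∀ i ω, |V i ω| ≤ C i) :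
    Integrable (fun ω => ∏ i ∈ s, (V i ω) ^ (M i)) P := by
  refine integrable_of_bdd (C := ∏ i ∈ s, |C i| ^ (M i)) ?_ ?_
  · exact Finset.measurable_prod s fun i _ => (hmeas i).pow_const (M i)
  · intro ω
    rw [Finset.abs_prod]
    refine Finset.prod_le_prod (fun i _ => abs_nonneg _) (fun i _ => ?_)
    rw [abs_pow]
    exact pow_le_pow_left₀ (abs_nonneg _) ((hC i ω).trans (le_abs_self _)) _

lemma integral_prod_pow_of_indep
    (hind : iIndepFun V P)
    (hmeas : ∀ i, Measurable (V i)) {C : κ → ℝ} (hC : ∀ i ω, |V i ω| ≤ C i)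
    (M : κ → ℕ) (s : Finset κ) :
    ∫ ω, (∏ i ∈ s, (V i ω) ^ (M i)) ∂P = ∏ i ∈ s, ∫ ω, (V i ω) ^ (M i) ∂P := by
  classical
  have hind' : iIndepFun
      (fun i => (fun r => r ^ (M i)) ∘ V i) P :=
    hind.comp _ (fun i => measurable_id.pow_const (M i))
  induction s using Finset.cons_induction with
  | empty => simp
  | cons a s ha ih =>
    have hmeas' : ∀ i, Measurable ((fun r => r ^ (M i)) ∘ V i) :=
      fun i => (hmeas i).pow_const (M i)
    have hindep : IndepFun (∏ j ∈ s, (fun r => r ^ (M j)) ∘ V j)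
        ((fun r => r ^ (M a)) ∘ V a) P :=
      hind'.indepFun_finsetProd_of_notMem hmeas' ha
    have hint1 : Integrable ((fun r => r ^ (M a)) ∘ V a) P := by
      refine integrable_of_bdd ((hmeas a).pow_const (M a)) (C := |C a| ^ (M a)) ?_
      intro ω
      rw [Function.comp_apply, abs_pow]
      exact pow_le_pow_left₀ (abs_nonneg _) ((hC a ω).trans (le_abs_self _)) _
    have hint2 : Integrable (∏ j ∈ s, (fun r => r ^ (M j)) ∘ V j) P := by
      have : (∏ j ∈ s, (fun r => r ^ (M j)) ∘ V j) = fun ω => ∏ j ∈ s, (V j ω) ^ (M j) := by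
        funext ω
        simp [Finset.prod_apply]
      rw [this]
      exact integrable_prod_bdd hmeas hC
    have hmul := hindep.symm.integral_mul_eq_mul_integral hint1.aestronglyMeasurable hint2.aestronglyMeasurable
    have lhs : (fun ω => ∏ i ∈ Finset.cons a s ha, (V i ω) ^ (M i))
        = ((fun r => r ^ (M a)) ∘ V a) * (∏ j ∈ s, (fun r => r ^ (M j)) ∘ V j) := by
      funext ω
      simp [Finset.prod_insert ha, Finset.prod_apply]
    rw [lhs, hmul, Finset.prod_cons, ← ih]
    congr 1
    have : (∏ j ∈ s, (fun r => r ^ (M j)) ∘ V j) = fun ω => ∏ j ∈ s, (V j ω) ^ (M j) := by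
      funext ω
      simp [Finset.prod_apply]
    rw [this]

end Analysis

section Cov

open MeasureTheory ProbabilityTheory

variable {Ω : Type*} [MeasurableSpace Ω] {P : Measure Ω} [IsProbabilityMeasure P]
variable {κ : Type*} [DecidableEq κ] {V : κ → Ω → ℝ}
variable {J1 J2 : Type*} [Fintype J1] [Fintype J2]

lemma cov_structure
    (hind : iIndepFun V P)
    (hmeas : ∀ t, Measurable (V t)) {B : ℝ} (hB0 : 0 ≤ B) (hBb : ∀ t ω, |V t ω| ≤ B)
    (hmean : ∀ t, ∫ ω, V t ω ∂P = 0)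
    (u1 : J1 → κ) (u2 : J2 → κ) :
    (((∫ ω, (∏ j : J1, V (u1 j) ω) * (∏ j : J2, V (u2 j) ω) ∂P)
      - (∫ ω, ∏ j : J1, V (u1 j) ω ∂P) * (∫ ω, ∏ j : J2, V (u2 j) ω ∂P) = 0)
     ∨ ((∀ t : κ, (univ.filter fun j : J1 => u1 j = t).card
            + (univ.filter fun j : J2 => u2 j = t).card ≠ 1)
        ∧ (∃ t : κ, 1 ≤ (univ.filter fun j : J1 => u1 j = t).card
            ∧ 1 ≤ (univ.filter fun j : J2 => u2 j = t).card)))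
    ∧ |(∫ ω, (∏ j : J1, V (u1 j) ω) * (∏ j : J2, V (u2 j) ω) ∂P)
      - (∫ ω, ∏ j : J1, V (u1 j) ω ∂P) * (∫ ω, ∏ j : J2, V (u2 j) ω ∂P)|
        ≤ 2 * B ^ (Fintype.card J1 + Fintype.card J2) := by
  classical
  set m1 : κ → ℕ := fun t => (univ.filter fun j : J1 => u1 j = t).card with hm1
  set m2 : κ → ℕ := fun t => (univ.filter fun j : J2 => u2 j = t).card with hm2
  set T1 : Finset κ := univ.image u1 with hT1
  set T2 : Finset κ := univ.image u2 with hT2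
  set T : Finset κ := T1 ∪ T2 with hT
  have hm1z : ∀ t, t ∉ T1 → m1 t = 0 := by
    intro t ht
    rw [hm1]
    rw [Finset.card_eq_zero, Finset.filter_eq_empty_iff]
    intro j _ hj
    exact ht (Finset.mem_image.2 ⟨j, mem_univ _, hj⟩)
  have hm2z : ∀ t, t ∉ T2 → m2 t = 0 := by
    intro t ht
    rw [hm2]
    rw [Finset.card_eq_zero, Finset.filter_eq_empty_iff]
    intro j _ hj
    exact ht (Finset.mem_image.2 ⟨j, mem_univ _, hj⟩)
  have hW1 : ∀ ω, (∏ j : J1, V (u1 j) ω) = ∏ t ∈ T, (V t ω) ^ (m1 t) := by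
    intro ω
    rw [Finset.prod_comp (fun v => V v ω) u1]
    refine Finset.prod_subset Finset.subset_union_left ?_
    intro t _ ht
    show V t ω ^ m1 t = 1
    rw [hm1z t ht, pow_zero]
  have hW2 : ∀ ω, (∏ j : J2, V (u2 j) ω) = ∏ t ∈ T, (V t ω) ^ (m2 t) := by
    intro ω
    rw [Finset.prod_comp (fun v => V v ω) u2]
    refine Finset.prod_subset Finset.subset_union_right ?_
    intro t _ ht
    show V t ω ^ m2 t = 1
    rw [hm2z t ht, pow_zero]
  have hC : ∀ (t : κ) (ω : Ω), |V t ω| ≤ (fun _ : κ => B) t := fun t ω => hBb t ω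
  have hE1 : ∫ ω, (∏ j : J1, V (u1 j) ω) ∂P = ∏ t ∈ T, ∫ ω, (V t ω) ^ (m1 t) ∂P := by
    rw [show (fun ω => ∏ j : J1, V (u1 j) ω) = fun ω => ∏ t ∈ T, (V t ω) ^ (m1 t) from
      funext hW1]
    exact integral_prod_pow_of_indep hind hmeas hC m1 T
  have hE2 : ∫ ω, (∏ j : J2, V (u2 j) ω) ∂P = ∏ t ∈ T, ∫ ω, (V t ω) ^ (m2 t) ∂P := by
    rw [show (fun ω => ∏ j : J2, V (u2 j) ω) = fun ω => ∏ t ∈ T, (V t ω) ^ (m2 t) from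
      funext hW2]
    exact integral_prod_pow_of_indep hind hmeas hC m2 T
  have hE12 : ∫ ω, (∏ j : J1, V (u1 j) ω) * (∏ j : J2, V (u2 j) ω) ∂P
      = ∏ t ∈ T, ∫ ω, (V t ω) ^ (m1 t + m2 t) ∂P := by
    rw [show (fun ω => (∏ j : J1, V (u1 j) ω) * (∏ j : J2, V (u2 j) ω))
        = fun ω => ∏ t ∈ T, (V t ω) ^ (m1 t + m2 t) from ?_]
    · exact integral_prod_pow_of_indep hind hmeas hC (fun t => m1 t + m2 t) T
    · funext ω
      rw [hW1 ω, hW2 ω, ← Finset.prod_mul_distrib]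
      refine Finset.prod_congr rfl fun t _ => ?_
      rw [pow_add]
  have habs : ∀ (t : κ) (m : ℕ), |∫ ω, (V t ω) ^ m ∂P| ≤ B ^ m := by
    intro t m
    refine le_trans (by simpa [Real.norm_eq_abs] using
      MeasureTheory.norm_integral_le_integral_norm (μ := P) (fun ω => (V t ω) ^ m)) ?_
    have hle : ∀ ω, |V t ω| ^ m ≤ B ^ m := by
      intro ω
      exact pow_le_pow_left₀ (abs_nonneg _) (hBb t ω) _
    calc ∫ ω, |V t ω| ^ m ∂P ≤ ∫ _ω, B ^ m ∂P := by
          refine integral_mono ?_ (integrable_const _) hle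
          refine integrable_of_bdd (C := B ^ m) ((hmeas t).abs.pow_const m) ?_
          intro ω
          rw [abs_of_nonneg (pow_nonneg (abs_nonneg _) _)]
          exact hle ω
    _ = B ^ m := by simp
  have hsum1 : ∑ t ∈ T, m1 t = Fintype.card J1 := by
    rw [hm1, ← Finset.card_univ]
    exact (Finset.card_eq_sum_card_fiberwise fun j _ =>
      Finset.mem_union_left _ (Finset.mem_image.2 ⟨j, mem_univ _, rfl⟩)).symm
  have hsum2 : ∑ t ∈ T, m2 t = Fintype.card J2 := by
    rw [hm2, ← Finset.card_univ]
    exact (Finset.card_eq_sum_card_fiberwise fun j _ =>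
      Finset.mem_union_right _ (Finset.mem_image.2 ⟨j, mem_univ _, rfl⟩)).symm
  constructor
  · -- structure : zero or (matched ∧ cross)
    by_cases hsingle : ∃ t0 : κ, m1 t0 + m2 t0 = 1
    · left
      obtain ⟨t0, ht0⟩ := hsingle
      have ht0T : t0 ∈ T := by
        by_contra ht0T
        rw [Finset.mem_union] at ht0T
        push_neg at ht0T
        rw [hm1z t0 ht0T.1, hm2z t0 ht0T.2] at ht0
        omega
      have hI1 : ∫ ω, (V t0 ω) ^ (m1 t0 + m2 t0) ∂P = 0 := by
        simp only [ht0, pow_one]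
        exact hmean t0
      have hfst : ∏ t ∈ T, ∫ ω, (V t ω) ^ (m1 t + m2 t) ∂P = 0 :=
        Finset.prod_eq_zero ht0T hI1
      have hsnd : (∏ t ∈ T, ∫ ω, (V t ω) ^ (m1 t) ∂P)
          * (∏ t ∈ T, ∫ ω, (V t ω) ^ (m2 t) ∂P) = 0 := by
        rw [← Finset.prod_mul_distrib]
        refine Finset.prod_eq_zero ht0T ?_
        rcases Nat.lt_or_ge 0 (m1 t0) with h1 | h1
        · have hm1e : m1 t0 = 1 := by omega
          simp only [hm1e, pow_one, hmean t0, zero_mul]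
        · have hm2e : m2 t0 = 1 := by omega
          simp only [hm2e, pow_one, hmean t0, mul_zero]
      rw [hE12, hE1, hE2, hfst, hsnd]
      ring
    · by_cases hcross : ∃ t : κ, 1 ≤ m1 t ∧ 1 ≤ m2 t
      · right
        push_neg at hsingle
        refine ⟨fun t => ?_, ?_⟩
        · show m1 t + m2 t ≠ 1
          exact hsingle t
        · show ∃ t : κ, 1 ≤ m1 t ∧ 1 ≤ m2 t
          exact hcross
      · left
        push_neg at hcross
        have hcr : ∀ t, m1 t = 0 ∨ m2 t = 0 := by
          intro t
          have := hcross t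
          omega
        rw [hE12, hE1, hE2, ← Finset.prod_mul_distrib]
        refine sub_eq_zero.2 (Finset.prod_congr rfl fun t _ => ?_)
        rcases hcr t with h0 | h0
        · simp only [h0, zero_add, pow_zero]
          simp
        · simp only [h0, add_zero, pow_zero]
          simp
  · -- the bound
    rw [hE12, hE1, hE2]
    refine le_trans (abs_sub _ _) ?_
    have hb1 : |∏ t ∈ T, ∫ ω, (V t ω) ^ (m1 t + m2 t) ∂P|
        ≤ B ^ (Fintype.card J1 + Fintype.card J2) := by
      rw [Finset.abs_prod]
      calc ∏ t ∈ T, |∫ ω, (V t ω) ^ (m1 t + m2 t) ∂P|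
          ≤ ∏ t ∈ T, B ^ (m1 t + m2 t) :=
            Finset.prod_le_prod (fun t _ => abs_nonneg _) (fun t _ => habs t _)
      _ = B ^ (∑ t ∈ T, (m1 t + m2 t)) := by
            rw [← Finset.prod_pow_eq_pow_sum]
      _ = B ^ (Fintype.card J1 + Fintype.card J2) := by
            rw [Finset.sum_add_distrib, hsum1, hsum2]
    have hb2 : |(∏ t ∈ T, ∫ ω, (V t ω) ^ (m1 t) ∂P)
        * (∏ t ∈ T, ∫ ω, (V t ω) ^ (m2 t) ∂P)|
        ≤ B ^ (Fintype.card J1 + Fintype.card J2) := by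
      rw [abs_mul, Finset.abs_prod, Finset.abs_prod]
      have h1 : ∏ t ∈ T, |∫ ω, (V t ω) ^ (m1 t) ∂P| ≤ B ^ (Fintype.card J1) := by
        calc ∏ t ∈ T, |∫ ω, (V t ω) ^ (m1 t) ∂P| ≤ ∏ t ∈ T, B ^ (m1 t) :=
              Finset.prod_le_prod (fun t _ => abs_nonneg _) (fun t _ => habs t _)
        _ = B ^ (∑ t ∈ T, m1 t) := by rw [← Finset.prod_pow_eq_pow_sum]
        _ = _ := by rw [hsum1]
      have h2 : ∏ t ∈ T, |∫ ω, (V t ω) ^ (m2 t) ∂P| ≤ B ^ (Fintype.card J2) := by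
        calc ∏ t ∈ T, |∫ ω, (V t ω) ^ (m2 t) ∂P| ≤ ∏ t ∈ T, B ^ (m2 t) :=
              Finset.prod_le_prod (fun t _ => abs_nonneg _) (fun t _ => habs t _)
        _ = B ^ (∑ t ∈ T, m2 t) := by rw [← Finset.prod_pow_eq_pow_sum]
        _ = _ := by rw [hsum2]
      calc (∏ t ∈ T, |∫ ω, (V t ω) ^ (m1 t) ∂P|) * ∏ t ∈ T, |∫ ω, (V t ω) ^ (m2 t) ∂P|
          ≤ B ^ (Fintype.card J1) * B ^ (Fintype.card J2) := by
            refine mul_le_mul h1 h2 (Finset.prod_nonneg fun t _ => abs_nonneg _) ?_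
            exact pow_nonneg hB0 _
      _ = B ^ (Fintype.card J1 + Fintype.card J2) := by rw [pow_add]
    calc |∏ t ∈ T, ∫ ω, (V t ω) ^ (m1 t + m2 t) ∂P|
          + |(∏ t ∈ T, ∫ ω, (V t ω) ^ (m1 t) ∂P) * ∏ t ∈ T, ∫ ω, (V t ω) ^ (m2 t) ∂P|
        ≤ B ^ (Fintype.card J1 + Fintype.card J2) + B ^ (Fintype.card J1 + Fintype.card J2) :=
          add_le_add hb1 hb2
    _ = 2 * B ^ (Fintype.card J1 + Fintype.card J2) := by ring

end Cov

section Trace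

variable {n : ℕ}

def chainP (A : Matrix (Fin n) (Fin n) ℝ) : (d : ℕ) → Fin n → (Fin d → Fin n) → Fin n → ℝ
  | 0, i, _, j => A i j
  | (d+1), i, f, j => A i (f 0) * chainP A d (f 0) (Fin.tail f) j

lemma pow_apply_chain (A : Matrix (Fin n) (Fin n) ℝ) :
    ∀ (d : ℕ) (i j : Fin n), (A ^ (d+1)) i j = ∑ f : Fin d → Fin n, chainP A d i f j := by
  intro d
  induction d with
  | zero =>
    intro i j
    rw [pow_one, Fintype.sum_unique]
    rfl
  | succ d ih =>
    intro i j
    rw [pow_succ', Matrix.mul_apply]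
    have h1 : ∀ m : Fin n, A i m * (A ^ (d+1)) m j
        = ∑ f : Fin d → Fin n, A i m * chainP A d m f j := by
      intro m
      rw [ih m j, Finset.mul_sum]
    rw [Finset.sum_congr rfl (fun m _ => h1 m), ← Fintype.sum_prod_type']
    refine Fintype.sum_equiv (Fin.consEquiv fun _ => Fin n) _ _ ?_
    intro p
    show A i p.1 * chainP A d p.1 p.2 j = chainP A (d+1) i (Fin.cons p.1 p.2) j
    simp [chainP, Fin.cons_zero, Fin.tail_cons]

def wseq {d : ℕ} (i j : Fin n) (f : Fin d → Fin n) : Fin (d+2) → Fin n :=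
  Fin.cons i (Fin.snoc f j)

lemma wseq_zero {d : ℕ} (i j : Fin n) (f : Fin d → Fin n) : wseq i j f 0 = i :=
  Fin.cons_zero _ _

lemma wseq_succ_castSucc {d : ℕ} (i j : Fin n) (f : Fin d → Fin n) (u : Fin d) :
    wseq i j f (Fin.succ (Fin.castSucc u)) = f u := by
  rw [wseq, Fin.cons_succ, Fin.snoc_castSucc]

lemma wseq_succ_last {d : ℕ} (i j : Fin n) (f : Fin d → Fin n) :
    wseq i j f (Fin.succ (Fin.last d)) = j := by
  rw [wseq, Fin.cons_succ, Fin.snoc_last]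

lemma wseq_shift {d : ℕ} (i j : Fin n) (f : Fin (d+1) → Fin n) (u : Fin (d+2)) :
    wseq i j f (Fin.succ u) = wseq (f 0) j (Fin.tail f) u := by
  rw [wseq, Fin.cons_succ]
  conv_lhs => rw [← Fin.cons_self_tail f]
  rw [← Fin.cons_snoc_eq_snoc_cons]
  rfl

lemma chainP_eq_prod (A : Matrix (Fin n) (Fin n) ℝ) :
    ∀ (d : ℕ) (i j : Fin n) (f : Fin d → Fin n),
    chainP A d i f j = ∏ t : Fin (d+1),
      A (wseq i j f (Fin.castSucc t)) (wseq i j f (Fin.succ t)) := by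
  intro d
  induction d with
  | zero =>
    intro i j f
    rw [Fin.prod_univ_one]
    show A i j = A (wseq i j f (Fin.castSucc 0)) (wseq i j f (Fin.succ 0))
    rw [Fin.castSucc_zero, wseq_zero]
    congr 1
  | succ d ih =>
    intro i j f
    rw [Fin.prod_univ_succ]
    have h0 : A (wseq i j f (Fin.castSucc 0)) (wseq i j f (Fin.succ 0)) = A i (f 0) := by
      rw [Fin.castSucc_zero, wseq_zero]
      congr 1
    have hstep : chainP A (d+1) i f j = A i (f 0) * chainP A d (f 0) (Fin.tail f) j := rfl
    rw [h0, hstep, ih (f 0) j (Fin.tail f)]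
    congr 1
    refine Finset.prod_congr rfl fun t _ => ?_
    rw [← wseq_shift, ← wseq_shift, Fin.succ_castSucc]

def cprod {k : ℕ} (A : Matrix (Fin n) (Fin n) ℝ) (π : Fin (k+1) → Fin n) : ℝ :=
  ∏ l : Fin (k+1), A (π l) (π (l+1))

lemma castSucc_add_one {k : ℕ} (u : Fin k) : (Fin.castSucc u) + 1 = Fin.succ u := by
  have hk : 1 ≤ k := by
    have := u.2
    omega
  apply Fin.ext
  rw [Fin.val_add, Fin.val_one', Fin.coe_castSucc, Fin.val_succ,
    Nat.mod_eq_of_lt (by omega : 1 < k+1), Nat.mod_eq_of_lt (by have := u.2; omega)]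

lemma last_add_one' {k : ℕ} : (Fin.last k) + 1 = (0 : Fin (k+1)) := by
  apply Fin.ext
  rw [Fin.val_add, Fin.val_one', Fin.val_last]
  show (k + 1 % (k+1)) % (k+1) = (0 : Fin (k+1)).val
  rcases Nat.eq_zero_or_pos k with hk | hk
  · subst hk
    rfl
  · rw [Nat.mod_eq_of_lt (by omega : 1 < k+1), Nat.mod_self]
    rfl

lemma cyc_eq_chain {k : ℕ} (A : Matrix (Fin n) (Fin n) ℝ) (π : Fin (k+1) → Fin n) :
    cprod A π = chainP A k (π 0) (Fin.tail π) (π 0) := by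
  rw [chainP_eq_prod]
  refine Finset.prod_congr rfl fun l _ => ?_
  have claim1 : wseq (π 0) (π 0) (Fin.tail π) (Fin.castSucc l) = π l := by
    induction l using Fin.cases with
    | zero => rw [Fin.castSucc_zero, wseq_zero]
    | succ u =>
      rw [← Fin.succ_castSucc, wseq_succ_castSucc]
      rfl
  have claim2 : wseq (π 0) (π 0) (Fin.tail π) (Fin.succ l) = π (l + 1) := by
    induction l using Fin.lastCases with
    | last =>
      rw [wseq_succ_last, last_add_one']
    | cast u =>
      rw [wseq_succ_castSucc, castSucc_add_one]
      rfl
  rw [claim1, claim2]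

lemma trace_pow (A : Matrix (Fin n) (Fin n) ℝ) (k : ℕ) :
    (A ^ (k+1)).trace = ∑ π : Fin (k+1) → Fin n, cprod A π := by
  rw [Matrix.trace]
  calc ∑ i, (A ^ (k+1)).diag i = ∑ i : Fin n, ∑ f : Fin k → Fin n, chainP A k i f i :=
        Finset.sum_congr rfl fun i _ => pow_apply_chain A k i i
  _ = ∑ p : Fin n × (Fin k → Fin n), chainP A k p.1 p.2 p.1 := by
        rw [← Fintype.sum_prod_type']
  _ = ∑ π : Fin (k+1) → Fin n, chainP A k (π 0) (Fin.tail π) (π 0) := by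
        refine Fintype.sum_equiv (Fin.consEquiv fun _ => Fin n) _ _ ?_
        intro p
        have he : ((Fin.consEquiv fun _ => Fin n) p : Fin (k+1) → Fin n)
            = Fin.cons p.1 p.2 := rfl
        rw [he, Fin.cons_zero, Fin.tail_cons]
  _ = ∑ π : Fin (k+1) → Fin n, cprod A π :=
        Finset.sum_congr rfl fun π _ => (cyc_eq_chain A π).symm

end Trace

section Main

open MeasureTheory ProbabilityTheory

variable {E E' : Type*} [DecidableEq E] [DecidableEq E']
variable {Ω : Type*} [MeasurableSpace Ω] {P : Measure Ω} [IsProbabilityMeasure P]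
variable (LX : (n : ℕ) → Fin n → Fin n → E) (LY : (n : ℕ) → Fin n → Fin n → E')
variable (x : E → Ω → ℝ) (y : E' → Ω → ℝ)
variable {k n : ℕ}

def uu (π : Fin (k+1) → Fin n) (j : Fin (k+1) × Bool) : E ⊕ E' :=
  if j.2 then Sum.inl (LX n (π j.1) (π (j.1+1))) else Sum.inr (LY n (π j.1) (π (j.1+1)))

lemma prod_uu_eq_cprod (π : Fin (k+1) → Fin n) (ω : Ω) :
    (∏ j : Fin (k+1) × Bool, Sum.elim x y (uu LX LY π j) ω)
    = cprod (hadProd (pattMatrix LX x n ω) (pattMatrix LY y n ω)) π := by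
  rw [cprod, Fintype.prod_prod_type]
  refine Finset.prod_congr rfl fun l _ => ?_
  rw [Fintype.prod_bool]
  rfl

lemma card_uu_inl (π : Fin (k+1) → Fin n) (v : E) :
    ((univ : Finset (Fin (k+1) × Bool)).filter fun j => uu LX LY π j = Sum.inl v).card
    = ((univ : Finset (Fin (k+1))).filter fun l => LX n (π l) (π (l+1)) = v).card := by
  have himg : ((univ : Finset (Fin (k+1) × Bool)).filter fun j => uu LX LY π j = Sum.inl v)
      = ((univ : Finset (Fin (k+1))).filter fun l => LX n (π l) (π (l+1)) = v).image
          (fun l => (l, true)) := by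
    ext ⟨l, b⟩
    simp only [mem_filter, mem_univ, true_and, Finset.mem_image]
    cases b
    · simp [uu]
    · simp [uu]
  rw [himg, Finset.card_image_of_injective]
  intro a b hab
  exact (Prod.ext_iff.1 hab).1

lemma card_uu_inr (π : Fin (k+1) → Fin n) (v : E') :
    ((univ : Finset (Fin (k+1) × Bool)).filter fun j => uu LX LY π j = Sum.inr v).card
    = ((univ : Finset (Fin (k+1))).filter fun l => LY n (π l) (π (l+1)) = v).card := by
  have himg : ((univ : Finset (Fin (k+1) × Bool)).filter fun j => uu LX LY π j = Sum.inr v)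
      = ((univ : Finset (Fin (k+1))).filter fun l => LY n (π l) (π (l+1)) = v).image
          (fun l => (l, false)) := by
    ext ⟨l, b⟩
    simp only [mem_filter, mem_univ, true_and, Finset.mem_image]
    cases b
    · simp [uu]
    · simp [uu]
  rw [himg, Finset.card_image_of_injective]
  intro a b hab
  exact (Prod.ext_iff.1 hab).1

lemma cond_implies_good (p : Pi2 n k)
    (hc1 : ∀ t : E ⊕ E',
      ((univ : Finset (Fin (k+1) × Bool)).filter fun j => uu LX LY p.1 j = t).card
      + ((univ : Finset (Fin (k+1) × Bool)).filter fun j => uu LX LY p.2 j = t).card ≠ 1)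
    (hc2 : ∃ t : E ⊕ E',
      1 ≤ ((univ : Finset (Fin (k+1) × Bool)).filter fun j => uu LX LY p.1 j = t).card
      ∧ 1 ≤ ((univ : Finset (Fin (k+1) × Bool)).filter fun j => uu LX LY p.2 j = t).card) :
    (Matched (LX n) p ∧ Cross (LX n) p) ∨ (Matched (LY n) p ∧ Cross (LY n) p) := by
  have hmx : Matched (LX n) p := by
    constructor
    · intro e
      have h1 := hc1 (Sum.inl (val1 (LX n) p e))
      rw [card_uu_inl, card_uu_inl] at h1
      have hpos : 0 < ((univ : Finset (Fin (k+1))).filter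
          fun l => LX n (p.1 l) (p.1 (l+1)) = val1 (LX n) p e).card :=
        Finset.card_pos.2 ⟨e, by rw [mem_filter]; exact ⟨mem_univ _, rfl⟩⟩
      show 2 ≤ mult (LX n) p (val1 (LX n) p e)
      unfold mult val1 val2
      unfold val1 at h1 hpos
      omega
    · intro e
      have h1 := hc1 (Sum.inl (val2 (LX n) p e))
      rw [card_uu_inl, card_uu_inl] at h1
      have hpos : 0 < ((univ : Finset (Fin (k+1))).filter
          fun l => LX n (p.2 l) (p.2 (l+1)) = val2 (LX n) p e).card :=
        Finset.card_pos.2 ⟨e, by rw [mem_filter]; exact ⟨mem_univ _, rfl⟩⟩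
      show 2 ≤ mult (LX n) p (val2 (LX n) p e)
      unfold mult val1 val2
      unfold val2 at h1 hpos
      omega
  have hmy : Matched (LY n) p := by
    constructor
    · intro e
      have h1 := hc1 (Sum.inr (val1 (LY n) p e))
      rw [card_uu_inr, card_uu_inr] at h1
      have hpos : 0 < ((univ : Finset (Fin (k+1))).filter
          fun l => LY n (p.1 l) (p.1 (l+1)) = val1 (LY n) p e).card :=
        Finset.card_pos.2 ⟨e, by rw [mem_filter]; exact ⟨mem_univ _, rfl⟩⟩
      show 2 ≤ mult (LY n) p (val1 (LY n) p e)
      unfold mult val1 val2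
      unfold val1 at h1 hpos
      omega
    · intro e
      have h1 := hc1 (Sum.inr (val2 (LY n) p e))
      rw [card_uu_inr, card_uu_inr] at h1
      have hpos : 0 < ((univ : Finset (Fin (k+1))).filter
          fun l => LY n (p.2 l) (p.2 (l+1)) = val2 (LY n) p e).card :=
        Finset.card_pos.2 ⟨e, by rw [mem_filter]; exact ⟨mem_univ _, rfl⟩⟩
      show 2 ≤ mult (LY n) p (val2 (LY n) p e)
      unfold mult val1 val2
      unfold val2 at h1 hpos
      omega
  obtain ⟨t, ht1, ht2⟩ := hc2
  cases t with
  | inl v =>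
    left
    refine ⟨hmx, ?_⟩
    rw [card_uu_inl] at ht1 ht2
    obtain ⟨e, he⟩ := Finset.card_pos.1 ht1
    obtain ⟨e', he'⟩ := Finset.card_pos.1 ht2
    rw [mem_filter] at he he'
    exact ⟨e, e', by rw [val1, val2, he.2, he'.2]⟩
  | inr v =>
    right
    refine ⟨hmy, ?_⟩
    rw [card_uu_inr] at ht1 ht2
    obtain ⟨e, he⟩ := Finset.card_pos.1 ht1
    obtain ⟨e', he'⟩ := Finset.card_pos.1 ht2
    rw [mem_filter] at he he'
    exact ⟨e, e', by rw [val1, val2, he.2, he'.2]⟩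

theorem var_bound
    (hmx : ∀ t, Measurable (x t)) (hmy : ∀ t, Measurable (y t))
    {Bx By : ℝ} (hbx : ∀ t ω, |x t ω| ≤ Bx) (hby : ∀ t ω, |y t ω| ≤ By)
    (hmex : ∀ t, ∫ ω, x t ω ∂P = 0) (hmey : ∀ t, ∫ ω, y t ω ∂P = 0)
    (hindep : iIndepFun (Sum.elim x y) P)
    {ΔX ΔY : ℕ}
    (hBX : ∀ (a : Fin n) (t : E),
      ((univ : Finset (Fin n)).filter fun b => LX n a b = t).card ≤ ΔX)
    (hBY : ∀ (a : Fin n) (t : E'),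
      ((univ : Finset (Fin n)).filter fun b => LY n a b = t).card ≤ ΔY)
    (hn : 1 ≤ n) :
    ∫ ω, (betaMom (k+1) (scaleMat (hadProd (pattMatrix LX x n ω) (pattMatrix LY y n ω)))
        - ∫ ω', betaMom (k+1)
            (scaleMat (hadProd (pattMatrix LX x n ω') (pattMatrix LY y n ω'))) ∂P)^2 ∂P
      ≤ (((Fintype.card (SH k ΔX) + Fintype.card (SH k ΔY) : ℕ) : ℝ)
          * (2 * (max 0 (max Bx By)) ^ (Fintype.card (Fin (k+1) × Bool)
              + Fintype.card (Fin (k+1) × Bool)))) / n := by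
  classical
  set BB : ℝ := max 0 (max Bx By) with hBB
  have hBB0 : (0:ℝ) ≤ BB := le_max_left _ _
  set V : E ⊕ E' → Ω → ℝ := Sum.elim x y with hV
  have hmV : ∀ t, Measurable (V t) := by
    rintro (t | t)
    · exact hmx t
    · exact hmy t
  have hbV : ∀ t ω, |V t ω| ≤ BB := by
    rintro (t | t) ω
    · exact le_trans (hbx t ω) (le_trans (le_max_left _ _) (le_max_right _ _))
    · exact le_trans (hby t ω) (le_trans (le_max_right _ _) (le_max_right _ _))
  have hmeanV : ∀ t, ∫ ω, V t ω ∂P = 0 := by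
    rintro (t | t)
    · exact hmex t
    · exact hmey t
  set W : (Fin (k+1) → Fin n) → Ω → ℝ :=
    fun π ω => ∏ j : Fin (k+1) × Bool, V (uu LX LY π j) ω with hWdef
  set BW : ℝ := BB ^ (Fintype.card (Fin (k+1) × Bool)) with hBWdef
  have hBW0 : (0:ℝ) ≤ BW := pow_nonneg hBB0 _
  have hmW : ∀ π, Measurable (W π) := by
    intro π
    exact Finset.measurable_prod _ fun j _ => hmV _
  have hbW : ∀ π ω, |W π ω| ≤ BW := by
    intro π ω
    rw [hWdef]
    calc |∏ j : Fin (k+1) × Bool, V (uu LX LY π j) ω|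
        = ∏ j : Fin (k+1) × Bool, |V (uu LX LY π j) ω| := Finset.abs_prod _ _
    _ ≤ ∏ _j : Fin (k+1) × Bool, BB :=
        Finset.prod_le_prod (fun j _ => abs_nonneg _) (fun j _ => hbV _ ω)
    _ = BW := by rw [Finset.prod_const, hBWdef, Finset.card_univ]
  have hintW : ∀ π, Integrable (W π) P := fun π => integrable_of_bdd (hmW π) (hbW π)
  have hintWW : ∀ p : Pi2 n k, Integrable (fun ω => W p.1 ω * W p.2 ω) P := by
    intro p
    refine integrable_of_bdd (C := BW * BW) ((hmW p.1).mul (hmW p.2)) ?_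
    intro ω
    rw [abs_mul]
    exact mul_le_mul (hbW _ ω) (hbW _ ω) (abs_nonneg _) hBW0
  set S : Ω → ℝ := fun ω => ∑ π : Fin (k+1) → Fin n, W π ω with hSdef
  have hmS : Measurable S := by
    exact Finset.measurable_sum _ fun π _ => hmW π
  have hbS : ∀ ω, |S ω| ≤ (Fintype.card (Fin (k+1) → Fin n) : ℝ) * BW := by
    intro ω
    calc |S ω| ≤ ∑ π : Fin (k+1) → Fin n, |W π ω| := Finset.abs_sum_le_sum_abs _ _
    _ ≤ ∑ _π : Fin (k+1) → Fin n, BW := Finset.sum_le_sum fun π _ => hbW π ω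
    _ = _ := by rw [Finset.sum_const, Finset.card_univ, nsmul_eq_mul]
  have hintS : Integrable S P := integrable_of_bdd hmS hbS
  have hintSS : Integrable (fun ω => S ω * S ω) P := by
    refine integrable_of_bdd (C := ((Fintype.card (Fin (k+1) → Fin n) : ℝ) * BW)
      * ((Fintype.card (Fin (k+1) → Fin n) : ℝ) * BW)) (hmS.mul hmS) ?_
    intro ω
    rw [abs_mul]
    refine mul_le_mul (hbS ω) (hbS ω) (abs_nonneg _) ?_
    positivity
  set μ : ℝ := ∫ ω, S ω ∂P with hμ
  -- variance expansion
  have hvar : ∫ ω, (S ω - μ)^2 ∂P = (∫ ω, S ω * S ω ∂P) - μ * μ := by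
    have hfe : (fun ω => (S ω - μ)^2)
        = fun ω => (S ω * S ω - (2*μ) * S ω) + μ * μ := by
      funext ω
      ring
    have hint4 : Integrable (fun ω => (2*μ) * S ω) P := hintS.const_mul (2*μ)
    have hint3 : Integrable (fun ω => S ω * S ω - (2*μ) * S ω) P := hintSS.sub hint4
    rw [hfe, integral_add hint3 (integrable_const (μ * μ)),
      integral_sub hintSS hint4, integral_const_mul, integral_const]
    simp only [measure_univ, probReal_univ, ENNReal.toReal_one, smul_eq_mul, one_mul]
    rw [← hμ]
    ring
  have hSS : ∫ ω, S ω * S ω ∂P = ∑ p : Pi2 n k, ∫ ω, W p.1 ω * W p.2 ω ∂P := by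
    have hfe : (fun ω => S ω * S ω) = fun ω => ∑ p : Pi2 n k, W p.1 ω * W p.2 ω := by
      funext ω
      rw [hSdef]
      rw [Finset.sum_mul_sum, ← Fintype.sum_prod_type']
    rw [hfe]
    exact integral_finset_sum _ fun p _ => hintWW p
  have hμsum : μ = ∑ π : Fin (k+1) → Fin n, ∫ ω, W π ω ∂P := by
    rw [hμ, hSdef]
    exact integral_finset_sum _ fun π _ => hintW π
  have hμμ : μ * μ = ∑ p : Pi2 n k, (∫ ω, W p.1 ω ∂P) * (∫ ω, W p.2 ω ∂P) := by
    rw [hμsum, Finset.sum_mul_sum, ← Fintype.sum_prod_type']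
  have hvar2 : ∫ ω, (S ω - μ)^2 ∂P
      = ∑ p : Pi2 n k, ((∫ ω, W p.1 ω * W p.2 ω ∂P)
          - (∫ ω, W p.1 ω ∂P) * (∫ ω, W p.2 ω ∂P)) := by
    rw [hvar, hSS, hμμ, ← Finset.sum_sub_distrib]
  -- covariance structure per pair
  have hcov := fun p : Pi2 n k =>
    cov_structure (P := P) hindep hmV hBB0 hbV hmeanV (uu LX LY p.1) (uu LX LY p.2)
  set M0 : ℝ := 2 * BB ^ (Fintype.card (Fin (k+1) × Bool)
      + Fintype.card (Fin (k+1) × Bool)) with hM0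
  have hM00 : (0:ℝ) ≤ M0 := by positivity
  have hgood : ∀ p : Pi2 n k,
      ((∫ ω, W p.1 ω * W p.2 ω ∂P) - (∫ ω, W p.1 ω ∂P) * (∫ ω, W p.2 ω ∂P))
      ≤ if (Matched (LX n) p ∧ Cross (LX n) p) ∨ (Matched (LY n) p ∧ Cross (LY n) p)
        then M0 else 0 := by
    intro p
    obtain ⟨hstruct, hbound⟩ := hcov p
    by_cases hg : (Matched (LX n) p ∧ Cross (LX n) p) ∨ (Matched (LY n) p ∧ Cross (LY n) p)
    · rw [if_pos hg]
      exact le_trans (le_abs_self _) hbound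
    · rw [if_neg hg]
      rcases hstruct with h0 | hcond
      · exact le_of_eq h0
      · exact absurd (cond_implies_good LX LY p hcond.1 hcond.2) hg
  have hsum1 : ∫ ω, (S ω - μ)^2 ∂P
      ≤ ∑ p : Pi2 n k, (if (Matched (LX n) p ∧ Cross (LX n) p)
          ∨ (Matched (LY n) p ∧ Cross (LY n) p) then M0 else 0) := by
    rw [hvar2]
    exact Finset.sum_le_sum fun p _ => hgood p
  have hsum2 : ∑ p : Pi2 n k, (if (Matched (LX n) p ∧ Cross (LX n) p)
      ∨ (Matched (LY n) p ∧ Cross (LY n) p) then M0 else 0)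
      = (((univ : Finset (Pi2 n k)).filter fun p => (Matched (LX n) p ∧ Cross (LX n) p)
          ∨ (Matched (LY n) p ∧ Cross (LY n) p)).card : ℝ) * M0 := by
    rw [← Finset.sum_filter, Finset.sum_const, nsmul_eq_mul]
  have hcard : (((univ : Finset (Pi2 n k)).filter fun p => (Matched (LX n) p ∧ Cross (LX n) p)
      ∨ (Matched (LY n) p ∧ Cross (LY n) p)).card : ℝ)
      ≤ ((Fintype.card (SH k ΔX) + Fintype.card (SH k ΔY) : ℕ) : ℝ) * (n : ℝ) ^ (k+2) := by
    have hsplit : ((univ : Finset (Pi2 n k)).filter fun p =>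
        (Matched (LX n) p ∧ Cross (LX n) p) ∨ (Matched (LY n) p ∧ Cross (LY n) p)).card
        ≤ (Fintype.card (SH k ΔX)) * n ^ (k+2) + (Fintype.card (SH k ΔY)) * n ^ (k+2) := by
      rw [Finset.filter_or]
      refine le_trans (Finset.card_union_le _ _) ?_
      exact Nat.add_le_add (count_main (LX n) ΔX hBX) (count_main (LY n) ΔY hBY)
    calc (((univ : Finset (Pi2 n k)).filter fun p => (Matched (LX n) p ∧ Cross (LX n) p)
        ∨ (Matched (LY n) p ∧ Cross (LY n) p)).card : ℝ)
        ≤ (((Fintype.card (SH k ΔX)) * n ^ (k+2) + (Fintype.card (SH k ΔY)) * n ^ (k+2) : ℕ) : ℝ) := by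
          exact_mod_cast hsplit
    _ = ((Fintype.card (SH k ΔX) + Fintype.card (SH k ΔY) : ℕ) : ℝ) * (n : ℝ) ^ (k+2) := by
          push_cast
          ring
  have hvarle : ∫ ω, (S ω - μ)^2 ∂P
      ≤ ((Fintype.card (SH k ΔX) + Fintype.card (SH k ΔY) : ℕ) : ℝ)
        * M0 * (n : ℝ) ^ (k+2) := by
    refine le_trans hsum1 ?_
    rw [hsum2]
    calc (((univ : Finset (Pi2 n k)).filter fun p => (Matched (LX n) p ∧ Cross (LX n) p)
        ∨ (Matched (LY n) p ∧ Cross (LY n) p)).card : ℝ) * M0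
        ≤ (((Fintype.card (SH k ΔX) + Fintype.card (SH k ΔY) : ℕ) : ℝ) * (n : ℝ) ^ (k+2)) * M0 :=
          mul_le_mul_of_nonneg_right hcard hM00
    _ = _ := by ring
  -- relate β to S
  set a : ℝ := (n : ℝ) ^ (-(1:ℝ)/2) with ha
  set c : ℝ := (n : ℝ)⁻¹ * a ^ (k+1) with hc
  have hβ : ∀ ω, betaMom (k+1)
      (scaleMat (hadProd (pattMatrix LX x n ω) (pattMatrix LY y n ω))) = c * S ω := by
    intro ω
    rw [betaMom, scaleMat, smul_pow, Matrix.trace_smul, smul_eq_mul, trace_pow]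
    rw [hSdef, hc]
    have : ∑ π : Fin (k+1) → Fin n,
        cprod (hadProd (pattMatrix LX x n ω) (pattMatrix LY y n ω)) π
        = ∑ π : Fin (k+1) → Fin n, W π ω :=
      Finset.sum_congr rfl fun π _ => (prod_uu_eq_cprod LX LY x y π ω).symm
    rw [this]
    ring
  have hμβ : ∫ ω', betaMom (k+1)
      (scaleMat (hadProd (pattMatrix LX x n ω') (pattMatrix LY y n ω'))) ∂P = c * μ := by
    have hfe : (fun ω' => betaMom (k+1)
        (scaleMat (hadProd (pattMatrix LX x n ω') (pattMatrix LY y n ω'))))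
        = fun ω' => c * S ω' := funext hβ
    rw [hfe, integral_const_mul, hμ]
  have hfinal : ∫ ω, (betaMom (k+1)
      (scaleMat (hadProd (pattMatrix LX x n ω) (pattMatrix LY y n ω)))
      - ∫ ω', betaMom (k+1)
          (scaleMat (hadProd (pattMatrix LX x n ω') (pattMatrix LY y n ω'))) ∂P)^2 ∂P
      = c^2 * ∫ ω, (S ω - μ)^2 ∂P := by
    have hfe : (fun ω => (betaMom (k+1)
        (scaleMat (hadProd (pattMatrix LX x n ω) (pattMatrix LY y n ω)))
        - ∫ ω', betaMom (k+1)
            (scaleMat (hadProd (pattMatrix LX x n ω') (pattMatrix LY y n ω'))) ∂P)^2)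
        = fun ω => c^2 * (S ω - μ)^2 := by
      funext ω
      rw [hβ ω, hμβ]
      ring
    rw [hfe, integral_const_mul]
  -- numeric computation of c²
  have hnR : (0:ℝ) < n := by
    exact_mod_cast hn
  have ha2 : a ^ (2:ℕ) = (n : ℝ)⁻¹ := by
    rw [ha, ← Real.rpow_natCast ((n:ℝ) ^ (-(1:ℝ)/2)) 2, ← Real.rpow_mul (le_of_lt hnR)]
    have hexp : (-(1:ℝ)/2) * ((2:ℕ):ℝ) = -1 := by norm_num
    rw [hexp, Real.rpow_neg_one]
  have hc2 : c^2 = ((n : ℝ) ^ (k+3))⁻¹ := by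
    rw [hc, mul_pow, ← pow_mul, mul_comm (k+1) 2, pow_mul, ha2, ← inv_pow]
    ring
  have hkey : c^2 * (n:ℝ) ^ (k+2) = (n:ℝ)⁻¹ := by
    have hne : ((n:ℝ) ^ (k+2)) ≠ 0 := by positivity
    have hne2 : (n:ℝ) ≠ 0 := ne_of_gt hnR
    have hpows : (n:ℝ)^(k+3) = (n:ℝ)^(k+2) * n := by ring
    rw [hc2, hpows, mul_inv]
    field_simp
  rw [hfinal]
  calc c^2 * ∫ ω, (S ω - μ)^2 ∂P
      ≤ c^2 * (((Fintype.card (SH k ΔX) + Fintype.card (SH k ΔY) : ℕ) : ℝ)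
        * M0 * (n : ℝ) ^ (k+2)) := by
        refine mul_le_mul_of_nonneg_left hvarle (by positivity)
  _ = (((Fintype.card (SH k ΔX) + Fintype.card (SH k ΔY) : ℕ) : ℝ) * M0)
        * (c^2 * (n : ℝ) ^ (k+2)) := by ring
  _ = (((Fintype.card (SH k ΔX) + Fintype.card (SH k ΔY) : ℕ) : ℝ) * M0) / n := by
        rw [hkey, div_eq_mul_inv]

end Main

end S4

/-- `Var(β_h(n^{-1/2} Z_n)) = O(n⁻¹)`, in particular it tends to `0`. -/
theorem statement4
    {E E' : Type*} [Countable E] [Countable E'] [DecidableEq E] [DecidableEq E']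
    {Ω : Type*} [MeasurableSpace Ω] (P : Measure Ω) [IsProbabilityMeasure P]
    (LX : (n : ℕ) → Fin n → Fin n → E) (LY : (n : ℕ) → Fin n → Fin n → E')
    (hBX : propertyB LX) (hBY : propertyB LY)
    (x : E → Ω → ℝ) (y : E' → Ω → ℝ)
    (hA1x : assumptionA1 P x) (hA1y : assumptionA1 P y)
    (hindep : iIndepFun (Sum.elim x y) P)
    (h : ℕ) (hh : 1 ≤ h) :
    (∃ C : ℝ, ∀ n : ℕ, 1 ≤ n →
      (∫ ω, (betaMom h (scaleMat (hadProd (pattMatrix LX x n ω) (pattMatrix LY y n ω))) -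
          ∫ ω', betaMom h
            (scaleMat (hadProd (pattMatrix LX x n ω') (pattMatrix LY y n ω'))) ∂P) ^ 2 ∂P)
        ≤ C / n) ∧
    Tendsto (fun n : ℕ =>
        ∫ ω, (betaMom h (scaleMat (hadProd (pattMatrix LX x n ω) (pattMatrix LY y n ω))) -
          ∫ ω', betaMom h
            (scaleMat (hadProd (pattMatrix LX x n ω') (pattMatrix LY y n ω'))) ∂P) ^ 2 ∂P)
      atTop (nhds 0) := by
  obtain ⟨k, rfl⟩ : ∃ k, h = k + 1 := ⟨h - 1, by omega⟩
  obtain ⟨ΔX, hBX'⟩ := hBX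
  obtain ⟨ΔY, hBY'⟩ := hBY
  obtain ⟨hmx, ⟨Bx, hbx⟩, hmex, _hvx⟩ := hA1x
  obtain ⟨hmy, ⟨By, hby⟩, hmey, _hvy⟩ := hA1y
  have hbound : ∀ n : ℕ, 1 ≤ n →
      (∫ ω, (betaMom (k+1) (scaleMat (hadProd (pattMatrix LX x n ω) (pattMatrix LY y n ω))) -
          ∫ ω', betaMom (k+1)
            (scaleMat (hadProd (pattMatrix LX x n ω') (pattMatrix LY y n ω'))) ∂P) ^ 2 ∂P)
        ≤ (((Fintype.card (S4.SH k ΔX) + Fintype.card (S4.SH k ΔY) : ℕ) : ℝ)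
          * (2 * (max 0 (max Bx By)) ^ (Fintype.card (Fin (k+1) × Bool)
              + Fintype.card (Fin (k+1) × Bool)))) / n := by
    intro n hn
    exact S4.var_bound LX LY x y hmx hmy hbx hby hmex hmey hindep (hBX' n) (hBY' n) hn
  constructor
  · exact ⟨_, hbound⟩
  · have hnn : ∀ n : ℕ, 0 ≤ ∫ ω, (betaMom (k+1)
        (scaleMat (hadProd (pattMatrix LX x n ω) (pattMatrix LY y n ω))) -
        ∫ ω', betaMom (k+1)
          (scaleMat (hadProd (pattMatrix LX x n ω') (pattMatrix LY y n ω'))) ∂P) ^ 2 ∂P :=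
      fun n => integral_nonneg fun ω => sq_nonneg _
    refine squeeze_zero' (g := fun n : ℕ =>
        (((Fintype.card (S4.SH k ΔX) + Fintype.card (S4.SH k ΔY) : ℕ) : ℝ)
          * (2 * (max 0 (max Bx By)) ^ (Fintype.card (Fin (k+1) × Bool)
              + Fintype.card (Fin (k+1) × Bool)))) / n)
      (Filter.Eventually.of_forall hnn) ?_
      (tendsto_const_div_atTop_nhds_zero_nat _)
    exact Filter.eventually_atTop.2 ⟨1, fun n hn => hbound n hn⟩
end

section
/- Let L_X and L_Y be symmetric link functions such that (L_X, L_Y) ⇒ L_W, i.e. for all 1 ≤ i,j,k,l ≤ n, L_X(i,j) = L_X(k,l) and L_Y(i,j) = L_Y(k,l) together imply L_W(i,j) = L_W(k,l), where L_W(i,j) := (min(i,j), max(i,j)) is the Wigner link function. Then for every n, every h, and every word w of length h, Π*_{L_X}(w) ∩ Π*_{L_Y}(w) = Π*_{L_W}(w); consequently, for every pair-matched word w of length 2k, lim_{n→∞} n^{-(1+k)} #(Π*_{L_X}(w) ∩ Π*_{L_Y}(w)) exists and equals 1 if w is Catalan and 0 otherwise. -/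
open MeasureTheory ProbabilityTheory Filter Finset
open scoped ENNReal


/-- `Π*_L(w)` for an arbitrary word `w` of length `h`, encoded as a labelling function
(the associated partition being its fibers). -/
def PiStarGen {E : Type*} (L : (n : ℕ) → Fin n → Fin n → E) {h : ℕ}
    (n : ℕ) (w : Fin h → Fin h) : Set (Circuit h n) :=
  {π | ∀ i j, w i = w j → lVal L π i = lVal L π j}

/-- A pair-matched word (as involution) is Catalan iff the pair partition is non-crossing. -/
def noncrossing {h : ℕ} (w : Fin h → Fin h) : Prop :=
  ∀ i j : Fin h, ¬(i < j ∧ j < w i ∧ w i < w j)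

instance {h : ℕ} (w : Fin h → Fin h) : Decidable (noncrossing w) :=
  inferInstanceAs (Decidable (∀ i j : Fin h, ¬(i < j ∧ j < w i ∧ w i < w j)))

/-- The Wigner link function `L_W(i,j) = (min(i,j), max(i,j))`. -/
def wigLink : (n : ℕ) → Fin n → Fin n → ℕ × ℕ := fun _ i j =>
  (min (i : ℕ) (j : ℕ), max (i : ℕ) (j : ℕ))

lemma wig_constraint {h n : ℕ} {w : Fin h → Fin h} {π : Circuit h n}
    (hπ : π ∈ PiStarPair wigLink n w) (i : Fin h) :
    min (π.1 i.castSucc : ℕ) (π.1 i.succ : ℕ) = min (π.1 (w i).castSucc : ℕ) (π.1 (w i).succ : ℕ) ∧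
    max (π.1 i.castSucc : ℕ) (π.1 i.succ : ℕ) = max (π.1 (w i).castSucc : ℕ) (π.1 (w i).succ : ℕ) := by
  have := hπ i
  simpa [lVal, wigLink, Prod.ext_iff] using this

lemma wig_determined {h n : ℕ} {w : Fin h → Fin h} {π π' : Circuit h n}
    (hπ : π ∈ PiStarPair wigLink n w) (hπ' : π' ∈ PiStarPair wigLink n w)
    (hfix : ∀ i, w i ≠ i)
    (h0 : π.1 0 = π'.1 0)
    (hop : ∀ i : Fin h, i < w i → π.1 i.succ = π'.1 i.succ) :
    π = π' := by
  suffices key : ∀ m : ℕ, ∀ p : Fin (h+1), (p:ℕ) = m → π.1 p = π'.1 p by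
    apply Subtype.ext; funext p; exact key p p rfl
  intro m
  induction m using Nat.strong_induction_on with
  | _ m ih =>
    intro p hp
    cases m with
    | zero => have hp0 : p = 0 := Fin.ext (by simp [hp]); rw [hp0]; exact h0
    | succ t =>
      have ht : t < h := by have := p.isLt; omega
      set i : Fin h := ⟨t, ht⟩ with hi
      have hps : p = i.succ := Fin.ext (by simp [hp, hi])
      rcases lt_trichotomy i (w i) with hlt | heq | hgt
      · rw [hps]; exact hop i hlt
      · exact absurd heq.symm (hfix i)
      · have hc := wig_constraint hπ i
        have hc' := wig_constraint hπ' i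
        have hjt : (w i : ℕ) < t := hgt
        have e1 : π.1 i.castSucc = π'.1 i.castSucc := ih t (by omega) _ (by simp [hi])
        have e2 : π.1 (w i).castSucc = π'.1 (w i).castSucc := ih (w i : ℕ) (by omega) _ (by simp)
        have e3 : π.1 (w i).succ = π'.1 (w i).succ := ih ((w i : ℕ)+1) (by omega) _ (by simp)
        have v1 := congrArg Fin.val e1
        have v2 := congrArg Fin.val e2
        have v3 := congrArg Fin.val e3
        rw [hps]
        exact Fin.ext (by omega)


def wigBuild {h n : ℕ} (w : Fin h → Fin h) (g0 : Fin n)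
    (g : {i : Fin h // i < w i} → Fin n) : ℕ → Fin n
  | 0 => g0
  | (t+1) =>
    if hh : t < h then
      if hcl : (w ⟨t, hh⟩ : ℕ) < t then wigBuild w g0 g (w ⟨t, hh⟩ : ℕ)
      else if hop : (⟨t, hh⟩ : Fin h) < w ⟨t, hh⟩ then g ⟨⟨t, hh⟩, hop⟩ else g0
    else g0
  decreasing_by omega

lemma wigBuild_closing {h n : ℕ} {w : Fin h → Fin h} {g0 : Fin n}
    {g : {i : Fin h // i < w i} → Fin n} {i : Fin h} (hcl : w i < i) :
    wigBuild w g0 g ((i:ℕ)+1) = wigBuild w g0 g (w i : ℕ) := by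
  have hh : (i:ℕ) < h := i.isLt
  have : (⟨(i:ℕ), hh⟩ : Fin h) = i := rfl
  rw [wigBuild]
  rw [dif_pos hh, this, dif_pos (show (w i : ℕ) < (i:ℕ) from hcl)]

lemma wigBuild_opening {h n : ℕ} {w : Fin h → Fin h} {g0 : Fin n}
    {g : {i : Fin h // i < w i} → Fin n} {i : Fin h} (hop : i < w i) :
    wigBuild w g0 g ((i:ℕ)+1) = g ⟨i, hop⟩ := by
  have hh : (i:ℕ) < h := i.isLt
  have : (⟨(i:ℕ), hh⟩ : Fin h) = i := rfl
  rw [wigBuild]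
  rw [dif_pos hh]
  rw [this, dif_neg (show ¬ (w i : ℕ) < (i:ℕ) by
    have : (i:ℕ) < (w i : ℕ) := hop; omega), dif_pos hop]

lemma wigBuild_claimC {h n : ℕ} {w : Fin h → Fin h}
    (hinv : ∀ i, w (w i) = i) (hfix : ∀ i, w i ≠ i) (hnc : noncrossing w)
    (g0 : Fin n) (g : {i : Fin h // i < w i} → Fin n) :
    ∀ d s e : ℕ, e - s ≤ d → s ≤ e → e ≤ h →
      (∀ u : Fin h, s ≤ (u:ℕ) → (u:ℕ) < e → s ≤ (w u : ℕ) ∧ (w u : ℕ) < e) →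
      wigBuild w g0 g e = wigBuild w g0 g s := by
  intro d
  induction d with
  | zero =>
    intro s e hd hse _ _
    have hes : e = s := by omega
    rw [hes]
  | succ d ih =>
    intro s e hd hse he hSM
    rcases eq_or_lt_of_le hse with rfl | hlt
    · rfl
    · have hsh : s < h := by omega
      set i : Fin h := ⟨s, hsh⟩ with hidef
      have hiv : (i:ℕ) = s := rfl
      obtain ⟨hm1, hm2⟩ := hSM i (le_refl s) hlt
      have hms : (w i : ℕ) ≠ s := by
        intro hc; exact hfix i (Fin.ext (by rw [hc]))
      have hsm : s < (w i : ℕ) := by omega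
      -- I1 : the interval (s, w i) is self-matched
      have hI1 : ∀ u : Fin h, s+1 ≤ (u:ℕ) → (u:ℕ) < (w i : ℕ) →
          s+1 ≤ (w u : ℕ) ∧ (w u : ℕ) < (w i : ℕ) := by
        intro u hu1 hu2
        obtain ⟨ha, hb⟩ := hSM u (by omega) (by omega)
        have hne1 : (w u : ℕ) ≠ s := by
          intro hc
          have : w u = i := Fin.ext (by rw [hc])
          have : u = w i := by rw [← hinv u, this]
          rw [this] at hu2; omega
        have hne2 : w u ≠ w i := by
          intro hc
          have : u = i := by rw [← hinv u, hc, hinv]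
          rw [this] at hu1; omega
        have hlt2 : (w u : ℕ) < (w i : ℕ) := by
          rcases lt_trichotomy (w u : ℕ) (w i : ℕ) with h1 | h1 | h1
          · exact h1
          · exact absurd (Fin.ext h1) hne2
          · exact absurd ⟨Fin.lt_def.mpr (show (i:ℕ) < (u:ℕ) by omega),
              Fin.lt_def.mpr hu2, Fin.lt_def.mpr h1⟩ (hnc i u)
        omega
      -- I2 : the interval (w i, e) is self-matched
      have hI2 : ∀ u : Fin h, (w i : ℕ)+1 ≤ (u:ℕ) → (u:ℕ) < e →
          (w i : ℕ)+1 ≤ (w u : ℕ) ∧ (w u : ℕ) < e := by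
        intro u hu1 hu2
        obtain ⟨ha, hb⟩ := hSM u (by omega) hu2
        have hne1 : (w u : ℕ) ≠ s := by
          intro hc
          have : w u = i := Fin.ext (by rw [hc])
          have : u = w i := by rw [← hinv u, this]
          rw [this] at hu1; omega
        have hne2 : (w u : ℕ) ≠ (w i : ℕ) := by
          intro hc
          have : u = i := by rw [← hinv u, Fin.ext hc, hinv]
          rw [this] at hu1; omega
        have : ¬ ((w u : ℕ) < (w i : ℕ)) := by
          intro hc
          obtain ⟨hc1, hc2⟩ := hI1 (w u) (by omega) hc
          rw [hinv] at hc1 hc2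
          omega
        omega
      have step1 : wigBuild w g0 g e = wigBuild w g0 g ((w i : ℕ) + 1) :=
        ih ((w i : ℕ)+1) e (by omega) (by omega) he hI2
      have hwm : (w ⟨(w i : ℕ), (w i).isLt⟩ : ℕ) = s := by
        have : (⟨(w i : ℕ), (w i).isLt⟩ : Fin h) = w i := rfl
        rw [this, hinv]
      have step2 : wigBuild w g0 g ((w i : ℕ) + 1) = wigBuild w g0 g s := by
        have hcl : w (w i) < w i := by
          rw [hinv]; exact Fin.lt_def.mpr (by omega)
        rw [wigBuild_closing hcl, hinv]
      rw [step1, step2]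

lemma interior_selfmatched {h : ℕ} {w : Fin h → Fin h}
    (hinv : ∀ i, w (w i) = i) (hnc : noncrossing w) {i : Fin h} (hcl : w i < i) :
    ∀ u : Fin h, (w i : ℕ)+1 ≤ (u:ℕ) → (u:ℕ) < (i:ℕ) →
      (w i : ℕ)+1 ≤ (w u : ℕ) ∧ (w u : ℕ) < (i:ℕ) := by
  intro u hu1 hu2
  have hji : (w i : ℕ) < (i:ℕ) := hcl
  have hne1 : (w u : ℕ) ≠ (w i : ℕ) := by
    intro hc
    have : u = i := by rw [← hinv u, Fin.ext hc, hinv]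
    rw [this] at hu2; omega
  have hne2 : (w u : ℕ) ≠ (i:ℕ) := by
    intro hc
    have : u = w i := by rw [← hinv u, Fin.ext hc]
    rw [this] at hu1; omega
  constructor
  · by_contra hcon
    push_neg at hcon
    have hx : (w u : ℕ) < (w i : ℕ) := by omega
    refine absurd ⟨?_, ?_, ?_⟩ (hnc (w u) (w i))
    · exact Fin.lt_def.mpr hx
    · simp only [hinv]; exact Fin.lt_def.mpr (by omega)
    · simp only [hinv]; exact Fin.lt_def.mpr (by omega)
  · by_contra hcon
    push_neg at hcon
    have hx : (i:ℕ) < (w u : ℕ) := by omega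
    refine absurd ⟨?_, ?_, ?_⟩ (hnc (w i) u)
    · exact Fin.lt_def.mpr (by omega)
    · simp only [hinv]; exact Fin.lt_def.mpr (by omega)
    · simp only [hinv]; exact Fin.lt_def.mpr hx

/-- The circuit built from generating data, for a noncrossing pair-matched word. -/
def wigCircuit {h n : ℕ} (w : Fin h → Fin h)
    (hinv : ∀ i, w (w i) = i) (hfix : ∀ i, w i ≠ i) (hnc : noncrossing w)
    (g0 : Fin n) (g : {i : Fin h // i < w i} → Fin n) : Circuit h n :=
  ⟨fun p => wigBuild w g0 g (p:ℕ), by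
    show wigBuild w g0 g ((0 : Fin (h+1)) : ℕ) = wigBuild w g0 g ((Fin.last h : Fin (h+1)) : ℕ)
    have h0 : ((0 : Fin (h+1)) : ℕ) = 0 := rfl
    have hl : ((Fin.last h : Fin (h+1)) : ℕ) = h := rfl
    rw [h0, hl]
    exact (wigBuild_claimC hinv hfix hnc g0 g h 0 h (by omega) (by omega) (le_refl h)
      (fun u _ _ => ⟨Nat.zero_le _, (w u).isLt⟩)).symm⟩

lemma wigCircuit_mem {h n : ℕ} {w : Fin h → Fin h}
    (hinv : ∀ i, w (w i) = i) (hfix : ∀ i, w i ≠ i) (hnc : noncrossing w)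
    (g0 : Fin n) (g : {i : Fin h // i < w i} → Fin n) :
    wigCircuit w hinv hfix hnc g0 g ∈ PiStarPair wigLink n w := by
  set π := wigCircuit w hinv hfix hnc g0 g with hπ
  have hval : ∀ p : Fin (h+1), π.1 p = wigBuild w g0 g (p:ℕ) := fun p => rfl
  have hclosing : ∀ i : Fin h, w i < i → lVal wigLink π i = lVal wigLink π (w i) := by
    intro i hcl
    have hji : (w i : ℕ) < (i:ℕ) := hcl
    have e1 : π.1 i.succ = wigBuild w g0 g (w i : ℕ) := by
      rw [hval]
      have : ((i.succ : Fin (h+1)) : ℕ) = (i:ℕ)+1 := rfl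
      rw [this, wigBuild_closing hcl]
    have e2 : π.1 i.castSucc = wigBuild w g0 g ((w i : ℕ)+1) := by
      rw [hval]
      have : ((i.castSucc : Fin (h+1)) : ℕ) = (i:ℕ) := rfl
      rw [this]
      exact wigBuild_claimC hinv hfix hnc g0 g ((i:ℕ) - ((w i : ℕ)+1)) ((w i : ℕ)+1) (i:ℕ)
        (by omega) (by omega) (by omega) (interior_selfmatched hinv hnc hcl)
    have e3 : π.1 (w i).succ = wigBuild w g0 g ((w i : ℕ)+1) := by rw [hval]; rfl
    have e4 : π.1 (w i).castSucc = wigBuild w g0 g (w i : ℕ) := by rw [hval]; rfl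
    show wigLink n (π.1 i.castSucc) (π.1 i.succ) = wigLink n (π.1 (w i).castSucc) (π.1 (w i).succ)
    rw [e1, e2, e3, e4]
    unfold wigLink
    rw [Prod.mk.injEq]
    constructor
    · exact min_comm _ _
    · exact max_comm _ _
  intro i
  rcases lt_trichotomy (w i) i with hlt | heq | hgt
  · exact hclosing i hlt
  · exact absurd heq (hfix i)
  · have : w (w i) < w i := by rw [hinv]; exact hgt
    have := hclosing (w i) this
    rw [hinv] at this
    exact this.symm

lemma crossing_noninj {h n : ℕ} {w : Fin h → Fin h}
    (hinv : ∀ i, w (w i) = i) (hfix : ∀ i, w i ≠ i) {π : Circuit h n}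
    (hπ : π ∈ PiStarPair wigLink n w)
    (hg0 : ∀ o : Fin h, o < w o → π.1 o.succ ≠ π.1 0)
    (hgg : ∀ o o' : Fin h, o < w o → o' < w o' → π.1 o.succ = π.1 o'.succ → o = o') :
    noncrossing w := by
  have pos : ∀ (p q : Fin (h+1)), (p:ℕ) = (q:ℕ) → π.1 p = π.1 q :=
    fun p q hpq => congrArg π.1 (Fin.ext hpq)
  -- Claim D : every value is a generating value from an earlier generating position
  have claimD : ∀ m : ℕ, ∀ p : Fin (h+1), (p:ℕ) = m →
      (π.1 p = π.1 0 ∨ ∃ o : Fin h, o < w o ∧ (o:ℕ)+1 ≤ (p:ℕ) ∧ π.1 p = π.1 o.succ) := by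
    intro m
    induction m using Nat.strong_induction_on with
    | _ m ih =>
      intro p hp
      cases m with
      | zero => left; exact pos p 0 (by simp [hp])
      | succ t =>
        have ht : t < h := by have := p.isLt; omega
        set i : Fin h := ⟨t, ht⟩ with hi
        have hps : π.1 p = π.1 i.succ := pos p i.succ (by simp [hp, hi])
        rcases lt_trichotomy i (w i) with hlt | heq | hgt
        · right; exact ⟨i, hlt, by simp [hp, hi], hps⟩
        · exact absurd heq.symm (hfix i)
        · -- closing : value equals an earlier value
          have hc := wig_constraint hπ i
          have hjv : (w i : ℕ) < t := hgt
          have hin : (π.1 i.succ : ℕ) = (π.1 (w i).castSucc : ℕ) ∨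
              (π.1 i.succ : ℕ) = (π.1 (w i).succ : ℕ) := by omega
          have key : ∃ q : Fin (h+1), (q:ℕ) ≤ t ∧ π.1 p = π.1 q := by
            rcases hin with hv | hv
            · exact ⟨(w i).castSucc, by simp; omega, hps.trans (Fin.ext hv)⟩
            · exact ⟨(w i).succ, by simp; omega, hps.trans (Fin.ext hv)⟩
          obtain ⟨q, hq1, hq2⟩ := key
          rcases ih (q:ℕ) (by omega) q rfl with h1 | ⟨o, ho1, ho2, ho3⟩
          · left; exact hq2.trans h1
          · right; exact ⟨o, ho1, by omega, hq2.trans ho3⟩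
  -- freshness
  have fresh : ∀ o : Fin h, o < w o → ∀ q : Fin (h+1), (q:ℕ) ≤ (o:ℕ) →
      π.1 q ≠ π.1 o.succ := by
    intro o ho q hq heq
    rcases claimD (q:ℕ) q rfl with h1 | ⟨o', ho', hb, h2⟩
    · exact hg0 o ho (heq.symm.trans h1)
    · have : o' = o := hgg o' o ho' ho (h2.symm.trans heq)
      rw [this] at hb
      omega
  -- the main induction
  have main : ∀ m : ℕ, ∀ hm : m ≤ h,
      ((∃ mx : Fin h, ((mx:ℕ) < m ∧ m ≤ (w mx : ℕ)) ∧
          (∀ o : Fin h, (o:ℕ) < m → m ≤ (w o : ℕ) → o ≤ mx) ∧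
          π.1 ⟨m, by omega⟩ = π.1 mx.succ) ∨
        ((∀ o : Fin h, ¬((o:ℕ) < m ∧ m ≤ (w o : ℕ))) ∧ π.1 ⟨m, by omega⟩ = π.1 0)) ∧
      (∀ q : Fin h, w q < q → (q:ℕ) < m →
        ∀ o : Fin h, (o:ℕ) < (q:ℕ) → (q:ℕ) ≤ (w o : ℕ) → o ≤ w q) := by
    intro m
    induction m using Nat.strong_induction_on with
    | _ m ih =>
      intro hm
      cases m with
      | zero =>
        refine ⟨Or.inr ⟨fun o hc => by omega, pos _ 0 rfl⟩, fun q _ hq => by omega⟩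
      | succ p =>
        have hp : p < h := by omega
        obtain ⟨valp, maxp⟩ := ih p (by omega) (by omega)
        set i : Fin h := ⟨p, hp⟩ with hi
        have hiv : (i:ℕ) = p := rfl
        rcases lt_trichotomy i (w i) with hop | heq | hcl
        · -- opening step
          have hwi : p < (w i : ℕ) := hop
          constructor
          · left
            refine ⟨i, ⟨by omega, by omega⟩, ?_, pos _ i.succ (by simp [hi])⟩
            intro o ho1 _
            exact Fin.le_def.mpr (by omega)
          · intro q hq1 hq2 o ho1 ho2
            rcases Nat.lt_succ_iff_lt_or_eq.mp hq2 with h1 | h1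
            · exact maxp q hq1 h1 o ho1 ho2
            · exfalso
              have : q = i := Fin.ext h1
              rw [this] at hq1
              have : (w i : ℕ) < p := hq1
              omega
        · exact absurd heq.symm (hfix i)
        · -- closing step
          have hjv : (w i : ℕ) < p := hcl
          set j : Fin h := w i with hj
          have hwj : (w j : ℕ) = p := by rw [hj, hinv]
          have hc := wig_constraint hπ i
          rw [← hj] at hc
          -- from Val(p) : the maximum of A_p is j and π(p) = π(j.succ)
          have hApj : (j:ℕ) < p ∧ p ≤ (w j : ℕ) := ⟨hjv, by omega⟩
          rcases valp with ⟨mx, hmx1, hmx2, hmx3⟩ | ⟨hemp, _⟩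
          swap
          · exact absurd hApj (hemp j)
          have hjmx : j ≤ mx := hmx2 j hApj.1 hApj.2
          have hmxop : mx < w mx := Fin.lt_def.mpr (by omega)
          have hval_p : π.1 i.castSucc = π.1 mx.succ :=
            (pos i.castSucc ⟨p, by omega⟩ (by simp [hi])).trans hmx3
          have hmxj : mx = j := by
            by_contra hne
            have hlt : (j:ℕ) < (mx:ℕ) := lt_of_le_of_ne (Fin.le_def.mp hjmx)
              (by intro hc'; exact hne (Fin.ext hc'.symm))
            have hin : π.1 i.castSucc = π.1 j.castSucc ∨ π.1 i.castSucc = π.1 j.succ := by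
              rcases (by omega : (π.1 i.castSucc : ℕ) = (π.1 j.castSucc : ℕ) ∨
                  (π.1 i.castSucc : ℕ) = (π.1 j.succ : ℕ)) with hv | hv
              · exact Or.inl (Fin.ext hv)
              · exact Or.inr (Fin.ext hv)
            rcases hin with hv | hv
            · exact fresh mx hmxop j.castSucc (by simp; omega) (hv.symm.trans hval_p)
            · exact fresh mx hmxop j.succ (by simp; omega) (hv.symm.trans hval_p)
          rw [hmxj] at hmx2 hval_p
          -- hence π(p+1) = π(j.castSucc)
          have hval_p1 : π.1 i.succ = π.1 j.castSucc := by
            have v1 : (π.1 i.castSucc : ℕ) = (π.1 j.succ : ℕ) := congrArg Fin.val hval_p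
            exact Fin.ext (by omega)
          -- A_{p+1} = A_{j}
          have hAiff : ∀ o : Fin h, ((o:ℕ) < p+1 ∧ p+1 ≤ (w o : ℕ)) ↔
              ((o:ℕ) < (j:ℕ) ∧ (j:ℕ) ≤ (w o : ℕ)) := by
            intro o
            constructor
            · rintro ⟨h1, h2⟩
              have honei : o ≠ i := by
                intro hc'; rw [hc'] at h2; omega
              have h1' : (o:ℕ) < p := by
                rcases Nat.lt_succ_iff_lt_or_eq.mp h1 with h' | h'
                · exact h'
                · exact absurd (Fin.ext h') honei
              refine ⟨?_, by omega⟩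
              by_contra hcon
              push_neg at hcon
              have : o ≤ j := hmx2 o h1' (by omega)
              have : (o:ℕ) ≤ (j:ℕ) := Fin.le_def.mp this
              have : o = j := Fin.ext (by omega)
              rw [this] at h2; omega
            · rintro ⟨h1, h2⟩
              refine ⟨by omega, ?_⟩
              by_contra hcon
              push_neg at hcon
              have hne1 : w o ≠ j := by
                intro hc'
                have : o = i := by rw [← hinv o, hc', hj, hinv]
                rw [this] at h1; rw [hiv] at h1; omega
              have hne2 : (w o : ℕ) ≠ p := by
                intro hc'
                have : w o = i := Fin.ext hc'
                have : o = j := by rw [← hinv o, this]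
                rw [this] at h1; omega
              have hband : (j:ℕ) < (w o : ℕ) ∧ (w o : ℕ) < p := by
                constructor
                · rcases lt_or_eq_of_le h2 with h' | h'
                  · exact h'
                  · exact absurd (Fin.ext h'.symm) hne1
                · omega
              -- q := w o is a closing index with q < p ; j ∈ A_q contradicts max = o
              have hqcl : w (w o) < w o := by
                rw [hinv]; exact Fin.lt_def.mpr (by omega)
              have := maxp (w o) hqcl hband.2 j (by omega) (by omega)
              rw [hinv] at this
              have : (j:ℕ) ≤ (o:ℕ) := Fin.le_def.mp this
              omega
          -- value at p+1 equals value at j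
          have hvj : π.1 ⟨p+1, by omega⟩ = π.1 ⟨(j:ℕ), by omega⟩ := by
            refine (pos _ i.succ (by simp [hi])).trans (hval_p1.trans (pos _ _ (by simp)))
          obtain ⟨valj, _⟩ := ih (j:ℕ) (by omega) (by omega)
          constructor
          · rcases valj with ⟨mx', hmx'1, hmx'2, hmx'3⟩ | ⟨hemp, hval0⟩
            · left
              exact ⟨mx', (hAiff mx').mpr hmx'1, fun o ho1 ho2 => hmx'2 o
                (((hAiff o).mp ⟨ho1, ho2⟩).1) (((hAiff o).mp ⟨ho1, ho2⟩).2),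
                hvj.trans hmx'3⟩
            · right
              refine ⟨fun o hc' => hemp o ((hAiff o).mp hc'), hvj.trans hval0⟩
          · intro q hq1 hq2 o ho1 ho2
            rcases Nat.lt_succ_iff_lt_or_eq.mp hq2 with h1 | h1
            · exact maxp q hq1 h1 o ho1 ho2
            · have : q = i := Fin.ext h1
              rw [this]
              rw [this] at ho1 ho2
              exact hmx2 o (by omega) (by omega)
  -- conclude noncrossing
  rintro a b ⟨h1, h2, h3⟩
  have hacl : (a:ℕ) < (w a : ℕ) := by
    have := Fin.lt_def.mp h1
    have := Fin.lt_def.mp h2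
    omega
  have hqcl : w (w a) < w a := by rw [hinv]; exact Fin.lt_def.mpr hacl
  have := (main h (le_refl h)).2 (w a) hqcl (w a).isLt b
    (Fin.lt_def.mp h2) (le_of_lt (Fin.lt_def.mp h3))
  rw [hinv] at this
  have := Fin.le_def.mp this
  have := Fin.lt_def.mp h1
  omega

lemma catalan_nat_card {h n : ℕ} {w : Fin h → Fin h}
    (hinv : ∀ i, w (w i) = i) (hfix : ∀ i, w i ≠ i) (hnc : noncrossing w) :
    Nat.card ↥(PiStarPair wigLink n w) =
      n ^ (1 + Fintype.card {i : Fin h // i < w i}) := by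
  classical
  have hbij : Function.Bijective (fun π : ↥(PiStarPair wigLink n w) =>
      ((π.1.1 0, fun o : {i : Fin h // i < w i} => π.1.1 o.1.succ) :
        Fin n × ({i : Fin h // i < w i} → Fin n))) := by
    constructor
    · intro a b hab
      have h0 := congrArg Prod.fst hab
      have hs := congrArg Prod.snd hab
      exact Subtype.ext (wig_determined a.2 b.2 hfix h0 (fun i hi => congrFun hs ⟨i, hi⟩))
    · rintro ⟨g0, g⟩
      refine ⟨⟨wigCircuit w hinv hfix hnc g0 g, wigCircuit_mem hinv hfix hnc g0 g⟩, ?_⟩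
      refine Prod.ext ?_ ?_
      · show wigBuild w g0 g ((0:Fin (h+1)):ℕ) = g0
        rw [show ((0:Fin (h+1)):ℕ) = 0 from rfl, wigBuild]
      · funext o
        show wigBuild w g0 g ((o.1.succ : Fin (h+1)) : ℕ) = g o
        rw [show ((o.1.succ : Fin (h+1)) : ℕ) = (o.1:ℕ)+1 from rfl, wigBuild_opening o.2]
  rw [Nat.card_eq_of_bijective _ hbij, Nat.card_eq_fintype_card, Fintype.card_prod,
    Fintype.card_fun, Fintype.card_fin, pow_add, pow_one]

lemma card_openings {k : ℕ} {w : Fin (2*k) → Fin (2*k)}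
    (hinv : ∀ i, w (w i) = i) (hfix : ∀ i, w i ≠ i) :
    Fintype.card {i : Fin (2*k) // i < w i} = k := by
  classical
  have h1 : Fintype.card {i : Fin (2*k) // i < w i} =
      (univ.filter (fun i : Fin (2*k) => i < w i)).card := Fintype.card_subtype _
  have hcard : (univ.filter (fun i : Fin (2*k) => i < w i)).card =
      (univ.filter (fun i : Fin (2*k) => w i < i)).card := by
    apply Finset.card_bij (fun i _ => w i)
    · intro a ha
      simp only [mem_filter, mem_univ, true_and] at ha ⊢
      rw [hinv]; exact ha
    · intro a ha b hb hab
      rw [← hinv a, hab, hinv]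
    · intro b hb
      simp only [mem_filter, mem_univ, true_and] at hb ⊢
      exact ⟨w b, by rw [hinv]; exact hb, hinv b⟩
  have heq : (univ.filter (fun i : Fin (2*k) => w i < i)) =
      (univ.filter (fun i : Fin (2*k) => ¬ i < w i)) := by
    apply filter_congr
    intro i _
    constructor
    · exact fun h' => asymm h'
    · intro h'
      exact lt_of_le_of_ne (not_lt.mp h') (hfix i)
  have hsplit := card_filter_add_card_filter_not
    (s := (univ : Finset (Fin (2*k)))) (fun i : Fin (2*k) => i < w i)
  rw [card_univ, Fintype.card_fin] at hsplit
  rw [heq] at hcard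
  omega

lemma crossing_card_le {k n : ℕ} {w : Fin (2*k) → Fin (2*k)}
    (hinv : ∀ i, w (w i) = i) (hfix : ∀ i, w i ≠ i) (hcr : ¬ noncrossing w) :
    Nat.card ↥(PiStarPair wigLink n w) ≤ n^(k+1) - Nat.descFactorial n (k+1) := by
  classical
  set Op := {i : Fin (2*k) // i < w i} with hOp
  have hcOp : Fintype.card Op = k := card_openings hinv hfix
  let G : ↥(PiStarPair wigLink n w) → (Option Op → Fin n) := fun π x =>
    Option.rec (π.1.1 0) (fun o => π.1.1 o.1.succ) x
  have hnoninj : ∀ π : ↥(PiStarPair wigLink n w), ¬ Function.Injective (G π) := by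
    intro π hinj
    apply hcr
    apply crossing_noninj hinv hfix π.2
    · intro o ho hval
      have : (some (⟨o, ho⟩ : Op)) = (none : Option Op) := hinj hval
      exact Option.some_ne_none _ this
    · intro o o' ho ho' hval
      have : (some (⟨o, ho⟩ : Op)) = some (⟨o', ho'⟩ : Op) := hinj hval
      have := Option.some.inj this
      exact congrArg Subtype.val this
  let F : ↥(PiStarPair wigLink n w) → {f : Option Op → Fin n // ¬ Function.Injective f} :=
    fun π => ⟨G π, hnoninj π⟩
  have hF : Function.Injective F := by
    intro a b hab
    have hG : G a = G b := congrArg Subtype.val hab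
    refine Subtype.ext (wig_determined a.2 b.2 hfix (congrFun hG none)
      (fun i hi => congrFun hG (some ⟨i, hi⟩)))
  have hle := Nat.card_le_card_of_injective F hF
  have hcardT : Nat.card {f : Option Op → Fin n // ¬ Function.Injective f} =
      n^(k+1) - Nat.descFactorial n (k+1) := by
    rw [Nat.card_eq_fintype_card, Fintype.card_subtype_compl]
    have e1 : Fintype.card (Option Op → Fin n) = n ^ (k+1) := by
      rw [Fintype.card_fun, Fintype.card_fin, Fintype.card_option, hcOp]
    have e2 : Fintype.card {f : Option Op → Fin n // Function.Injective f} =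
        Nat.descFactorial n (k+1) := by
      rw [Fintype.card_congr (Equiv.subtypeInjectiveEquivEmbedding (Option Op) (Fin n)),
        Fintype.card_embedding_eq, Fintype.card_fin, Fintype.card_option, hcOp]
    rw [e1, e2]
  rw [hcardT] at hle
  exact hle

lemma tendsto_descFactorial_div (m : ℕ) :
    Tendsto (fun n : ℕ => (Nat.descFactorial n m : ℝ) / (n:ℝ)^m) atTop (nhds 1) := by
  induction m with
  | zero => simpa using (tendsto_const_nhds : Tendsto (fun _ : ℕ => (1:ℝ)) atTop (nhds 1))
  | succ m ihm =>
    have h0 : Tendsto (fun n : ℕ => 1 - (m:ℝ)/(n:ℝ)) atTop (nhds 1) := by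
      have := (tendsto_const_nhds (x := (1:ℝ)) (f := atTop (α := ℕ))).sub
        (tendsto_const_div_atTop_nhds_zero_nat (m:ℝ))
      simpa using this
    refine Tendsto.congr' ?_ (by simpa using h0.mul ihm)
    filter_upwards [eventually_ge_atTop (m+1)] with n hn
    have hn0 : (n:ℝ) ≠ 0 := Nat.cast_ne_zero.mpr (by omega)
    rw [Nat.descFactorial_succ]
    push_cast [Nat.cast_sub (by omega : m ≤ n)]
    have hsub : (1 - (m:ℝ)/(n:ℝ)) = ((n:ℝ) - (m:ℝ))/(n:ℝ) := by field_simp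
    rw [hsub, div_mul_div_comm, pow_succ, mul_comm ((n:ℝ)^m) (n:ℝ)]

lemma wig_eq_cases {n : ℕ} {a b c d : Fin n} (hw : wigLink n a b = wigLink n c d) :
    (a = c ∧ b = d) ∨ (a = d ∧ b = c) := by
  have h1 : min (a:ℕ) (b:ℕ) = min (c:ℕ) (d:ℕ) ∧ max (a:ℕ) (b:ℕ) = max (c:ℕ) (d:ℕ) := by
    simpa [wigLink, Prod.ext_iff] using hw
  rcases (by omega : ((a:ℕ) = (c:ℕ) ∧ (b:ℕ) = (d:ℕ)) ∨ ((a:ℕ) = (d:ℕ) ∧ (b:ℕ) = (c:ℕ))) with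
    ⟨x, y⟩ | ⟨x, y⟩
  · exact Or.inl ⟨Fin.ext x, Fin.ext y⟩
  · exact Or.inr ⟨Fin.ext x, Fin.ext y⟩

/-- if `(L_X, L_Y) ⇒ L_W` then `Π*_X(w) ∩ Π*_Y(w) = Π*_W(w)`, and the joint
word limits are `1` on Catalan words and `0` otherwise. -/
theorem statement11
    {E E' : Type*} [DecidableEq E] [DecidableEq E']
    (LX : (n : ℕ) → Fin n → Fin n → E) (LY : (n : ℕ) → Fin n → Fin n → E')
    (hsX : symmLink LX) (hsY : symmLink LY)
    (himp : ∀ (n : ℕ) (i j k l : Fin n),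
      LX n i j = LX n k l → LY n i j = LY n k l →
      (min (i : ℕ) (j : ℕ), max (i : ℕ) (j : ℕ)) =
        (min (k : ℕ) (l : ℕ), max (k : ℕ) (l : ℕ))) :
    (∀ (h n : ℕ) (w : Fin h → Fin h),
      PiStarGen LX n w ∩ PiStarGen LY n w = PiStarGen wigLink n w) ∧
    (∀ k, 1 ≤ k → ∀ w : Fin (2 * k) → Fin (2 * k), pairMatchedWord w →
      Tendsto (fun n : ℕ =>
          (Nat.card ↥(PiStarPair LX n w ∩ PiStarPair LY n w) : ℝ) / (n : ℝ) ^ (1 + k))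
        atTop (nhds (if noncrossing w then (1 : ℝ) else 0))) := by
  constructor
  · intro h n w
    ext π
    simp only [Set.mem_inter_iff, PiStarGen, Set.mem_setOf_eq]
    constructor
    · rintro ⟨hX, hY⟩ i j hij
      exact himp n _ _ _ _ (hX i j hij) (hY i j hij)
    · intro hW
      constructor
      · intro i j hij
        rcases wig_eq_cases (hW i j hij) with ⟨x, y⟩ | ⟨x, y⟩
        · show LX n _ _ = LX n _ _
          rw [x, y]
        · show LX n _ _ = LX n _ _
          rw [x, y]
          exact hsX n _ _
      · intro i j hij
        rcases wig_eq_cases (hW i j hij) with ⟨x, y⟩ | ⟨x, y⟩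
        · show LY n _ _ = LY n _ _
          rw [x, y]
        · show LY n _ _ = LY n _ _
          rw [x, y]
          exact hsY n _ _
  · intro k _hk w hw
    obtain ⟨hinv, hfix⟩ := hw
    have hsetEq : ∀ n : ℕ, (PiStarPair LX n w ∩ PiStarPair LY n w) = PiStarPair wigLink n w := by
      intro n
      ext π
      simp only [Set.mem_inter_iff, PiStarPair, Set.mem_setOf_eq]
      constructor
      · rintro ⟨hX, hY⟩ i
        exact himp n _ _ _ _ (hX i) (hY i)
      · intro hW
        constructor
        · intro i
          rcases wig_eq_cases (hW i) with ⟨x, y⟩ | ⟨x, y⟩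
          · show LX n _ _ = LX n _ _
            rw [x, y]
          · show LX n _ _ = LX n _ _
            rw [x, y]
            exact hsX n _ _
        · intro i
          rcases wig_eq_cases (hW i) with ⟨x, y⟩ | ⟨x, y⟩
          · show LY n _ _ = LY n _ _
            rw [x, y]
          · show LY n _ _ = LY n _ _
            rw [x, y]
            exact hsY n _ _
    have hcardEq : ∀ n : ℕ, Nat.card ↥(PiStarPair LX n w ∩ PiStarPair LY n w) =
        Nat.card ↥(PiStarPair wigLink n w) := fun n => by rw [hsetEq n]
    by_cases hnc : noncrossing w
    · rw [if_pos hnc]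
      have hcard : ∀ n : ℕ, Nat.card ↥(PiStarPair wigLink n w) = n ^ (1+k) := by
        intro n
        rw [catalan_nat_card hinv hfix hnc, card_openings hinv hfix]
      refine Tendsto.congr' ?_ tendsto_const_nhds
      filter_upwards [eventually_ge_atTop 1] with n hn
      rw [hcardEq n, hcard n]
      have hn0 : (0:ℝ) < (n:ℝ) := by exact_mod_cast Nat.lt_of_lt_of_le Nat.zero_lt_one hn
      have hne : ((n:ℝ))^(1+k) ≠ 0 := by positivity
      push_cast
      rw [div_self hne]
    · rw [if_neg hnc]
      have hb : ∀ n : ℕ, Nat.card ↥(PiStarPair wigLink n w) ≤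
          n^(k+1) - Nat.descFactorial n (k+1) := fun n => crossing_card_le hinv hfix hnc
      have hg : Tendsto (fun n : ℕ =>
          1 - (Nat.descFactorial n (k+1) : ℝ)/(n:ℝ)^(k+1)) atTop (nhds 0) := by
        have := (tendsto_const_nhds (x := (1:ℝ)) (f := atTop (α := ℕ))).sub
          (tendsto_descFactorial_div (k+1))
        simpa using this
      refine tendsto_of_tendsto_of_tendsto_of_le_of_le'
        (tendsto_const_nhds (x := (0:ℝ))) hg ?_ ?_
      · filter_upwards with n
        apply div_nonneg <;> positivity
      · filter_upwards [eventually_ge_atTop 1] with n hn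
        have hn0 : (0:ℝ) < (n:ℝ) := by exact_mod_cast Nat.lt_of_lt_of_le Nat.zero_lt_one hn
        have hc : (0:ℝ) < ((n:ℝ))^(k+1) := by positivity
        have h1 : (Nat.card ↥(PiStarPair LX n w ∩ PiStarPair LY n w) : ℝ) ≤
            ((n^(k+1) - Nat.descFactorial n (k+1) : ℕ) : ℝ) := by
          rw [hcardEq n]
          exact_mod_cast hb n
        have h2 : ((n^(k+1) - Nat.descFactorial n (k+1) : ℕ) : ℝ) =
            (n:ℝ)^(k+1) - (Nat.descFactorial n (k+1) : ℝ) := by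
          rw [Nat.cast_sub (Nat.descFactorial_le_pow n (k+1))]
          push_cast
          ring
        have hpow : ((n:ℝ))^(1+k) = ((n:ℝ))^(k+1) := by rw [Nat.add_comm]
        rw [hpow]
        calc (Nat.card ↥(PiStarPair LX n w ∩ PiStarPair LY n w) : ℝ) / (n:ℝ)^(k+1)
            ≤ ((n:ℝ)^(k+1) - (Nat.descFactorial n (k+1) : ℝ))/(n:ℝ)^(k+1) := by
              apply (div_le_div_iff_of_pos_right hc).mpr
              rw [← h2]
              exact h1
          _ = 1 - (Nat.descFactorial n (k+1) : ℝ)/(n:ℝ)^(k+1) := by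
              rw [sub_div, div_self (ne_of_gt hc)]
end

section
/- Let L_H(i,j) = i+j be the Hankel link function and let w be a Catalan (non-crossing) pair-matched word of length 2k. Then for every n, every circuit π ∈ Π*_{L_H}(w) satisfies: whenever w[i] = w[j], (π(i) − π(i−1)) + (π(j) − π(j−1)) = 0. In other words, Π*_{L_H}(w) ⊆ Π'_T(w), and hence Π'_T(w) ∩ Π*_{L_H}(w) = Π*_{L_H}(w). -/
open MeasureTheory ProbabilityTheory Filter Finset
open scoped ENNReal


/-- The Hankel link function `L_H(i,j) = i + j`. -/
def hankLink : (n : ℕ) → Fin n → Fin n → ℕ := fun _ i j => (i : ℕ) + (j : ℕ)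

/-- `Π'_T(w)` : circuits with `s(i) + s(j) = 0` whenever `w[i] = w[j]`,
for a pair-matched word `w` encoded as an involution. -/
def PiPrimeT {h : ℕ} (n : ℕ) (w : Fin h → Fin h) : Set (Circuit h n) :=
  {π | ∀ i : Fin h,
    (((π.1 i.succ : ℕ) : ℤ) - ((π.1 i.castSucc : ℕ) : ℤ)) +
      (((π.1 (w i).succ : ℕ) : ℤ) - ((π.1 (w i).castSucc : ℕ) : ℤ)) = 0}

/-- Key lemma in pure ℕ form: if the edges in `[p, p+d)` are closed under the matching `w'`,
then `Q p = Q (p+d)`. -/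
lemma keyNat (h : ℕ) (w' Q : ℕ → ℕ)
    (winv : ∀ m, m < h → w' (w' m) = m)
    (wlt : ∀ m, m < h → w' m < h)
    (wne : ∀ m, m < h → w' m ≠ m)
    (nc : ∀ a b, a < h → b < h → ¬(a < b ∧ b < w' a ∧ w' a < w' b))
    (hank : ∀ x, x < h → Q x + Q (x+1) = Q (w' x) + Q (w' x + 1)) :
    ∀ d p, p + d ≤ h → (∀ x, p ≤ x → x < p + d → p ≤ w' x ∧ w' x < p + d) →
      Q p = Q (p + d) := by
  intro d
  induction d using Nat.strong_induction_on with
  | _ d IH =>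
    intro p hpd hcl
    rcases Nat.eq_zero_or_pos d with rfl | hd
    · simp
    · set q := p + d with hq
      have hqh : q - 1 < h := by omega
      obtain ⟨he1, he2⟩ := hcl (q-1) (by omega) (by omega)
      set e := w' (q-1) with he
      have hwe : w' e = q - 1 := by rw [he, winv _ hqh]
      have heq : e < q - 1 := by
        have := wne _ hqh
        omega
      have heh : e < h := wlt _ hqh
      -- inner interval: edges x with e+1 ≤ x < q-1 are closed
      have hclin : ∀ x, e + 1 ≤ x → x < q - 1 → e + 1 ≤ w' x ∧ w' x < q - 1 := by
        intro x hx1 hx2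
        have hxh : x < h := by omega
        obtain ⟨h1, h2⟩ := hcl x (by omega) (by omega)
        have hne1 : w' x ≠ e := by
          intro hEq
          have h3 : w' (w' x) = w' e := by rw [hEq]
          rw [winv _ hxh, hwe] at h3; omega
        have hne2 : w' x ≠ q - 1 := by
          intro hEq
          have h3 : w' (w' x) = w' (q-1) := by rw [hEq]
          rw [winv _ hxh, ← he] at h3; omega
        refine ⟨?_, by omega⟩
        by_contra hlt
        push_neg at hlt
        exact nc (w' x) e (wlt _ hxh) heh
          ⟨by omega, by rw [winv _ hxh]; omega, by rw [winv _ hxh, hwe]; omega⟩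
      -- apply IH to the inner interval
      have hin : Q (e+1) = Q (q-1) := by
        have hd' : q - 1 - (e+1) < d := by omega
        have := IH (q - 1 - (e+1)) hd' (e+1) (by omega) ?_
        · rwa [show (e+1) + (q - 1 - (e+1)) = q - 1 by omega] at this
        · intro x hx1 hx2
          obtain ⟨h1, h2⟩ := hclin x hx1 (by omega)
          exact ⟨h1, by omega⟩
      -- Hankel on the pair (e, q-1) gives Q e = Q q
      have heQ : Q e = Q q := by
        have h3 := hank e heh
        rw [hwe, show q - 1 + 1 = q by omega, hin] at h3
        omega
      -- outer interval: edges x with p ≤ x < e are closed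
      have hclout : ∀ x, p ≤ x → x < e → p ≤ w' x ∧ w' x < e := by
        intro x hx1 hx2
        have hxh : x < h := by omega
        obtain ⟨h1, h2⟩ := hcl x (by omega) (by omega)
        have hne1 : w' x ≠ e := by
          intro hEq
          have h3 : w' (w' x) = w' e := by rw [hEq]
          rw [winv _ hxh, hwe] at h3; omega
        have hne2 : w' x ≠ q - 1 := by
          intro hEq
          have h3 : w' (w' x) = w' (q-1) := by rw [hEq]
          rw [winv _ hxh, ← he] at h3; omega
        refine ⟨h1, ?_⟩
        by_contra hlt
        push_neg at hlt
        exact nc x e hxh heh ⟨by omega, by rw [hwe] at *; omega, by rw [hwe]; omega⟩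
      have hout : Q p = Q e := by
        have hd'' : e - p < d := by omega
        have := IH (e - p) hd'' p (by omega) ?_
        · rwa [show p + (e - p) = e by omega] at this
        · intro x hx1 hx2
          obtain ⟨h1, h2⟩ := hclout x hx1 (by omega)
          exact ⟨h1, by omega⟩
      rw [hout, heQ]

/-- For a non-crossing matching, the Hankel constraints force the Toeplitz constraints
(ℕ version). -/
lemma mainNat (h : ℕ) (w' Q : ℕ → ℕ)
    (winv : ∀ m, m < h → w' (w' m) = m)
    (wlt : ∀ m, m < h → w' m < h)
    (wne : ∀ m, m < h → w' m ≠ m)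
    (nc : ∀ a b, a < h → b < h → ¬(a < b ∧ b < w' a ∧ w' a < w' b))
    (hank : ∀ x, x < h → Q x + Q (x+1) = Q (w' x) + Q (w' x + 1)) :
    ∀ x, x < h → Q (x+1) + Q (w' x + 1) = Q x + Q (w' x) := by
  -- it suffices to handle the case a < w' a
  have key : ∀ a, a < h → a < w' a → Q (a+1) = Q (w' a) := by
    intro a hah hab
    set b := w' a with hb
    have hbh : b < h := wlt _ hah
    have hwb : w' b = a := winv _ hah
    have hcl : ∀ z, a + 1 ≤ z → z < b → a + 1 ≤ w' z ∧ w' z < b := by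
      intro z hz1 hz2
      have hzh : z < h := by omega
      have hne1 : w' z ≠ a := by
        intro hEq
        have h3 : w' (w' z) = w' a := by rw [hEq]
        rw [winv _ hzh] at h3; omega
      have hne2 : w' z ≠ b := by
        intro hEq
        have h3 : w' (w' z) = w' b := by rw [hEq]
        rw [winv _ hzh, hwb] at h3; omega
      constructor
      · by_contra hlt
        push_neg at hlt
        exact nc (w' z) a (wlt _ hzh) hah
          ⟨by omega, by rw [winv _ hzh]; omega, by rw [winv _ hzh, ← hb]; omega⟩
      · by_contra hlt
        push_neg at hlt
        exact nc a z hah hzh ⟨by omega, by omega, by omega⟩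
    have := keyNat h w' Q winv wlt wne nc hank (b - (a+1)) (a+1) (by omega) ?_
    · rwa [show (a+1) + (b - (a+1)) = b by omega] at this
    · intro x hx1 hx2
      obtain ⟨h1, h2⟩ := hcl x hx1 (by omega)
      exact ⟨h1, by omega⟩
  intro x hxh
  have hne := wne x hxh
  rcases Nat.lt_or_ge x (w' x) with hlt | hge
  · have h1 := key x hxh hlt
    have h2 := hank x hxh
    omega
  · have hwx : w' x < h := wlt _ hxh
    have hwx2 : x = w' (w' x) := (winv _ hxh).symm
    have h1 := key (w' x) hwx (by omega)
    have h2 := hank (w' x) hwx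
    rw [← hwx2] at h1 h2
    omega

/-- for a Catalan word `w`, every circuit in `Π*_{L_H}(w)` satisfies the
Toeplitz constraints, so `Π'_T(w) ∩ Π*_{L_H}(w) = Π*_{L_H}(w)`. -/
theorem statement14 (k : ℕ) (hk : 1 ≤ k)
    (w : Fin (2 * k) → Fin (2 * k))
    (hw : pairMatchedWord w) (hcat : noncrossing w) (n : ℕ) :
    (∀ π : Circuit (2 * k) n, π ∈ PiStarPair hankLink n w →
      ∀ i : Fin (2 * k),
        (((π.1 i.succ : ℕ) : ℤ) - ((π.1 i.castSucc : ℕ) : ℤ)) +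
          (((π.1 (w i).succ : ℕ) : ℤ) - ((π.1 (w i).castSucc : ℕ) : ℤ)) = 0) ∧
    PiStarPair hankLink n w ⊆ PiPrimeT n w ∧
    PiPrimeT n w ∩ PiStarPair hankLink n w = PiStarPair hankLink n w := by
  have main : ∀ π : Circuit (2 * k) n, π ∈ PiStarPair hankLink n w →
      ∀ i : Fin (2 * k),
        (((π.1 i.succ : ℕ) : ℤ) - ((π.1 i.castSucc : ℕ) : ℤ)) +
          (((π.1 (w i).succ : ℕ) : ℤ) - ((π.1 (w i).castSucc : ℕ) : ℤ)) = 0 := by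
    intro π hπ i
    -- ℕ encodings
    set w' : ℕ → ℕ :=
      fun m => if hm : m < 2 * k then ((w ⟨m, hm⟩ : Fin (2 * k)) : ℕ) else m with hw'
    set Q : ℕ → ℕ :=
      fun m => if hm : m < 2 * k + 1 then ((π.1 ⟨m, hm⟩ : Fin n) : ℕ) else 0 with hQ
    have hw'val : ∀ (x : Fin (2 * k)), w' (x : ℕ) = ((w x : Fin (2 * k)) : ℕ) := by
      intro x
      simp only [hw', dif_pos x.isLt]
    have hQcast : ∀ (x : Fin (2 * k)), Q (x : ℕ) = ((π.1 x.castSucc : Fin n) : ℕ) := by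
      intro x
      have hx : (x : ℕ) < 2 * k + 1 := by omega
      simp only [hQ, dif_pos hx]
      congr 1
    have hQsucc : ∀ (x : Fin (2 * k)), Q ((x : ℕ) + 1) = ((π.1 x.succ : Fin n) : ℕ) := by
      intro x
      have hx : (x : ℕ) + 1 < 2 * k + 1 := by omega
      simp only [hQ, dif_pos hx]
      congr 1
    have winv : ∀ m, m < 2 * k → w' (w' m) = m := by
      intro m hm
      have := hw'val ⟨m, hm⟩
      rw [show ((⟨m, hm⟩ : Fin (2 * k)) : ℕ) = m from rfl] at this
      rw [this, hw'val (w ⟨m, hm⟩), hw.1]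
    have wlt : ∀ m, m < 2 * k → w' m < 2 * k := by
      intro m hm
      rw [show m = ((⟨m, hm⟩ : Fin (2 * k)) : ℕ) from rfl, hw'val]
      exact (w ⟨m, hm⟩).isLt
    have wne : ∀ m, m < 2 * k → w' m ≠ m := by
      intro m hm
      rw [show m = ((⟨m, hm⟩ : Fin (2 * k)) : ℕ) from rfl, hw'val]
      intro hEq
      exact hw.2 ⟨m, hm⟩ (Fin.ext hEq)
    have nc : ∀ a b, a < 2 * k → b < 2 * k → ¬(a < b ∧ b < w' a ∧ w' a < w' b) := by
      intro a b ha hb hcon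
      rw [show a = ((⟨a, ha⟩ : Fin (2 * k)) : ℕ) from rfl, hw'val] at hcon
      rw [show b = ((⟨b, hb⟩ : Fin (2 * k)) : ℕ) from rfl, hw'val] at hcon
      refine hcat ⟨a, ha⟩ ⟨b, hb⟩ ?_
      simp only [Fin.lt_def]
      exact hcon
    have hank : ∀ x, x < 2 * k → Q x + Q (x+1) = Q (w' x) + Q (w' x + 1) := by
      intro x hx
      have hm := hπ ⟨x, hx⟩
      simp only [lVal, hankLink] at hm
      rw [show x = ((⟨x, hx⟩ : Fin (2 * k)) : ℕ) from rfl, hw'val]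
      rw [hQcast, hQsucc, hQcast, hQsucc]
      exact hm
    have := mainNat (2 * k) w' Q winv wlt wne nc hank (i : ℕ) i.isLt
    rw [hw'val i, hQcast, hQsucc, hQcast (w i), hQsucc (w i)] at this
    push_cast
    omega
  refine ⟨main, ?_, ?_⟩
  · intro π hπ i
    exact main π hπ i
  · ext π
    simp only [Set.mem_inter_iff, PiPrimeT, Set.mem_setOf_eq]
    exact ⟨fun h => h.2, fun h => ⟨fun i => main π h i, h⟩⟩
end
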